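/- arXiv:2202.11219 — 10 statements merged into one kernel-verified Lean document; each statement's English description precedes it below -/
import Mathlib

section
/- Fix α ∈ (0, 1/2), ζ ≥ 0 and η_t ≥ 0. Let w ∈ Δ^m have strictly positive coordinates, and let g ∈ ℝ^m satisfy −ζ/w_i ≤ g_i ≤ ζ for all i ∈ [m]. Suppose w' ∈ Δ^m has strictly positive coordinates and, for some constant c ∈ ℝ, satisfies (w'_i)^{α−1} = (w_i)^{α−1} + η_t g_i − c for all i. Then for every i: (w_i)^{α−1} − (1/w_i + 1) η_t ζ ≤ (w'_i)^{α−1} ≤ (w_i)^{α−1} + (1/(min_k w_k) + 1) η_t ζ. -/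
open Finset

/-- Lemma (bounds on the OMD update): if `-ζ/w_i ≤ g_i ≤ ζ` and `w'` is obtained
from `w` by the mirror-descent update with regularizer `R(w) = -(1/α) ∑ i, w i ^ α`
and step size `η_t` (componentwise `(w'_i)^{α-1} = (w_i)^{α-1} + η_t g_i - c`),
then `(w_i)^{α-1} - (1/w_i + 1) η_t ζ ≤ (w'_i)^{α-1} ≤ (w_i)^{α-1} + (1/min_k w_k + 1) η_t ζ`. -/
theorem stmt2 {m : ℕ} (hm : 0 < m) (α ζ ηt : ℝ)
    (hα : α ∈ Set.Ioo (0:ℝ) (1/2)) (hζ : 0 ≤ ζ) (hηt : 0 ≤ ηt)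
    (w w' g : Fin m → ℝ)
    (hw : w ∈ stdSimplex ℝ (Fin m)) (hwpos : ∀ i, 0 < w i)
    (hg : ∀ i, -ζ / w i ≤ g i ∧ g i ≤ ζ)
    (hw' : w' ∈ stdSimplex ℝ (Fin m)) (hw'pos : ∀ i, 0 < w' i)
    (c : ℝ) (hupd : ∀ i, (w' i) ^ (α - 1) = (w i) ^ (α - 1) + ηt * g i - c) :
    ∀ i, (w i) ^ (α - 1) - (1 / w i + 1) * ηt * ζ ≤ (w' i) ^ (α - 1) ∧
      (w' i) ^ (α - 1) ≤ (w i) ^ (α - 1)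
        + (1 / (Finset.univ.inf' (Finset.univ_nonempty_iff.mpr (Fin.pos_iff_nonempty.mp hm)) w)
            + 1) * ηt * ζ := by
  have hne : (Finset.univ : Finset (Fin m)).Nonempty :=
    Finset.univ_nonempty_iff.mpr (Fin.pos_iff_nonempty.mp hm)
  set wmin := Finset.univ.inf' hne w with hwmin
  obtain ⟨i0, _, hi0⟩ := Finset.exists_mem_eq_inf' hne w
  have hwminpos : 0 < wmin := by rw [hwmin, hi0]; exact hwpos i0
  have hwminle : ∀ i, wmin ≤ w i := fun i => Finset.inf'_le w (Finset.mem_univ i)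
  have hαneg : α - 1 < 0 := by linarith [hα.2]
  have hsum : ∑ i, w' i = ∑ i, w i := by rw [hw'.2, hw.2]
  obtain ⟨j, hj⟩ : ∃ j, w' j ≤ w j := by
    by_contra h
    push_neg at h
    have : ∑ i, w i < ∑ i, w' i :=
      Finset.sum_lt_sum_of_nonempty hne fun i _ => h i
    linarith
  obtain ⟨k, hk⟩ : ∃ k, w k ≤ w' k := by
    by_contra h
    push_neg at h
    have : ∑ i, w' i < ∑ i, w i :=
      Finset.sum_lt_sum_of_nonempty hne fun i _ => h i
    linarith
  have hc_le : c ≤ ηt * ζ := by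
    have hmono : (w j) ^ (α - 1) ≤ (w' j) ^ (α - 1) :=
      Real.rpow_le_rpow_of_nonpos (hw'pos j) hj hαneg.le
    have := hupd j
    have hgj : ηt * g j ≤ ηt * ζ := mul_le_mul_of_nonneg_left (hg j).2 hηt
    linarith
  have hc_ge : -(ηt * ζ) / wmin ≤ c := by
    have hmono : (w' k) ^ (α - 1) ≤ (w k) ^ (α - 1) :=
      Real.rpow_le_rpow_of_nonpos (hwpos k) hk hαneg.le
    have := hupd k
    have hgk : ηt * (-ζ / w k) ≤ ηt * g k := mul_le_mul_of_nonneg_left (hg k).1 hηt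
    have h1 : ηt * (-ζ / w k) = -(ηt * ζ) / w k := by ring
    have h2 : -(ηt * ζ) / wmin ≤ -(ηt * ζ) / w k := by
      rw [neg_div, neg_div, neg_le_neg_iff]
      exact div_le_div_of_nonneg_left (by positivity) hwminpos (hwminle k)
    linarith
  intro i
  have hwi := hwpos i
  have hupdi := hupd i
  have hglo : -(ηt * ζ) / w i ≤ ηt * g i := by
    have := mul_le_mul_of_nonneg_left (hg i).1 hηt
    have h1 : ηt * (-ζ / w i) = -(ηt * ζ) / w i := by ring
    linarith
  have hghi : ηt * g i ≤ ηt * ζ := mul_le_mul_of_nonneg_left (hg i).2 hηt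
  constructor
  · have : (1 / w i + 1) * ηt * ζ = (ηt * ζ) / w i + ηt * ζ := by
      field_simp
    rw [hupdi, this]
    have : -(ηt * ζ) / w i = -((ηt * ζ) / w i) := by ring
    linarith [hglo, hc_le, this]
  · have heq : (1 / wmin + 1) * ηt * ζ = (ηt * ζ) / wmin + ηt * ζ := by
      field_simp
    rw [hupdi, heq]
    have : -(ηt * ζ) / wmin = -((ηt * ζ) / wmin) := by ring
    linarith [hghi, hc_ge, this]
end

section
/- Fix α ∈ (0, 1/2), ζ ≥ 0 and η_t ≥ 0. Let w ∈ Δ^m have strictly positive coordinates, and let g ∈ ℝ^m satisfy −ζ/w_i ≤ g_i ≤ ζ for all i ∈ [m]. Suppose w' ∈ Δ^m has strictly positive coordinates and, for some constant c ∈ ℝ, satisfies (w'_i)^{α−1} = (w_i)^{α−1} + η_t g_i − c for all i. If additionally η_t ζ ≤ (1−α)² (w_i)^α for all i, then for every i: (w'_i)^{α−1} ≤ (w_i)^{α−1} + (m+1) η_t ζ. -/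
open Finset
open Real Set

set_option maxHeartbeats 1000000 in
/-- Auxiliary concavity lemma: on `[a,1]` with the smallness condition
`s * x ^ (b-1) ≤ b ^ 2`, the function `x ↦ (x^(-b) + M - s*x⁻¹)^(-1/b)` is concave. -/
lemma omd_concave (b s M a : ℝ) (hb0 : 0 < b) (hb1 : b < 1) (hs : 0 ≤ s)
    (hM : 0 ≤ M) (ha : 0 < a)
    (hts : ∀ x : ℝ, a ≤ x → s * x ^ (b - 1) ≤ b ^ 2) :
    ConcaveOn ℝ (Set.Icc a 1)
      (fun x : ℝ => (x ^ (-b) + M - s * x ^ (-1 : ℝ)) ^ (-b⁻¹)) := by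
  set u : ℝ → ℝ := fun x => x ^ (-b) + M - s * x ^ (-1 : ℝ) with hu_def
  set u1 : ℝ → ℝ := fun x => -b * x ^ (-b - 1) - s * (-1 * x ^ ((-1 : ℝ) - 1)) with hu1_def
  set u2 : ℝ → ℝ := fun x =>
    (-b * ((-b - 1) * x ^ (-b - 1 - 1))) -
      s * (-1 * ((-1 - 1) * x ^ ((-1 : ℝ) - 1 - 1))) with hu2_def
  -- positivity of u on [a, ∞)
  have hb2 : b ^ 2 < 1 := by nlinarith
  have hupos : ∀ x : ℝ, a ≤ x → 0 < u x := by
    intro x hx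
    have hx0 : 0 < x := lt_of_lt_of_le ha hx
    have ht := hts x hx
    have hsplit : s * x ^ (-1 : ℝ) = (s * x ^ (b - 1)) * x ^ (-b) := by
      rw [mul_assoc, ← Real.rpow_add hx0, show b - 1 + -b = (-1 : ℝ) by ring]
    have hxb : 0 < x ^ (-b) := Real.rpow_pos_of_pos hx0 _
    have : u x = x ^ (-b) * (1 - s * x ^ (b - 1)) + M := by
      simp only [hu_def, hsplit]; ring
    rw [this]
    have : 0 < x ^ (-b) * (1 - s * x ^ (b - 1)) :=
      mul_pos hxb (by nlinarith)
    linarith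
  -- derivatives
  have hU : ∀ x : ℝ, 0 < x → HasDerivAt u (u1 x) x := by
    intro x hx
    have A : HasDerivAt (fun y : ℝ => y ^ (-b)) (-b * x ^ (-b - 1)) x :=
      Real.hasDerivAt_rpow_const (Or.inl hx.ne')
    have B : HasDerivAt (fun y : ℝ => y ^ ((-1 : ℝ))) ((-1) * x ^ ((-1 : ℝ) - 1)) x :=
      Real.hasDerivAt_rpow_const (Or.inl hx.ne')
    exact (A.add_const M).sub (B.const_mul s)
  have hU1 : ∀ x : ℝ, 0 < x → HasDerivAt u1 (u2 x) x := by
    intro x hx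
    have A : HasDerivAt (fun y : ℝ => y ^ (-b - 1)) ((-b - 1) * x ^ (-b - 1 - 1)) x :=
      Real.hasDerivAt_rpow_const (Or.inl hx.ne')
    have B : HasDerivAt (fun y : ℝ => y ^ ((-1 : ℝ) - 1)) (((-1 : ℝ) - 1) * x ^ ((-1 : ℝ) - 1 - 1)) x :=
      Real.hasDerivAt_rpow_const (Or.inl hx.ne')
    exact (A.const_mul (-b)).sub ((B.const_mul (-1)).const_mul s)
  set h1 : ℝ → ℝ := fun x => -b⁻¹ * (u1 x * u x ^ (-b⁻¹ - 1)) with hh1_def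
  have hH : ∀ x : ℝ, a ≤ x → 0 < x →
      HasDerivAt (fun y : ℝ => u y ^ (-b⁻¹)) (h1 x) x := by
    intro x hax hx
    have hne : u x ≠ 0 := (hupos x hax).ne'
    have := (hU x hx).rpow_const (p := -b⁻¹) (Or.inl hne)
    convert this using 1
    simp only [hh1_def]
    ring
  have hH1 : ∀ x : ℝ, a ≤ x → 0 < x → HasDerivAt h1
      (-b⁻¹ * (u2 x * u x ^ (-b⁻¹ - 1) +
        u1 x * (u1 x * (-b⁻¹ - 1) * u x ^ (-b⁻¹ - 1 - 1)))) x := by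
    intro x hax hx
    have hne : u x ≠ 0 := (hupos x hax).ne'
    have A : HasDerivAt (fun y : ℝ => u y ^ (-b⁻¹ - 1))
        (u1 x * (-b⁻¹ - 1) * u x ^ (-b⁻¹ - 1 - 1)) x :=
      (hU x hx).rpow_const (Or.inl hne)
    exact ((hU1 x hx).mul A).const_mul (-b⁻¹)
  -- the second derivative is nonpositive
  have hkey : ∀ x : ℝ, a ≤ x → 0 < x →
      -b⁻¹ * (u2 x * u x ^ (-b⁻¹ - 1) +
        u1 x * (u1 x * (-b⁻¹ - 1) * u x ^ (-b⁻¹ - 1 - 1))) ≤ 0 := by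
    intro x hax hx
    have hne : (0:ℝ) < u x := hupos x hax
    obtain ⟨t, ht_def⟩ : ∃ t : ℝ, t = s * x ^ (b - 1) := ⟨_, rfl⟩
    have ht0 : 0 ≤ t := ht_def ▸ mul_nonneg hs (Real.rpow_pos_of_pos hx _).le
    have htb : t ≤ b ^ 2 := ht_def ▸ hts x hax
    obtain ⟨Q, hQ_def⟩ : ∃ Q : ℝ, Q = x ^ (-b - 1 - 1) := ⟨_, rfl⟩
    have hQ : 0 < Q := hQ_def ▸ Real.rpow_pos_of_pos hx _
    -- express the pieces in terms of Q, x, t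
    have q1 : Q * x = x ^ (-b - 1) := by
      have h := Real.rpow_add hx (-b - 1 - 1) 1
      rw [Real.rpow_one] at h
      rw [hQ_def, ← h, show (-b - 1 - 1 + 1 : ℝ) = -b - 1 by ring]
    have q2 : Q * x * x = x ^ (-b) := by
      have h := Real.rpow_add hx (-b - 1) 1
      rw [Real.rpow_one] at h
      rw [q1, ← h, show (-b - 1 + 1 : ℝ) = -b by ring]
    have q3 : x ^ (b - 1) * Q = x ^ ((-1 : ℝ) - 1 - 1) := by
      rw [hQ_def, ← Real.rpow_add hx,
        show (b - 1 + (-b - 1 - 1) : ℝ) = (-1 : ℝ) - 1 - 1 by ring]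
    have q4 : x ^ (b - 1) * (Q * x) = x ^ ((-1 : ℝ) - 1) := by
      rw [q1, ← Real.rpow_add hx, show (b - 1 + (-b - 1) : ℝ) = (-1 : ℝ) - 1 by ring]
    have q5 : x ^ (b - 1) * (Q * x * x) = x ^ (-1 : ℝ) := by
      rw [q2, ← Real.rpow_add hx, show (b - 1 + -b : ℝ) = (-1 : ℝ) by ring]
    have hu1x : u1 x = Q * x * (t - b) := by
      simp only [hu1_def]
      rw [← q1, ← q4, ht_def]
      ring
    have hu2x : u2 x = Q * (b ^ 2 + b - 2 * t) := by
      simp only [hu2_def]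
      rw [← hQ_def, ← q3, ht_def]
      ring
    have hux : u x = Q * x * x * (1 - t) + M := by
      simp only [hu_def]
      rw [← q2, ← q5, ht_def]
      ring
    -- the core polynomial inequality
    have hpoly : (1 + b) * (t - b) ^ 2 ≤ b * ((1 - t) * (b ^ 2 + b - 2 * t)) := by
      nlinarith [mul_nonneg (mul_nonneg ht0 (sub_nonneg.2 hb1.le)) (sub_nonneg.2 htb)]
    have h2t : 0 ≤ b ^ 2 + b - 2 * t := by nlinarith
    have hinner : 0 ≤ u2 x * u x + u1 x ^ 2 * (-b⁻¹ - 1) := by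
      have hb' : b * (-b⁻¹ - 1) = -(1 + b) := by field_simp; ring
      have H : 0 ≤ b * (u2 x * u x + u1 x ^ 2 * (-b⁻¹ - 1)) := by
        have e : b * (u2 x * u x + u1 x ^ 2 * (-b⁻¹ - 1)) =
            b * (u2 x * u x) - (1 + b) * u1 x ^ 2 := by
          linear_combination u1 x ^ 2 * hb'
        rw [e, hu1x, hu2x, hux]
        have A1 : (1 + b) * (Q * x * (t - b)) ^ 2
            = Q * Q * (x * x) * ((1 + b) * (t - b) ^ 2) := by ring
        have A2 : b * (Q * (b ^ 2 + b - 2 * t) * (Q * x * x * (1 - t) + M))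
            = Q * Q * (x * x) * (b * ((1 - t) * (b ^ 2 + b - 2 * t)))
              + b * Q * (b ^ 2 + b - 2 * t) * M := by ring
        rw [A1, A2]
        have hQQ : (0 : ℝ) ≤ Q * Q * (x * x) := by positivity
        have B1 := mul_le_mul_of_nonneg_left hpoly hQQ
        have B2 : 0 ≤ b * Q * (b ^ 2 + b - 2 * t) * M :=
          mul_nonneg (mul_nonneg (mul_nonneg hb0.le hQ.le) h2t) hM
        linarith
      exact le_of_mul_le_mul_left (by simpa using H) hb0
    -- put it together
    have hUp : u x ^ (-b⁻¹ - 1) = u x ^ (-b⁻¹ - 1 - 1) * u x := by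
      have h := Real.rpow_add hne (-b⁻¹ - 1 - 1) 1
      rw [Real.rpow_one] at h
      rw [← h, show (-b⁻¹ - 1 - 1 + 1 : ℝ) = -b⁻¹ - 1 by ring]
    have hV : 0 < u x ^ (-b⁻¹ - 1 - 1) := Real.rpow_pos_of_pos hne _
    have e2 : -b⁻¹ * (u2 x * u x ^ (-b⁻¹ - 1) +
        u1 x * (u1 x * (-b⁻¹ - 1) * u x ^ (-b⁻¹ - 1 - 1))) =
        -(b⁻¹ * (u x ^ (-b⁻¹ - 1 - 1) * (u2 x * u x + u1 x ^ 2 * (-b⁻¹ - 1)))) := by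
      rw [hUp]; ring
    rw [e2]
    exact neg_nonpos_of_nonneg (mul_nonneg (inv_nonneg.2 hb0.le)
      (mul_nonneg hV.le hinner))
  -- now apply the second-derivative criterion
  have hIcc : interior (Set.Icc a 1) = Set.Ioo a 1 := interior_Icc
  apply concaveOn_of_deriv2_nonpos (convex_Icc a 1)
  · intro x hx
    have hx0 : 0 < x := lt_of_lt_of_le ha hx.1
    have cu : ContinuousAt u x := by
      have A := Real.continuousAt_rpow_const x (-b) (Or.inl hx0.ne')
      have B := Real.continuousAt_rpow_const x (-1 : ℝ) (Or.inl hx0.ne')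
      exact (A.add continuousAt_const).sub (continuousAt_const.mul B)
    exact (cu.rpow_const (Or.inl (hupos x hx.1).ne')).continuousWithinAt
  · rw [hIcc]
    intro x hx
    exact ((hH x hx.1.le (lt_of_lt_of_le ha hx.1.le)).differentiableAt).differentiableWithinAt
  · rw [hIcc]
    intro x hx
    have hdEq : Set.EqOn (deriv fun y : ℝ => u y ^ (-b⁻¹)) h1 (Set.Ioo a 1) :=
      fun y hy => (hH y hy.1.le (lt_of_lt_of_le ha hy.1.le)).deriv
    have hev : (deriv fun y : ℝ => u y ^ (-b⁻¹)) =ᶠ[nhds x] h1 :=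
      Filter.eventuallyEq_of_mem (isOpen_Ioo.mem_nhds hx) hdEq
    have hdiff : DifferentiableAt ℝ h1 x :=
      (hH1 x hx.1.le (lt_of_lt_of_le ha hx.1.le)).differentiableAt
    exact (hdiff.congr_of_eventuallyEq hev).differentiableWithinAt
  · rw [hIcc]
    intro x hx
    have hdEq : Set.EqOn (deriv fun y : ℝ => u y ^ (-b⁻¹)) h1 (Set.Ioo a 1) :=
      fun y hy => (hH y hy.1.le (lt_of_lt_of_le ha hy.1.le)).deriv
    have hev : (deriv fun y : ℝ => u y ^ (-b⁻¹)) =ᶠ[nhds x] h1 :=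
      Filter.eventuallyEq_of_mem (isOpen_Ioo.mem_nhds hx) hdEq
    have e1 : deriv^[2] (fun y : ℝ => u y ^ (-b⁻¹)) x
        = deriv (deriv fun y : ℝ => u y ^ (-b⁻¹)) x := rfl
    rw [e1, hev.deriv_eq, (hH1 x hx.1.le (lt_of_lt_of_le ha hx.1.le)).deriv]
    exact hkey x hx.1.le (lt_of_lt_of_le ha hx.1.le)
set_option maxHeartbeats 1000000 in
/-- Lemma (refined upper bound on the OMD update): if `-ζ/w_i ≤ g_i ≤ ζ`, `w'` is
obtained from `w` by the mirror-descent update with regularizer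
`R(w) = -(1/α) ∑ i, w i ^ α` and step size `η_t` (componentwise
`(w'_i)^{α-1} = (w_i)^{α-1} + η_t g_i - c`), and additionally
`η_t ζ ≤ (1-α)² (w_i)^α` for all `i`, then
`(w'_i)^{α-1} ≤ (w_i)^{α-1} + (m+1) η_t ζ` for every `i`. -/
theorem stmt3 {m : ℕ} (hm : 0 < m) (α ζ ηt : ℝ)
    (hα : α ∈ Set.Ioo (0:ℝ) (1/2)) (hζ : 0 ≤ ζ) (hηt : 0 ≤ ηt)
    (w w' g : Fin m → ℝ)
    (hw : w ∈ stdSimplex ℝ (Fin m)) (hwpos : ∀ i, 0 < w i)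
    (hg : ∀ i, -ζ / w i ≤ g i ∧ g i ≤ ζ)
    (hw' : w' ∈ stdSimplex ℝ (Fin m)) (hw'pos : ∀ i, 0 < w' i)
    (c : ℝ) (hupd : ∀ i, (w' i) ^ (α - 1) = (w i) ^ (α - 1) + ηt * g i - c)
    (hsmall : ∀ i, ηt * ζ ≤ (1 - α) ^ 2 * (w i) ^ α) :
    ∀ i, (w' i) ^ (α - 1) ≤ (w i) ^ (α - 1) + ((m : ℝ) + 1) * ηt * ζ := by
  obtain ⟨hα0, hα2⟩ := hα
  obtain ⟨b, hb_def⟩ : ∃ b : ℝ, b = 1 - α := ⟨_, rfl⟩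
  obtain ⟨s, hs_def⟩ : ∃ s : ℝ, s = ηt * ζ := ⟨_, rfl⟩
  have hb0 : (0:ℝ) < b := by rw [hb_def]; linarith
  have hb1 : b < 1 := by rw [hb_def]; linarith
  have hs0 : 0 ≤ s := hs_def ▸ mul_nonneg hηt hζ
  have hm0R : (0:ℝ) < (m:ℝ) := by exact_mod_cast hm
  have hab : α - 1 = -b := by rw [hb_def]; ring
  have hsmall' : ∀ i, s ≤ b ^ 2 * (w i) ^ α := by
    intro i; rw [hs_def, hb_def]; exact hsmall i
  -- key claim : c ≥ -(m * s)
  have key : -((m:ℝ) * s) ≤ c := by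
    by_contra hc
    push_neg at hc
    haveI : Nonempty (Fin m) := ⟨⟨0, hm⟩⟩
    have hne : (Finset.univ : Finset (Fin m)).Nonempty := univ_nonempty
    obtain ⟨a, ha_def⟩ : ∃ a : ℝ, a = univ.inf' hne w := ⟨_, rfl⟩
    obtain ⟨i0, -, hi0⟩ := Finset.exists_mem_eq_inf' hne w
    have ha_le : ∀ i, a ≤ w i := fun i => ha_def ▸ Finset.inf'_le w (mem_univ i)
    have haw : a = w i0 := by rw [ha_def, hi0]
    have ha_pos : 0 < a := by rw [haw]; exact hwpos i0
    have hsumw : ∑ i, w i = 1 := hw.2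
    have hsumw' : ∑ i, w' i = 1 := hw'.2
    have hwle1 : ∀ i, w i ≤ 1 := by
      intro i
      calc w i ≤ ∑ j, w j := Finset.single_le_sum (fun j _ => hw.1 j) (mem_univ i)
        _ = 1 := hsumw
    -- smallness condition on [a, ∞)
    have hts : ∀ x : ℝ, a ≤ x → s * x ^ (b - 1) ≤ b ^ 2 := by
      intro x hxa
      have hx0 : 0 < x := lt_of_lt_of_le ha_pos hxa
      have hxα : 0 < x ^ α := Real.rpow_pos_of_pos hx0 α
      have h1 : s ≤ b ^ 2 * x ^ α := by
        calc s ≤ b ^ 2 * (w i0) ^ α := hsmall' i0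
          _ ≤ b ^ 2 * x ^ α := by
              have hw0x : w i0 ≤ x := by rw [← haw]; exact hxa
              have : (w i0) ^ α ≤ x ^ α :=
                Real.rpow_le_rpow (hwpos i0).le hw0x hα0.le
              nlinarith [this, sq_nonneg b]
      calc s * x ^ (b - 1) = s * (x ^ α)⁻¹ := by
            rw [show (b - 1 : ℝ) = -α by rw [hb_def]; ring, Real.rpow_neg hx0.le]
        _ ≤ (b ^ 2 * x ^ α) * (x ^ α)⁻¹ :=
            mul_le_mul_of_nonneg_right h1 (inv_nonneg.2 hxα.le)
        _ = b ^ 2 := by field_simp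
    have hconc := omd_concave b s ((m:ℝ) * s) a hb0 hb1 hs0
      (mul_nonneg hm0R.le hs0) ha_pos hts
    set f : ℝ → ℝ := fun x : ℝ => (x ^ (-b) + (m:ℝ) * s - s * x ^ (-1 : ℝ)) ^ (-b⁻¹)
      with hf_def
    -- pointwise strict bound : w' i < f (w i)
    have hptwise : ∀ i, w' i < f (w i) := by
      intro i
      have hwi0 := hwpos i
      have hw'0 := hw'pos i
      have hsmalli : s * (w i) ^ (b - 1) ≤ b ^ 2 := hts (w i) (ha_le i)
      have hbm1 : (w i) ^ ((-1:ℝ)) = (w i)⁻¹ := Real.rpow_neg_one (w i)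
      have hsplit : s * (w i) ^ ((-1):ℝ) = (s * (w i) ^ (b - 1)) * (w i) ^ (-b) := by
        calc s * (w i) ^ ((-1):ℝ) = s * ((w i) ^ (b - 1) * (w i) ^ (-b)) := by
              rw [← Real.rpow_add hwi0, show (b - 1 + -b : ℝ) = (-1 : ℝ) by ring]
          _ = (s * (w i) ^ (b - 1)) * (w i) ^ (-b) := by ring
      have hwb : 0 < (w i) ^ (-b) := Real.rpow_pos_of_pos hwi0 _
      have hupos : 0 < (w i) ^ (-b) + (m:ℝ) * s - s * (w i) ^ ((-1):ℝ) := by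
        rw [hsplit]
        have hb2 : b ^ 2 < 1 := by nlinarith
        nlinarith [mul_le_mul_of_nonneg_right hsmalli hwb.le,
          mul_pos (show (0:ℝ) < 1 - b ^ 2 by nlinarith) hwb,
          mul_nonneg hm0R.le hs0]
      -- strict inequality on the mirror coordinates
      have hgi : -(s * (w i)⁻¹) ≤ ηt * g i := by
        have h2 := mul_le_mul_of_nonneg_left (hg i).1 hηt
        calc -(s * (w i)⁻¹) = ηt * (-ζ / w i) := by rw [hs_def]; field_simp
          _ ≤ ηt * g i := h2
      have hlt : (w i) ^ (-b) + (m:ℝ) * s - s * (w i) ^ ((-1):ℝ) < (w' i) ^ (-b) := by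
        rw [← hab, hupd i, hab, hbm1]
        linarith [hgi, hc]
      have hid : ((w' i) ^ (-b)) ^ (-b⁻¹) = w' i := by
        rw [← Real.rpow_mul hw'0.le, show (-b * -b⁻¹ : ℝ) = 1 by
          field_simp, Real.rpow_one]
      calc w' i = ((w' i) ^ (-b)) ^ (-b⁻¹) := hid.symm
        _ < ((w i) ^ (-b) + (m:ℝ) * s - s * (w i) ^ ((-1):ℝ)) ^ (-b⁻¹) :=
            Real.rpow_lt_rpow_of_neg hupos hlt (by
              simp only [neg_neg, Left.neg_neg_iff]
              exact inv_pos.2 hb0)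
        _ = f (w i) := rfl
    -- Jensen's inequality
    have hmem : ∀ i ∈ (univ : Finset (Fin m)), w i ∈ Set.Icc a 1 :=
      fun i _ => ⟨ha_le i, hwle1 i⟩
    have hwt : ∑ _i : Fin m, (m:ℝ)⁻¹ = 1 := by
      rw [Finset.sum_const, card_univ, Fintype.card_fin, nsmul_eq_mul]
      field_simp
    have hjensen := hconc.le_map_sum (fun i _ => by positivity) hwt hmem
    have hcen : ∑ i, (m:ℝ)⁻¹ • w i = (m:ℝ)⁻¹ := by
      simp only [smul_eq_mul, ← Finset.mul_sum, hsumw, mul_one]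
    have hfm : f ((m:ℝ)⁻¹) = (m:ℝ)⁻¹ := by
      have h1 : ((m:ℝ)⁻¹) ^ (-b) = (m:ℝ) ^ b := by
        rw [Real.inv_rpow hm0R.le, Real.rpow_neg hm0R.le, inv_inv]
      have h2 : ((m:ℝ)⁻¹) ^ ((-1):ℝ) = (m:ℝ) := by
        rw [Real.rpow_neg_one, inv_inv]
      have h3 : ((m:ℝ)⁻¹ ^ (-b) + (m:ℝ) * s - s * (m:ℝ)⁻¹ ^ ((-1):ℝ)) = (m:ℝ) ^ b := by
        rw [h1, h2]; ring
      show ((m:ℝ)⁻¹ ^ (-b) + (m:ℝ) * s - s * (m:ℝ)⁻¹ ^ ((-1):ℝ)) ^ (-b⁻¹) = (m:ℝ)⁻¹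
      rw [h3, ← Real.rpow_mul hm0R.le, show (b * -b⁻¹ : ℝ) = -1 by field_simp,
        Real.rpow_neg_one]
    have hub : ∑ i, f (w i) ≤ 1 := by
      rw [hcen, hfm] at hjensen
      have h4 : (m:ℝ)⁻¹ * ∑ i, f (w i) ≤ (m:ℝ)⁻¹ * 1 := by
        simpa [smul_eq_mul, Finset.mul_sum, mul_one] using hjensen
      exact le_of_mul_le_mul_left h4 (inv_pos.2 hm0R)
    have hlt1 : (1:ℝ) < ∑ i, f (w i) := by
      rw [← hsumw']
      exact Finset.sum_lt_sum_of_nonempty hne (fun i _ => hptwise i)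
    linarith
  -- conclude
  intro i
  have h1 : ηt * g i ≤ s := by
    calc ηt * g i ≤ ηt * ζ := mul_le_mul_of_nonneg_left (hg i).2 hηt
      _ = s := hs_def.symm
  calc (w' i) ^ (α - 1) = (w i) ^ (α - 1) + ηt * g i - c := hupd i
    _ ≤ (w i) ^ (α - 1) + s + (m:ℝ) * s := by linarith
    _ = (w i) ^ (α - 1) + ((m : ℝ) + 1) * ηt * ζ := by rw [hs_def]; ring
end

section
/- Fix α ∈ (0, 1/2) and positive integers m, n. There exists T₀ (depending on m, n, α) such that for all integers T ≥ T₀ the following holds. Set γ = 12 n ln T and η = 1/(12 m^{(1+α)/2} n √T ln T). Let w^1 = (1/m, …, 1/m), and suppose for each t ∈ [T]: g^t ∈ ℝ^m satisfies −γ/w^t_i ≤ g^t_i ≤ γ for all i (the small gradient assumption), and w^{t+1} ∈ Δ^m has strictly positive coordinates and satisfies, for some constant c_t ∈ ℝ, (w^{t+1}_i)^{α−1} = (w^t_i)^{α−1} + η g^t_i − c_t for all i. Then for all i ∈ [m] and t ∈ [T]: (w^t_i)^α ≥ 4ηγ and w^t_i ≥ (1/(10√m)) · T^{1/(2(α−1))}.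 -/
open Finset

lemma aux_bern {α w w' : ℝ} (hα1 : α < 1) (hw : 0 < w) (hw' : 0 < w') :
    (w' ^ (α-1) - w ^ (α-1)) * w' ^ (2-α) ≤ (1-α) * (w - w') := by
  have hs : (-1:ℝ) ≤ w'/w - 1 := by
    have : 0 < w'/w := div_pos hw' hw
    linarith
  have hp : (1:ℝ) ≤ 2-α := by linarith
  have hb := one_add_mul_self_le_rpow_one_add hs hp
  have hrw : (1:ℝ) + (w'/w - 1) = w'/w := by ring
  rw [hrw] at hb
  have hdiv : (w'/w) ^ (2-α) = w' ^ (2-α) / w ^ (2-α) := Real.div_rpow hw'.le hw.le _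
  rw [hdiv] at hb
  have hb2 : w * (1 + (2-α) * (w'/w - 1)) ≤ w * (w' ^ (2-α) / w ^ (2-α)) :=
    mul_le_mul_of_nonneg_left hb hw.le
  have hl : w * (1 + (2-α) * (w'/w - 1)) = w + (2-α)*(w' - w) := by
    field_simp
  have hr : w * (w' ^ (2-α) / w ^ (2-α)) = w ^ (α-1) * w' ^ (2-α) := by
    have h1 : w ^ (α-1) = w / w ^ (2-α) := by
      rw [show α - 1 = 1 - (2-α) by ring, Real.rpow_sub hw, Real.rpow_one]
    rw [h1]
    ring
  rw [hl, hr] at hb2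
  have hww : w' ^ (α-1) * w' ^ (2-α) = w' := by
    rw [← Real.rpow_add hw', show α - 1 + (2-α) = 1 by ring, Real.rpow_one]
  have expand : (w' ^ (α-1) - w ^ (α-1)) * w' ^ (2-α)
      = w' - w ^ (α-1) * w' ^ (2-α) := by
    rw [sub_mul, hww]
  rw [expand]
  linarith

lemma aux_sum_ge {m : ℕ} (hm : 0 < m) (p : ℝ) (hp : 1 ≤ p) (v : Fin m → ℝ)
    (hv : ∀ i, 0 ≤ v i) (hs : ∑ i, v i = 1) : ((m:ℝ)) ^ (1-p) ≤ ∑ i, v i ^ p := by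
  have hm0 : (0:ℝ) < m := Nat.cast_pos.2 hm
  have hwsum : ∑ _i : Fin m, (m:ℝ)⁻¹ = 1 := by
    simp [Finset.sum_const, Finset.card_univ]
    field_simp
  have h := Real.rpow_arith_mean_le_arith_mean_rpow Finset.univ (fun _ => (m:ℝ)⁻¹) v
    (fun i _ => by positivity) hwsum (fun i _ => hv i) hp
  have h1 : ∑ i, (m:ℝ)⁻¹ * v i = (m:ℝ)⁻¹ := by
    rw [← Finset.mul_sum, hs, mul_one]
  rw [h1] at h
  have h2 : ((m:ℝ)⁻¹) ^ p = (m:ℝ)^(1-p) * (m:ℝ)⁻¹ := by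
    rw [Real.inv_rpow hm0.le, ← Real.rpow_neg hm0.le, show -p = (1-p) + (-1) by ring,
      Real.rpow_add hm0, Real.rpow_neg_one]
  have h3 : ∑ i, (m:ℝ)⁻¹ * v i ^ p = (∑ i, v i ^ p) * (m:ℝ)⁻¹ := by
    rw [← Finset.mul_sum]; ring
  rw [h2, h3] at h
  exact le_of_mul_le_mul_right h (inv_pos.2 hm0)

lemma aux_sum_le {m : ℕ} (hm : 0 < m) (q : ℝ) (hq0 : 0 < q) (hq1 : q ≤ 1) (v : Fin m → ℝ)
    (hv : ∀ i, 0 ≤ v i) (hs : ∑ i, v i = 1) : ∑ i, v i ^ q ≤ (m:ℝ) ^ (1-q) := by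
  have hm0 : (0:ℝ) < m := Nat.cast_pos.2 hm
  have hwsum : ∑ _i : Fin m, (m:ℝ)⁻¹ = 1 := by
    simp [Finset.sum_const, Finset.card_univ]
    field_simp
  have hp : 1 ≤ 1/q := by
    rw [le_div_iff₀ hq0]; linarith
  have h := Real.arith_mean_le_rpow_mean Finset.univ (fun _ => (m:ℝ)⁻¹) (fun i => v i ^ q)
    (fun i _ => by positivity) hwsum (fun i _ => Real.rpow_nonneg (hv i) q) hp
  have h2 : ∑ i, (m:ℝ)⁻¹ * (v i ^ q) ^ ((1:ℝ)/q) = (m:ℝ)⁻¹ := by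
    calc ∑ i, (m:ℝ)⁻¹ * (v i ^ q) ^ ((1:ℝ)/q) = ∑ i, (m:ℝ)⁻¹ * v i := by
          refine Finset.sum_congr rfl fun i _ => ?_
          rw [← Real.rpow_mul (hv i), mul_one_div_cancel hq0.ne', Real.rpow_one]
      _ = (m:ℝ)⁻¹ := by rw [← Finset.mul_sum, hs, mul_one]
  rw [h2] at h
  have h3 : ((m:ℝ)⁻¹) ^ ((1:ℝ)/(1/q)) = (m:ℝ)^(1-q) * (m:ℝ)⁻¹ := by
    rw [one_div_one_div, Real.inv_rpow hm0.le, ← Real.rpow_neg hm0.le,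
      show -q = (1-q) + (-1) by ring, Real.rpow_add hm0, Real.rpow_neg_one]
  rw [h3] at h
  have h4 : ∑ i, (m:ℝ)⁻¹ * v i ^ q = (∑ i, v i ^ q) * (m:ℝ)⁻¹ := by
    rw [← Finset.mul_sum]; ring
  rw [h4] at h
  exact le_of_mul_le_mul_right h (inv_pos.2 hm0)

set_option maxHeartbeats 2000000 in
/-- Corollary (#1): under the small gradient assumption, for `T` sufficiently large,
the OMD iterates with regularizer `R(w) = -(1/α) ∑ i, w i ^ α`, `γ = 12 n ln T` and
`η = 1/(12 m^{(1+α)/2} n √T ln T)` satisfy `(w^t_i)^α ≥ 4ηγ` and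
`w^t_i ≥ (1/(10√m)) T^{1/(2(α-1))}` for all `i`, `t`.
(Time is 0-indexed: `w 0` is the uniform initial weight vector.) -/
theorem stmt4 {m n : ℕ} (hm : 0 < m) (hn : 0 < n) (α : ℝ)
    (hα : α ∈ Set.Ioo (0:ℝ) (1/2)) :
    ∃ T₀ : ℕ, ∀ T : ℕ, T₀ ≤ T →
      ∀ γ η : ℝ,
        γ = 12 * n * Real.log T →
        η = 1 / (12 * (m : ℝ) ^ ((1 + α) / 2) * n * Real.sqrt T * Real.log T) →
        ∀ w g : ℕ → Fin m → ℝ,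
          w 0 = (fun _ => (m : ℝ)⁻¹) →
          (∀ t < T, ∀ i, -γ / w t i ≤ g t i ∧ g t i ≤ γ) →
          (∀ t < T, w (t+1) ∈ stdSimplex ℝ (Fin m) ∧ (∀ i, 0 < w (t+1) i) ∧
            ∃ c : ℝ, ∀ i, (w (t+1) i) ^ (α - 1) = (w t i) ^ (α - 1) + η * g t i - c) →
          ∀ t < T, ∀ i, 4 * η * γ ≤ (w t i) ^ α ∧
            (1 / (10 * Real.sqrt m)) * (T : ℝ) ^ (1 / (2 * (α - 1))) ≤ w t i := by
  obtain ⟨hα0, hα2⟩ := hα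
  have hα1 : α < 1 := by linarith
  have hαne : α - 1 ≠ 0 := by intro h; nlinarith [h]
  have hm0 : (0:ℝ) < m := Nat.cast_pos.2 hm
  have hmR : (1:ℝ) ≤ m := Nat.one_le_cast.2 hm
  have hn0 : (0:ℝ) < n := Nat.cast_pos.2 hn
  -- the exponent controlling the smallness condition
  set E : ℝ := 1/2 + (1/(2*(α-1)))*α with hE_def
  clear_value E
  have hE_eq : E = (1-2*α)/(2*(1-α)) := by
    rw [hE_def]
    field_simp [sub_ne_zero.mpr hα1.ne, sub_ne_zero.mpr hα1.ne']
    ring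
  have hE0 : 0 < E := by
    rw [hE_eq]; apply div_pos <;> linarith
  -- choose T₀
  have hev : ∀ᶠ T : ℕ in Filter.atTop,
      ((1000:ℝ) ≤ (T:ℝ)^E ∧ 10000 ≤ T ∧ 100*m ≤ T ∧ 2 ≤ T) := by
    have h1 : Filter.Tendsto (fun T : ℕ => ((T:ℝ))^E) Filter.atTop Filter.atTop :=
      (tendsto_rpow_atTop hE0).comp tendsto_natCast_atTop_atTop
    exact (h1.eventually_ge_atTop 1000).and ((Filter.eventually_ge_atTop 10000).and
      ((Filter.eventually_ge_atTop (100*m)).and (Filter.eventually_ge_atTop 2)))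
  obtain ⟨T₀, hT₀⟩ := Filter.eventually_atTop.1 hev
  refine ⟨T₀, fun T hT => ?_⟩
  obtain ⟨hTE, hT4, hTm, hT2⟩ := hT₀ T hT
  intro γ η hγ hη w g hw1 hw2 hw3
  -- basic quantities
  set R : ℝ := (T:ℝ) with hR_def
  clear_value R
  have hR1 : (1:ℝ) < R := by
    rw [hR_def]; exact_mod_cast lt_of_lt_of_le one_lt_two hT2
  have hR0 : (0:ℝ) < R := by linarith
  have hL : 0 < Real.log R := Real.log_pos hR1
  have hsR : 0 < Real.sqrt R := Real.sqrt_pos.2 hR0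
  set M : ℝ := (m:ℝ) ^ ((1+α)/2) with hM_def
  clear_value M
  have hM0 : 0 < M := by rw [hM_def]; exact Real.rpow_pos_of_pos hm0 _
  have hM1 : 1 ≤ M := by
    rw [hM_def]
    calc (1:ℝ) = (m:ℝ)^(0:ℝ) := by rw [Real.rpow_zero]
    _ ≤ (m:ℝ)^((1+α)/2) := Real.rpow_le_rpow_of_exponent_le hmR (by linarith)
  have hη0 : 0 < η := by
    rw [hη]
    apply div_pos one_pos
    apply mul_pos (mul_pos (mul_pos (by linarith : (0:ℝ) < 12*M) hn0) hsR) hL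
  have hγ0 : 0 < γ := by
    rw [hγ]
    exact mul_pos (mul_pos (by norm_num) hn0) hL
  set e : ℝ := η * γ with he_def
  clear_value e
  have he_e : e = (M * Real.sqrt R)⁻¹ := by
    rw [he_def, hη, hγ]
    field_simp
  have he0 : 0 < e := by rw [he_def]; exact mul_pos hη0 hγ0
  have hsR100 : (100:ℝ) ≤ Real.sqrt R := by
    rw [show (100:ℝ) = Real.sqrt 10000 by
      rw [show (10000:ℝ) = 100^2 by norm_num, Real.sqrt_sq (by norm_num)]]
    apply Real.sqrt_le_sqrt
    rw [hR_def]; exact_mod_cast hT4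
  have hMS100 : (100:ℝ) ≤ M * Real.sqrt R := by
    calc (100:ℝ) ≤ Real.sqrt R := hsR100
    _ = 1 * Real.sqrt R := by ring
    _ ≤ M * Real.sqrt R := mul_le_mul_of_nonneg_right hM1 hsR.le
  have he_small : e ≤ 1/100 := by
    rw [he_e]
    calc (M * Real.sqrt R)⁻¹ ≤ (100:ℝ)⁻¹ := inv_anti₀ (by norm_num) hMS100
    _ ≤ 1/100 := by norm_num
  -- B and D
  set B : ℝ := 1 / (10 * Real.sqrt m) * R ^ (1/(2*(α-1))) with hB_def
  clear_value B
  have hsm : 0 < Real.sqrt m := Real.sqrt_pos.2 hm0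
  have hB0 : 0 < B := by
    rw [hB_def]
    apply mul_pos
    · positivity
    · exact Real.rpow_pos_of_pos hR0 _
  set D : ℝ := B ^ (α-1) with hD_def
  clear_value D
  have hzneg : α - 1 < 0 := by linarith
  set X : ℝ := (m:ℝ) ^ ((1-α)/2) with hX_def
  clear_value X
  have hX0 : 0 < X := by rw [hX_def]; exact Real.rpow_pos_of_pos hm0 _
  have hXM : X * M = m := by
    rw [hX_def, hM_def, ← Real.rpow_add hm0, show (1-α)/2 + (1+α)/2 = 1 by ring, Real.rpow_one]
  have hXsm : X ≤ Real.sqrt m := by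
    rw [hX_def, Real.sqrt_eq_rpow]
    exact Real.rpow_le_rpow_of_exponent_le hmR (by linarith)
  have hsm10 : 10 * Real.sqrt m ≤ Real.sqrt R := by
    have h1 : ((100*m:ℕ):ℝ) ≤ R := by rw [hR_def]; exact_mod_cast hTm
    have h2 : (10:ℝ) * Real.sqrt m = Real.sqrt ((100*m:ℕ):ℝ) := by
      push_cast
      rw [show (100:ℝ) * (m:ℝ) = 10^2 * m by norm_num, Real.sqrt_mul (by positivity),
        Real.sqrt_sq (by norm_num)]
    rw [h2]
    exact Real.sqrt_le_sqrt h1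
  have hXR : 10 * X ≤ Real.sqrt R := by
    calc 10 * X ≤ 10 * Real.sqrt m := by linarith
    _ ≤ Real.sqrt R := hsm10
  have hD_eq : D = 10^(1-α) * X * Real.sqrt R := by
    rw [hD_def, hB_def, show (1:ℝ) / (10*Real.sqrt m) = (10*Real.sqrt m)⁻¹ by rw [one_div]]
    rw [Real.mul_rpow (by positivity) (Real.rpow_nonneg hR0.le _)]
    rw [Real.inv_rpow (by positivity), ← Real.rpow_neg (by positivity), neg_sub]
    rw [← Real.rpow_mul hR0.le, show 1/(2*(α-1)) * (α-1) = 1/2 by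
      field_simp]
    rw [← Real.sqrt_eq_rpow]
    rw [Real.mul_rpow (by norm_num) hsm.le]
    rw [Real.sqrt_eq_rpow (m:ℝ), ← Real.rpow_mul hm0.le,
      show (1:ℝ)/2 * (1-α) = (1-α)/2 by ring, ← hX_def]
  have h100e : 100 * e ≤ B ^ α := by
    have hP0 : 0 < (10*Real.sqrt m)^α := Real.rpow_pos_of_pos (by positivity) _
    have hPle : (10*Real.sqrt m)^α ≤ 10 * M := by
      rw [Real.mul_rpow (by norm_num) hsm.le]
      have h1 : (10:ℝ)^α ≤ 10 := by
        calc (10:ℝ)^α ≤ (10:ℝ)^(1:ℝ) := Real.rpow_le_rpow_of_exponent_le (by norm_num) hα1.le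
        _ = 10 := Real.rpow_one 10
      have h2 : (Real.sqrt m)^α ≤ M := by
        rw [Real.sqrt_eq_rpow (m:ℝ), ← Real.rpow_mul hm0.le, hM_def]
        exact Real.rpow_le_rpow_of_exponent_le hmR (by linarith)
      have h3 : 0 ≤ (Real.sqrt m)^α := Real.rpow_nonneg hsm.le _
      calc (10:ℝ)^α * (Real.sqrt m)^α ≤ 10 * (Real.sqrt m)^α :=
            mul_le_mul_of_nonneg_right h1 h3
      _ ≤ 10 * M := by
          have := mul_le_mul_of_nonneg_left h2 (by norm_num : (0:ℝ) ≤ 10)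
          linarith
    have hBαeq : B ^ α = ((10*Real.sqrt m)^α)⁻¹ * R ^ ((1/(2*(α-1)))*α) := by
      rw [hB_def, show (1:ℝ)/(10*Real.sqrt m) = (10*Real.sqrt m)⁻¹ by rw [one_div]]
      rw [Real.mul_rpow (by positivity) (Real.rpow_nonneg hR0.le _)]
      rw [Real.inv_rpow (by positivity), ← Real.rpow_mul hR0.le]
    have hfrac : 1/10 ≤ M * ((10*Real.sqrt m)^α)⁻¹ := by
      rw [← div_eq_mul_inv, le_div_iff₀ hP0]
      linarith
    have hRE : R ^ ((1/(2*(α-1)))*α) * Real.sqrt R = R ^ E := by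
      rw [Real.sqrt_eq_rpow, ← Real.rpow_add hR0, hE_def]
      ring_nf
    have key : (100:ℝ) ≤ B ^ α * (M * Real.sqrt R) := by
      have h5 : (1/10) * R^E ≤ (M * ((10*Real.sqrt m)^α)⁻¹) * R^E :=
        mul_le_mul_of_nonneg_right hfrac (Real.rpow_nonneg hR0.le _)
      have h6 : (100:ℝ) ≤ (1/10) * R^E := by linarith [hTE]
      calc (100:ℝ) ≤ (1/10) * R^E := h6
      _ ≤ (M * ((10*Real.sqrt m)^α)⁻¹) * R^E := h5
      _ = B ^ α * (M * Real.sqrt R) := by rw [hBαeq, ← hRE]; ring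
    rw [he_e, show (100:ℝ) * (M*Real.sqrt R)⁻¹ = 100 / (M*Real.sqrt R) by rw [div_eq_mul_inv]]
    rw [div_le_iff₀ (by positivity)]
    linarith
  have hDlow : (m:ℝ)^(1-α) + R*(3*(m:ℝ)*e) ≤ D := by
    have hRs : Real.sqrt R * Real.sqrt R = R := Real.mul_self_sqrt hR0.le
    have hTe : R * (3*(m:ℝ)*e) = 3*X*Real.sqrt R := by
      rw [he_e]
      have hRs2 : Real.sqrt R ^ 2 = R := Real.sq_sqrt hR0.le
      field_simp
      linear_combination (-(Real.sqrt R)^2) * hXM + (-(m:ℝ)) * hRs2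
    have hm1a : (m:ℝ)^(1-α) = X*X := by
      rw [hX_def, ← Real.rpow_add hm0]
      ring_nf
    have h10 : (3.1:ℝ) ≤ 10^(1-α) := by
      calc (3.1:ℝ) ≤ Real.sqrt 10 :=
            (Real.le_sqrt (by norm_num) (by norm_num)).2 (by norm_num)
      _ = (10:ℝ)^((1:ℝ)/2) := Real.sqrt_eq_rpow 10
      _ ≤ 10^(1-α) := Real.rpow_le_rpow_of_exponent_le (by norm_num) (by linarith)
    have hA : X*X ≤ X*Real.sqrt R*(1/10) := by
      calc X*X = (X*(10*X))*(1/10) := by ring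
      _ ≤ (X*Real.sqrt R)*(1/10) :=
          mul_le_mul_of_nonneg_right (mul_le_mul_of_nonneg_left hXR hX0.le) (by norm_num)
    have hBB : 3.1*(X*Real.sqrt R) ≤ 10^(1-α)*(X*Real.sqrt R) :=
      mul_le_mul_of_nonneg_right h10 (mul_nonneg hX0.le hsR.le)
    rw [hD_eq, hTe, hm1a]
    linarith [hA, hBB]
  -- nonnegativity of the drift constant
  have h3me : (0:ℝ) ≤ 3*(m:ℝ)*e := mul_nonneg (mul_nonneg (by norm_num) hm0.le) he0.le
  -- basic facts about the iterates
  have basic : ∀ t, t < T → (∀ i, 0 < w t i) ∧ (∑ i, w t i = 1) := by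
    intro t ht
    cases t with
    | zero =>
      constructor
      · intro i
        rw [congrFun hw1 i]
        exact inv_pos.2 hm0
      · rw [hw1]
        simp [Finset.sum_const, Finset.card_univ]
        field_simp
    | succ s =>
      have hs : s < T := Nat.lt_of_succ_lt ht
      exact ⟨(hw3 s hs).2.1, (hw3 s hs).1.2⟩
  -- main induction
  have hmain : ∀ t, t < T → ∀ i, (w t i)^(α-1) ≤ (m:ℝ)^(1-α) + t*(3*(m:ℝ)*e) := by
    intro t
    induction t with
    | zero =>
      intro _ i
      have h0 : w 0 i = (m:ℝ)⁻¹ := congrFun hw1 i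
      rw [h0, Real.inv_rpow hm0.le, ← Real.rpow_neg hm0.le, neg_sub]
      simp
    | succ t ih =>
      intro ht i
      have htT : t < T := Nat.lt_of_succ_lt ht
      have ihb := ih htT
      obtain ⟨hpos, hsum⟩ := basic t htT
      have hw'pos : ∀ j, 0 < w (t+1) j := (hw3 t htT).2.1
      have hsum' : ∑ j, w (t+1) j = 1 := (hw3 t htT).1.2
      have hw'nn : ∀ j, 0 ≤ w (t+1) j := fun j => (hw'pos j).le
      have hwle1 : ∀ j, w t j ≤ 1 := by
        intro j
        calc w t j ≤ ∑ k, w t k :=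
              Finset.single_le_sum (fun k _ => (hpos k).le) (Finset.mem_univ j)
        _ = 1 := hsum
      have hUD : ∀ j, (w t j)^(α-1) ≤ D := by
        intro j
        have h1 : (t:ℝ)*(3*(m:ℝ)*e) ≤ R*(3*(m:ℝ)*e) := by
          apply mul_le_mul_of_nonneg_right _ h3me
          rw [hR_def]; exact_mod_cast htT.le
        calc (w t j)^(α-1) ≤ (m:ℝ)^(1-α) + t*(3*(m:ℝ)*e) := ihb j
        _ ≤ (m:ℝ)^(1-α) + R*(3*(m:ℝ)*e) := by linarith only [h1]
        _ ≤ D := hDlow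
      have hwB : ∀ j, B ≤ w t j := by
        intro j
        have h2 := hUD j
        rw [hD_def] at h2
        exact (Real.rpow_le_rpow_iff_of_neg (hpos j) hB0 hzneg).1 h2
      have hew : ∀ j, 100 * e ≤ (w t j)^α := by
        intro j
        calc 100*e ≤ B^α := h100e
        _ ≤ (w t j)^α := Real.rpow_le_rpow hB0.le (hwB j) hα0.le
      have hu1 : ∀ j, 1 ≤ (w t j)^(α-1) := fun j =>
        Real.one_le_rpow_of_pos_of_le_one_of_nonpos (hpos j) (hwle1 j) hzneg.le
      obtain ⟨c, hc⟩ := (hw3 t htT).2.2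
      -- upper bound on c
      have hc_le : c ≤ e := by
        haveI : Nonempty (Fin m) := Fin.pos_iff_nonempty.1 hm
        obtain ⟨i₀, -, hi₀⟩ := Finset.exists_le_of_sum_le Finset.univ_nonempty
          (le_of_eq (hsum'.trans hsum.symm))
        have h1 : (w t i₀)^(α-1) ≤ (w (t+1) i₀)^(α-1) :=
          Real.rpow_le_rpow_of_nonpos (hw'pos i₀) hi₀ hzneg.le
        have h2 := hc i₀
        have h3 : η * g t i₀ ≤ e := by
          rw [he_def]
          exact mul_le_mul_of_nonneg_left (hw2 t htT i₀).2 hη0.le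
        linarith only [h1, h2, h3]
      -- lower bound on η * g
      have hgl : ∀ j, -((w t j)^(α-1)/100) ≤ η * g t j := by
        intro j
        have h4 := (hw2 t htT j).1
        have h5 : η * (-γ / w t j) ≤ η * g t j := mul_le_mul_of_nonneg_left h4 hη0.le
        have h6 : η * (-γ / w t j) = -(e / w t j) := by rw [he_def]; ring
        have h5' : -(e / w t j) ≤ η * g t j := by rw [← h6]; exact h5
        have h8 : (w t j)^(α-1) = (w t j)^α / w t j := by
          rw [Real.rpow_sub (hpos j), Real.rpow_one]
        have h7 : e / w t j ≤ (w t j)^(α-1)/100 := by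
          rw [h8]
          have h9 : (w t j)^α / w t j / 100 = ((w t j)^α/100) / w t j := by ring
          rw [h9]
          exact (div_le_div_iff_of_pos_right (hpos j)).2 (by linarith only [hew j, he0.le])
        linarith only [h5', h7]
      -- u' ≥ 0.98 u
      have hust : ∀ j, 0.98 * (w t j)^(α-1) ≤ (w (t+1) j)^(α-1) := by
        intro j
        have h1 := hc j
        have h2 := hgl j
        have h3 := hu1 j
        have h4 : c ≤ (w t j)^(α-1)/100 := by
          calc c ≤ e := hc_le
          _ ≤ 1/100 := he_small
          _ ≤ (w t j)^(α-1)/100 := by linarith only [h3]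
        rw [h1]
        linarith only [h2, h4]
      -- multiplicative stability
      have hstab : ∀ j, w (t+1) j ≤ 1.05 * w t j := by
        intro j
        by_contra hcon
        push_neg at hcon
        have hwpos105 : (0:ℝ) < 1.05 * w t j := by
          have hj := hpos j; linarith only [hj]
        have h9 : (w (t+1) j)^(α-1) < (1.05 * w t j)^(α-1) :=
          Real.rpow_lt_rpow_of_neg hwpos105 hcon hzneg
        have h10' : (1.05 * w t j)^(α-1) = 1.05^(α-1) * (w t j)^(α-1) :=
          Real.mul_rpow (by norm_num) (hpos j).le
        have h11 : (1.05:ℝ)^(α-1) ≤ 0.98 := by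
          have ha : (1.05:ℝ)^(α-1) = ((1.05:ℝ)^(1-α))⁻¹ := by
            rw [← Real.rpow_neg (by norm_num), neg_sub]
          have hb2 : (1.05:ℝ)^((1:ℝ)/2) ≤ (1.05:ℝ)^(1-α) :=
            Real.rpow_le_rpow_of_exponent_le (by norm_num) (by linarith)
          have hc2 : (1.021:ℝ) ≤ (1.05:ℝ)^((1:ℝ)/2) := by
            rw [← Real.sqrt_eq_rpow]
            exact (Real.le_sqrt (by norm_num) (by norm_num)).2 (by norm_num)
          rw [ha]
          calc ((1.05:ℝ)^(1-α))⁻¹ ≤ (1.021:ℝ)⁻¹ := inv_anti₀ (by norm_num) (by linarith)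
          _ ≤ 0.98 := by norm_num
        have h12 := hust j
        have h13 : (0:ℝ) < (w t j)^(α-1) := Real.rpow_pos_of_pos (hpos j) _
        have h14 := mul_le_mul_of_nonneg_right h11 h13.le
        rw [h10'] at h9
        linarith only [h9, h12, h14]
      -- lower bound on c
      have hclb : -c ≤ 1.11 * m * e := by
        rcases le_or_gt 0 c with hc0 | hc0
        · have h0' : (0:ℝ) ≤ 1.11*(m:ℝ)*e := mul_nonneg (mul_nonneg (by norm_num) hm0.le) he0.le
          linarith only [h0', hc0]
        · have hsum_ineq : ∑ j, (η * g t j - c) * (w (t+1) j)^(2-α) ≤ 0 := by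
            calc ∑ j, (η * g t j - c) * (w (t+1) j)^(2-α)
                = ∑ j, ((w (t+1) j)^(α-1) - (w t j)^(α-1)) * (w (t+1) j)^(2-α) := by
                  refine Finset.sum_congr rfl fun j _ => ?_
                  rw [hc j]; ring
            _ ≤ ∑ j, (1-α) * (w t j - w (t+1) j) :=
                  Finset.sum_le_sum fun j _ => aux_bern hα1 (hpos j) (hw'pos j)
            _ = (1-α) * ((∑ j, w t j) - ∑ j, w (t+1) j) := by
                  rw [← Finset.mul_sum, Finset.sum_sub_distrib]
            _ = 0 := by rw [hsum, hsum']; ring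
          have hterm : ∀ j, (-(η * g t j)) * (w (t+1) j)^(2-α) ≤ 1.11 * e * (w t j)^(1-α) := by
            intro j
            have h4 := (hw2 t htT j).1
            have h5 : η * (-γ / w t j) ≤ η * g t j := mul_le_mul_of_nonneg_left h4 hη0.le
            have h6 : η * (-γ / w t j) = -(e / w t j) := by rw [he_def]; ring
            have h12 : -(η * g t j) ≤ e / w t j := by
              have h5' : -(e / w t j) ≤ η * g t j := by rw [← h6]; exact h5
              linarith only [h5']
            have h13 : (w (t+1) j)^(2-α) ≤ 1.1025 * (w t j)^(2-α) := by
              calc (w (t+1) j)^(2-α) ≤ (1.05 * w t j)^(2-α) :=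
                    Real.rpow_le_rpow (hw'pos j).le (hstab j) (by linarith)
              _ = 1.05^(2-α) * (w t j)^(2-α) := Real.mul_rpow (by norm_num) (hpos j).le
              _ ≤ 1.1025 * (w t j)^(2-α) := by
                  have ha : (1.05:ℝ)^(2-α) ≤ (1.05:ℝ)^(2:ℝ) :=
                    Real.rpow_le_rpow_of_exponent_le (by norm_num) (by linarith)
                  have hb2 : (1.05:ℝ)^(2:ℝ) = 1.1025 := by
                    rw [show (2:ℝ) = ((2:ℕ):ℝ) by norm_num, Real.rpow_natCast]; norm_num
                  have hc3 : (0:ℝ) ≤ (w t j)^(2-α) := Real.rpow_nonneg (hpos j).le _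
                  exact mul_le_mul_of_nonneg_right (by rw [← hb2]; exact ha) hc3
            have h14 : (0:ℝ) ≤ (w (t+1) j)^(2-α) := Real.rpow_nonneg (hw'pos j).le _
            have h15 : (0:ℝ) ≤ e / w t j := div_nonneg he0.le (hpos j).le
            have h16 : (e / w t j) * (1.1025 * (w t j)^(2-α)) = 1.1025 * e * (w t j)^(1-α) := by
              have h17 : (w t j)^(2-α) = w t j * (w t j)^(1-α) := by
                rw [show (2-α) = 1 + (1-α) by ring, Real.rpow_add (hpos j), Real.rpow_one]
              rw [h17]
              field_simp [(hpos j).ne']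
            calc (-(η * g t j)) * (w (t+1) j)^(2-α) ≤ (e / w t j) * (w (t+1) j)^(2-α) :=
                  mul_le_mul_of_nonneg_right h12 h14
            _ ≤ (e / w t j) * (1.1025 * (w t j)^(2-α)) := mul_le_mul_of_nonneg_left h13 h15
            _ = 1.1025 * e * (w t j)^(1-α) := h16
            _ ≤ 1.11 * e * (w t j)^(1-α) := by
                have h18 : (0:ℝ) ≤ e * (w t j)^(1-α) :=
                  mul_nonneg he0.le (Real.rpow_nonneg (hpos j).le _)
                linarith only [h18]
          have hS1 : ∑ j, (w t j)^(1-α) ≤ (m:ℝ)^α := by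
            have h19 := aux_sum_le hm (1-α) (by linarith) (by linarith)
              (w t) (fun j => (hpos j).le) hsum
            rwa [show (1:ℝ)-(1-α) = α by ring] at h19
          have hS2 : (m:ℝ)^(α-1) ≤ ∑ j, (w (t+1) j)^(2-α) := by
            have h19 := aux_sum_ge hm (2-α) (by linarith) (w (t+1)) hw'nn hsum'
            rwa [show (1:ℝ)-(2-α) = α-1 by ring] at h19
          have hP : (0:ℝ) < (m:ℝ)^(α-1) := Real.rpow_pos_of_pos hm0 _
          have hstep1 : (-c) * ∑ j, (w (t+1) j)^(2-α) ≤ 1.11 * e * (m:ℝ)^α := by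
            have e1 : (-c) * ∑ j, (w (t+1) j)^(2-α)
                = (∑ j, (η * g t j - c) * (w (t+1) j)^(2-α))
                  + ∑ j, (-(η * g t j)) * (w (t+1) j)^(2-α) := by
              rw [Finset.mul_sum, ← Finset.sum_add_distrib]
              refine Finset.sum_congr rfl fun j _ => ?_
              ring
            have e2 : ∑ j, (-(η * g t j)) * (w (t+1) j)^(2-α) ≤ ∑ j, 1.11 * e * (w t j)^(1-α) :=
              Finset.sum_le_sum fun j _ => hterm j
            have e3 : ∑ j, 1.11 * e * (w t j)^(1-α) = 1.11 * e * ∑ j, (w t j)^(1-α) := by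
              rw [← Finset.mul_sum]
            have e4 : 1.11 * e * ∑ j, (w t j)^(1-α) ≤ 1.11 * e * (m:ℝ)^α :=
              mul_le_mul_of_nonneg_left hS1 (mul_nonneg (by norm_num) he0.le)
            rw [e1]
            rw [e3] at e2
            linarith only [hsum_ineq, e2, e4]
          have h19 : (m:ℝ)^α = (m:ℝ)^(α-1) * m := by
            have h20 := Real.rpow_add hm0 (α-1) 1
            rw [Real.rpow_one] at h20
            rw [show α - 1 + 1 = α by ring] at h20
            exact h20
          have hfin : (-c) * (m:ℝ)^(α-1) ≤ (1.11 * m * e) * (m:ℝ)^(α-1) := by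
            have h21 : (-c) * (m:ℝ)^(α-1) ≤ (-c) * ∑ j, (w (t+1) j)^(2-α) :=
              mul_le_mul_of_nonneg_left hS2 (by linarith)
            have h22 : (1.11 * m * e) * (m:ℝ)^(α-1) = 1.11 * e * (m:ℝ)^α := by
              rw [h19]; ring
            linarith only [hstep1, h21, h22]
          exact le_of_mul_le_mul_right hfin hP
      -- put it together
      have hηg : η * g t i ≤ e := by
        rw [he_def]
        exact mul_le_mul_of_nonneg_left (hw2 t htT i).2 hη0.le
      have hle3 : e + 1.11*(m:ℝ)*e ≤ 3*(m:ℝ)*e := by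
        have hme : (0:ℝ) ≤ ((m:ℝ)-1)*e := mul_nonneg (by linarith only [hmR]) he0.le
        linarith only [hme, he0.le]
      have hcast : ((t+1:ℕ):ℝ) = (t:ℝ)+1 := by push_cast; ring
      rw [hc i]
      have hib := ihb i
      calc (w t i)^(α-1) + η * g t i - c
          ≤ ((m:ℝ)^(1-α) + t*(3*(m:ℝ)*e)) + e + 1.11*(m:ℝ)*e := by
            linarith only [hclb, hib, hηg]
      _ ≤ (m:ℝ)^(1-α) + ((t+1:ℕ):ℝ)*(3*(m:ℝ)*e) := by
          rw [hcast]
          have : ((t:ℝ)+1)*(3*(m:ℝ)*e) = (t:ℝ)*(3*(m:ℝ)*e) + 3*(m:ℝ)*e := by ring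
          rw [this]
          linarith only [hle3]
  -- conclusion
  intro t ht i
  have hb := hmain t ht i
  obtain ⟨hpos, hsum⟩ := basic t ht
  have hUD : (w t i)^(α-1) ≤ D := by
    have h1 : (t:ℝ)*(3*(m:ℝ)*e) ≤ R*(3*(m:ℝ)*e) := by
      apply mul_le_mul_of_nonneg_right _ h3me
      rw [hR_def]; exact_mod_cast ht.le
    calc (w t i)^(α-1) ≤ (m:ℝ)^(1-α) + t*(3*(m:ℝ)*e) := hb
    _ ≤ (m:ℝ)^(1-α) + R*(3*(m:ℝ)*e) := by linarith only [h1]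
    _ ≤ D := hDlow
  have hwB : B ≤ w t i := by
    rw [hD_def] at hUD
    exact (Real.rpow_le_rpow_iff_of_neg (hpos i) hB0 hzneg).1 hUD
  constructor
  · have h1 : B^α ≤ (w t i)^α := Real.rpow_le_rpow hB0.le hwB hα0.le
    have h2 : 4*η*γ = 4*e := by rw [he_def]; ring
    linarith only [h1, h2, h100e, he0]
  · exact hwB
end

section
/- Fix α ∈ (0, 1/2) and positive integers m, n. There exists T₀ (depending on m, n, α) such that for all integers T ≥ T₀ the following holds. Set γ = 12 n ln T and η = 1/(12 m^{(1+α)/2} n √T ln T). Let w^1 = (1/m, …, 1/m), and suppose for each t ∈ [T]: g^t ∈ ℝ^m satisfies −γ/w^t_i ≤ g^t_i ≤ γ for all i (the small gradient assumption), and w^{t+1} ∈ Δ^m has strictly positive coordinates and satisfies, for some constant c_t ∈ ℝ, (w^{t+1}_i)^{α−1} = (w^t_i)^{α−1} + η g^t_i − c_t for all i. Then for all i ∈ [m] and t ∈ [T]: −32 (w^t_i)^{1−α} η γ ≤ w^t_i − w^{t+1}_i ≤ 2 (w^t_i)^{2−α} (m+1) η γ. -/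
open Finset


lemma aux_inv {u : ℝ} (hu : -(1/2) ≤ u) : (1+u)⁻¹ ≤ 1 - u + 2*u^2 := by
  have h : (0:ℝ) < 1 + u := by linarith
  rw [inv_eq_one_div, div_le_iff₀ h]
  nlinarith [sq_nonneg u, mul_nonneg (sq_nonneg u) (by linarith : (0:ℝ) ≤ 1 + 2*u)]

lemma aux_rpow_neg_ub {v q : ℝ} (hq1 : 1 ≤ q) (hq2 : q ≤ 2) (hv : -(1/8) ≤ v) :
    (1+v) ^ (-q) ≤ 1 - q*v + 2*q^2*v^2 := by
  have hv1 : (0:ℝ) < 1 + v := by linarith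
  have hqv : -(1/2) ≤ q * v := by
    rcases le_or_gt 0 v with h | h
    · nlinarith
    · nlinarith
  have hb : 1 + q*v ≤ (1+v)^q := one_add_mul_self_le_rpow_one_add (by linarith) hq1
  have hbp : (0:ℝ) < 1 + q*v := by linarith
  rw [Real.rpow_neg hv1.le]
  calc ((1+v)^q)⁻¹ ≤ (1 + q*v)⁻¹ := inv_anti₀ hbp hb
    _ ≤ 1 - q*v + 2*(q*v)^2 := aux_inv hqv
    _ ≤ 1 - q*v + 2*q^2*v^2 := by ring_nf; rfl

lemma aux_rpow_neg_lb {u q : ℝ} (hq1 : 1 ≤ q) (hu : 0 ≤ u) : 1 - q*u ≤ (1+u)^(-q) := by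
  have h1 : (0:ℝ) < 1 + u := by linarith
  set s : ℝ := (1+u)⁻¹ - 1 with hs
  have hip : (0:ℝ) < (1+u)⁻¹ := inv_pos.2 h1
  have hs1 : -1 ≤ s := by simp only [hs]; linarith
  have hb := one_add_mul_self_le_rpow_one_add hs1 hq1
  have h2 : 1 + s = (1+u)⁻¹ := by simp [hs]
  have h3 : (1+s)^q = (1+u)^(-q) := by
    rw [h2, Real.inv_rpow h1.le, ← Real.rpow_neg h1.le]
  rw [h3] at hb
  have h5 : 1 - u ≤ (1+u)⁻¹ := by
    rw [inv_eq_one_div, le_div_iff₀ h1]; nlinarith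
  have h6 : -u ≤ s := by simp only [hs]; linarith
  have h7 : q * (-u) ≤ q * s := mul_le_mul_of_nonneg_left h6 (by linarith)
  calc 1 - q*u = 1 + q*(-u) := by ring
    _ ≤ 1 + q*s := by linarith
    _ ≤ (1+u)^(-q) := hb

lemma aux_rpow_neg_ub2 {w q : ℝ} (hq1 : 1 ≤ q) (hw : 0 ≤ w) (hqw : q*w ≤ 1/2) :
    (1-w)^(-q) ≤ 1 + 2*q*w := by
  have hw1 : w ≤ 1/2 := by nlinarith
  have h1 : (0:ℝ) < 1 - w := by linarith
  have hb : 1 - q*w ≤ (1-w)^q := by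
    have := one_add_mul_self_le_rpow_one_add (s := -w) (by linarith) hq1
    simpa [mul_neg, ← sub_eq_add_neg] using this
  have hbp : (0:ℝ) < 1 - q*w := by linarith
  have hqw0 : (0:ℝ) ≤ q*w := mul_nonneg (by linarith) hw
  rw [Real.rpow_neg h1.le]
  calc ((1-w)^q)⁻¹ ≤ (1 - q*w)⁻¹ := inv_anti₀ hbp hb
    _ ≤ 1 + 2*q*w := by
        rw [inv_eq_one_div, div_le_iff₀ hbp]
        nlinarith [mul_nonneg hqw0 (by linarith : (0:ℝ) ≤ 1 - 2*(q*w))]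

lemma rpow_inv_le {y z α : ℝ} (hy : 0 < y) (hz : 0 < z) (hα : α < 1) (h : z ≤ y ^ (α-1)) :
    y ≤ z ^ (1/(α-1)) := by
  have hne : α - 1 ≠ 0 := by intro h'; rw [sub_eq_zero] at h'; exact absurd h' (ne_of_lt hα)
  have he : 1/(α-1) ≤ 0 := div_nonpos_of_nonneg_of_nonpos (by norm_num) (by linarith)
  have h2 := Real.rpow_le_rpow_of_nonpos hz h he
  rwa [← Real.rpow_mul hy.le, mul_one_div, div_self hne, Real.rpow_one] at h2

lemma le_rpow_inv {y z α : ℝ} (hy : 0 < y) (hα : α < 1) (h : y ^ (α-1) ≤ z) :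
    z ^ (1/(α-1)) ≤ y := by
  have hne : α - 1 ≠ 0 := by intro h'; rw [sub_eq_zero] at h'; exact absurd h' (ne_of_lt hα)
  have he : 1/(α-1) ≤ 0 := div_nonpos_of_nonneg_of_nonpos (by norm_num) (by linarith)
  have hz : 0 < y ^ (α-1) := Real.rpow_pos_of_pos hy _
  have h2 := Real.rpow_le_rpow_of_nonpos hz h he
  rwa [← Real.rpow_mul hy.le, mul_one_div, div_self hne, Real.rpow_one] at h2

lemma exp_eq_negq {α : ℝ} : 1/(α-1) = -(1/(1-α)) := by
  rw [show α - 1 = -(1-α) by ring, div_neg]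

lemma xv2_bound {xi s e a b : ℝ} (hx : 0 < xi) (hx1 : xi ≤ 1) (hs : 0 ≤ s) (he : 0 ≤ e)
    (ha0 : 0 ≤ a) (ha1 : a ≤ 1) (hb0 : 0 ≤ b) (hxb : xi*(b*b) ≤ 1) :
    xi * (e*(s*a - b))^2 ≤ 2*e^2*(s^2+1) := by
  have h6 : xi*(a*a) ≤ 1 := by nlinarith
  have h7 : xi * (s*a-b)^2 = s^2*(xi*(a*a)) - 2*s*(xi*(a*b)) + xi*(b*b) := by ring
  have h8 : s^2*(xi*(a*a)) ≤ s^2*1 := mul_le_mul_of_nonneg_left h6 (sq_nonneg s)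
  have h9 : 0 ≤ s*(xi*(a*b)) :=
    mul_nonneg hs (mul_nonneg hx.le (mul_nonneg ha0 hb0))
  have h10 : xi * (s*a-b)^2 ≤ s^2 + 1 := by linarith
  have h11 : xi * (e*(s*a - b))^2 = e^2 * (xi * (s*a-b)^2) := by ring
  rw [h11]
  nlinarith [sq_nonneg e, mul_le_mul_of_nonneg_left h10 (sq_nonneg e)]

lemma arith_contra {A B q ε σ s mR : ℝ} (hq1 : 1 ≤ q) (hq2 : q ≤ 2) (hB0 : 0 ≤ B)
    (hA0 : 0 ≤ A) (hchain : q*A ≤ 2*q^2*B) (hA : ε*(σ*(1/mR)) ≤ A)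
    (hB : B ≤ mR*(2*ε^2*(s^2+1)))
    (hε : 0 < ε) (hm1 : 1 ≤ mR) (hsmall2 : 16*mR^2*(s^2+1)*ε < σ) : False := by
  have h1 : A ≤ q*A := le_mul_of_one_le_left hA0 hq1
  have hq4 : q^2 ≤ 4 := by nlinarith
  have h2 : 2*q^2*B ≤ 8*B := by nlinarith [mul_le_mul_of_nonneg_left hq4 hB0]
  have h3 : A ≤ 8*B := by linarith
  have h4 : ε*(σ*(1/mR)) ≤ 16*(mR*(ε^2*(s^2+1))) := by nlinarith
  have hm0 : (0:ℝ) < mR := by linarith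
  have h5 : ε*σ ≤ 16*(mR^2*(ε^2*(s^2+1))) := by
    calc ε*σ = mR * (ε*(σ*(1/mR))) := by field_simp
    _ ≤ mR * (16*(mR*(ε^2*(s^2+1)))) := mul_le_mul_of_nonneg_left h4 hm0.le
    _ = 16*(mR^2*(ε^2*(s^2+1))) := by ring
  nlinarith [mul_pos hε (sub_pos.2 hsmall2)]

lemma step_c_ub {m : ℕ} (hm : 0 < m) {α ε : ℝ} (hα2 : α < 1/2)
    (x y G : Fin m → ℝ) (c : ℝ)
    (hxs : ∑ i, x i = 1)
    (hy : ∀ i, 0 < y i) (hys : ∑ i, y i = 1)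
    (hupd : ∀ i, (y i) ^ (α-1) = (x i)^(α-1) + G i - c)
    (hG2 : ∀ i, G i ≤ ε) : c ≤ ε := by
  have hne : Nonempty (Fin m) := ⟨⟨0, hm⟩⟩
  have hex : ∃ i, y i ≤ x i := by
    by_contra h
    push_neg at h
    have h2 : ∑ i, x i < ∑ i, y i :=
      Finset.sum_lt_sum_of_nonempty Finset.univ_nonempty (fun i _ => h i)
    rw [hxs, hys] at h2
    exact lt_irrefl 1 h2
  obtain ⟨i, hi⟩ := hex
  have h2 : (x i)^(α-1) ≤ (y i)^(α-1) :=
    Real.rpow_le_rpow_of_nonpos (hy i) hi (by linarith)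
  rw [hupd i] at h2
  linarith [hG2 i]

lemma step_c_lb {m : ℕ} (hm : 0 < m) {α ε : ℝ} (hα : 0 < α) (hα2 : α < 1/2) (hε : 0 < ε)
    (x y G : Fin m → ℝ) (c : ℝ)
    (hx : ∀ i, 0 < x i) (hxs : ∑ i, x i = 1)
    (hy : ∀ i, 0 < y i) (hys : ∑ i, y i = 1)
    (hupd : ∀ i, (y i) ^ (α-1) = (x i)^(α-1) + G i - c)
    (hG : ∀ i, -(ε / x i) ≤ G i)
    (hsmall : ∀ i, ε * (x i)^(-α) ≤ 1/8)
    (hsmall2 : 16 * (m:ℝ)^2 * (((m:ℝ) + (1-2*α)*((m:ℝ)+1))^2 + 1) * ε < (1-2*α)*((m:ℝ)+1)) :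
    -(((m:ℝ) + (1-2*α)*((m:ℝ)+1)) * ε) < c := by
  obtain ⟨σ, hσ⟩ : ∃ s : ℝ, s = (1-2*α)*((m:ℝ)+1) := ⟨_, rfl⟩
  rw [← hσ] at hsmall2 ⊢
  by_contra hc
  push_neg at hc   -- c ≤ -((m+σ)*ε)
  have hm1 : (1:ℝ) ≤ (m:ℝ) := by exact_mod_cast hm
  have hσpos : 0 < σ := by rw [hσ]; nlinarith
  have h1α : (0:ℝ) < 1 - α := by linarith
  obtain ⟨q, hq⟩ : ∃ q : ℝ, q = 1/(1-α) := ⟨_, rfl⟩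
  have hq1 : 1 ≤ q := by rw [hq, le_div_iff₀ h1α]; linarith
  have hq2 : q ≤ 2 := by rw [hq, div_le_iff₀ h1α]; linarith
  obtain ⟨v, hv⟩ : ∃ v : Fin m → ℝ,
      v = fun i => ε * (((m:ℝ)+σ) * (x i)^(1-α) - (x i)^(-α)) := ⟨_, rfl⟩
  have hx1 : ∀ i, x i ≤ 1 := fun i => by
    calc x i ≤ ∑ j, x j := Finset.single_le_sum (fun j _ => (hx j).le) (Finset.mem_univ i)
    _ = 1 := hxs
  have hmσ : (0:ℝ) ≤ (m:ℝ) + σ := by linarith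
  have hvlb : ∀ i, -(1/8) ≤ v i := fun i => by
    have h1 : 0 ≤ ((m:ℝ)+σ) * (x i)^(1-α) :=
      mul_nonneg hmσ (Real.rpow_nonneg (hx i).le _)
    have h2 := hsmall i
    have h3 : 0 ≤ ε * (x i)^(-α) :=
      mul_nonneg hε.le (Real.rpow_nonneg (hx i).le _)
    simp only [hv]
    nlinarith
  have hvpos : ∀ i, (0:ℝ) < 1 + v i := fun i => by have := hvlb i; linarith
  -- key pointwise bound
  have key : ∀ i, y i ≤ x i * (1 + v i)^(-q) := by
    intro i
    have hxp := hx i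
    have e1 : (x i)^(α-1) * (x i)^(1-α) = 1 := by
      rw [← Real.rpow_add hxp, show α-1+(1-α) = 0 by ring, Real.rpow_zero]
    have e2 : (x i)^(α-1) * (x i)^(-α) = (x i)⁻¹ := by
      rw [← Real.rpow_add hxp, show α-1 + -α = -1 by ring, Real.rpow_neg_one]
    have expand : (x i)^(α-1) * (1 + v i) = (x i)^(α-1) + ((m:ℝ)+σ)*ε - ε/(x i) := by
      calc (x i)^(α-1) * (1 + v i)
          = (x i)^(α-1) + (((m:ℝ)+σ)*ε) * ((x i)^(α-1) * (x i)^(1-α))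
            - ε * ((x i)^(α-1)*(x i)^(-α)) := by simp only [hv]; ring
        _ = (x i)^(α-1) + ((m:ℝ)+σ)*ε - ε/(x i) := by
            rw [e1, e2, mul_one, div_eq_mul_inv]
    have hz : (x i)^(α-1) * (1 + v i) ≤ (y i)^(α-1) := by
      rw [hupd i, expand]
      have := hG i
      linarith
    have hzpos : 0 < (x i)^(α-1) * (1 + v i) :=
      mul_pos (Real.rpow_pos_of_pos hxp _) (hvpos i)
    have h4 := rpow_inv_le (hy i) hzpos (by linarith) hz
    have h5 : ((x i)^(α-1) * (1 + v i))^(1/(α-1)) = x i * (1 + v i)^(-q) := by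
      rw [Real.mul_rpow (Real.rpow_nonneg hxp.le _) (hvpos i).le,
        ← Real.rpow_mul hxp.le, mul_one_div,
        div_self (by intro h'; rw [sub_eq_zero] at h'; linarith : α - 1 ≠ 0),
        Real.rpow_one, exp_eq_negq, hq]
    rw [h5] at h4
    exact h4
  -- sum bounds
  have sum1 : (1:ℝ) ≤ ∑ i, x i * (1+v i)^(-q) := by
    calc (1:ℝ) = ∑ i, y i := hys.symm
    _ ≤ _ := Finset.sum_le_sum (fun i _ => key i)
  have sum2 : ∑ i, x i * (1+v i)^(-q) ≤ ∑ i, x i * (1 - q*v i + 2*q^2*(v i)^2) :=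
    Finset.sum_le_sum fun i _ =>
      mul_le_mul_of_nonneg_left (aux_rpow_neg_ub hq1 hq2 (hvlb i)) (hx i).le
  have expand2 : ∑ i, x i * (1 - q*v i + 2*q^2*(v i)^2)
      = 1 - q*(∑ i, x i * v i) + 2*q^2*(∑ i, x i * (v i)^2) := by
    rw [Finset.sum_congr rfl (fun i _ =>
      (by ring : x i * (1 - q*v i + 2*q^2*(v i)^2)
        = x i - q*(x i * v i) + 2*q^2*(x i * (v i)^2)))]
    rw [Finset.sum_add_distrib, Finset.sum_sub_distrib, ← Finset.mul_sum, ← Finset.mul_sum, hxs]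
  -- Chebyshev
  have chev : (∑ i, (x i)^(1-α)) * (∑ i, x i) ≤ (m:ℝ) * ∑ i, (x i)^(1-α) * x i := by
    have hmono : Monovary (fun i => (x i)^(1-α)) x := fun i j hij =>
      Real.rpow_le_rpow (hx _).le hij.le (by linarith)
    simpa using hmono.sum_mul_sum_le_card_mul_sum
  rw [hxs, mul_one] at chev
  have hSb1 : (1:ℝ) ≤ ∑ i, (x i)^(1-α) := by
    calc (1:ℝ) = ∑ i, x i := hxs.symm
    _ ≤ ∑ i, (x i)^(1-α) := Finset.sum_le_sum (fun i _ => by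
        calc x i = (x i)^(1:ℝ) := (Real.rpow_one _).symm
        _ ≤ (x i)^(1-α) := Real.rpow_le_rpow_of_exponent_ge (hx i) (hx1 i) (by linarith))
  have hS1b : (1:ℝ)/(m:ℝ) ≤ ∑ i, (x i)^(1-α) * x i := by
    rw [div_le_iff₀ (by linarith : (0:ℝ) < (m:ℝ))]
    nlinarith
  -- lower bound on A := ∑ x v
  have hA : ε * (σ * (1/(m:ℝ))) ≤ ∑ i, x i * v i := by
    have e3 : ∀ i, x i * v i
        = ε * (((m:ℝ)+σ) * ((x i)^(1-α) * x i) - (x i)^(1-α)) := by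
      intro i
      have exb : x i * (x i)^(-α) = (x i)^(1-α) := by
        rw [show (1:ℝ)-α = 1 + -α by ring, Real.rpow_add (hx i), Real.rpow_one]
      calc x i * v i
          = ε * (((m:ℝ)+σ) * ((x i)^(1-α) * x i) - x i * (x i)^(-α)) := by
            simp only [hv]; ring
        _ = ε * (((m:ℝ)+σ) * ((x i)^(1-α) * x i) - (x i)^(1-α)) := by rw [exb]
    rw [Finset.sum_congr rfl (fun i _ => e3 i), ← Finset.mul_sum]
    apply mul_le_mul_of_nonneg_left _ hε.le
    rw [Finset.sum_sub_distrib, ← Finset.mul_sum]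
    have h7 : σ * (1/(m:ℝ)) ≤ σ * ∑ i, (x i)^(1-α) * x i :=
      mul_le_mul_of_nonneg_left hS1b hσpos.le
    nlinarith
  -- upper bound on B := ∑ x v²
  have hB : ∑ i, x i * (v i)^2 ≤ (m:ℝ) * (2*ε^2*(((m:ℝ)+σ)^2+1)) := by
    calc ∑ i, x i * (v i)^2 ≤ ∑ _i : Fin m, 2*ε^2*(((m:ℝ)+σ)^2+1) := by
          apply Finset.sum_le_sum
          intro i _
          have hxp := hx i
          have ha1 : (x i)^(1-α) ≤ 1 :=
            Real.rpow_le_one hxp.le (hx1 i) (by linarith)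
          have hxb : x i * ((x i)^(-α) * (x i)^(-α)) ≤ 1 := by
            have e9 : x i * ((x i)^(-α) * (x i)^(-α)) = (x i)^(1 + -α + -α) := by
              rw [Real.rpow_add hxp, Real.rpow_add hxp, Real.rpow_one]; ring
            rw [e9]
            exact Real.rpow_le_one hxp.le (hx1 i) (by linarith)
          have := xv2_bound (s := (m:ℝ)+σ) (e := ε) hxp (hx1 i) hmσ hε.le
            (Real.rpow_nonneg hxp.le (1-α)) ha1 (Real.rpow_nonneg hxp.le (-α)) hxb
          simp only [hv]
          exact this
      _ = (m:ℝ) * (2*ε^2*(((m:ℝ)+σ)^2+1)) := by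
          rw [Finset.sum_const, Finset.card_univ, Fintype.card_fin, nsmul_eq_mul]
  have hB0 : 0 ≤ ∑ i, x i * (v i)^2 :=
    Finset.sum_nonneg fun i _ => mul_nonneg (hx i).le (sq_nonneg _)
  have hchain : q * (∑ i, x i * v i) ≤ 2*q^2*(∑ i, x i * (v i)^2) := by
    have := le_trans sum1 (le_trans sum2 (le_of_eq expand2))
    linarith
  have hA0 : 0 ≤ ∑ i, x i * v i := le_trans (by positivity) hA
  exact arith_contra hq1 hq2 hB0 hA0 hchain hA hB hε hm1 hsmall2

lemma rpow_split {x u α : ℝ} (hx : 0 < x) (hu : 0 < 1+u) (hα2 : α < 1) :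
    (x^(α-1) * (1+u))^(1/(α-1)) = x * (1+u)^(-(1/(1-α))) := by
  rw [Real.mul_rpow (Real.rpow_nonneg hx.le _) hu.le,
    ← Real.rpow_mul hx.le, mul_one_div,
    div_self (by intro h'; rw [sub_eq_zero] at h'; linarith : α - 1 ≠ 0),
    Real.rpow_one, exp_eq_negq]

lemma step_main {m : ℕ} (hm : 0 < m) {α ε : ℝ} (hα : 0 < α) (hα2 : α < 1/2) (hε : 0 < ε)
    (x y G : Fin m → ℝ) (c : ℝ)
    (hx : ∀ i, 0 < x i) (hxs : ∑ i, x i = 1)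
    (hy : ∀ i, 0 < y i) (hys : ∑ i, y i = 1)
    (hupd : ∀ i, (y i) ^ (α-1) = (x i)^(α-1) + G i - c)
    (hG : ∀ i, -(ε / x i) ≤ G i) (hG2 : ∀ i, G i ≤ ε)
    (hsmall : ∀ i, ε * (x i)^(-α) ≤ 1/8)
    (hsmall2 : 16 * (m:ℝ)^2 * (((m:ℝ) + (1-2*α)*((m:ℝ)+1))^2 + 1) * ε < (1-2*α)*((m:ℝ)+1)) :
    (∀ i, (y i)^(α-1) ≤ (x i)^(α-1) + (2-2*α)*((m:ℝ)+1)*ε) ∧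
    (∀ i, -(32*(x i)^(1-α)*ε) ≤ x i - y i ∧ x i - y i ≤ 2*(x i)^(2-α)*((m:ℝ)+1)*ε) := by
  have hclb := step_c_lb hm hα hα2 hε x y G c hx hxs hy hys hupd hG hsmall hsmall2
  have hcub := step_c_ub hm hα2 x y G c hxs hy hys hupd hG2
  have hx1 : ∀ i, x i ≤ 1 := fun i => by
    calc x i ≤ ∑ j, x j := Finset.single_le_sum (fun j _ => (hx j).le) (Finset.mem_univ i)
    _ = 1 := hxs
  have hid : (((m:ℝ) + (1-2*α)*((m:ℝ)+1)) + 1) * ε = (2-2*α)*((m:ℝ)+1)*ε := by ring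
  have h1α : (0:ℝ) < 1 - α := by linarith
  obtain ⟨q, hq⟩ : ∃ q : ℝ, q = 1/(1-α) := ⟨_, rfl⟩
  have hq1 : 1 ≤ q := by rw [hq, le_div_iff₀ h1α]; linarith
  have hq2 : q ≤ 2 := by rw [hq, div_le_iff₀ h1α]; linarith
  have hq3 : q * (2-2*α) = 2 := by rw [hq]; field_simp
  have key1 : ∀ i, (y i)^(α-1) ≤ (x i)^(α-1) + (2-2*α)*((m:ℝ)+1)*ε := by
    intro i
    rw [hupd i]
    have := hG2 i
    nlinarith [hclb, hG2 i]
  refine ⟨key1, fun i => ⟨?_, ?_⟩⟩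
  · -- lower bound: y ≤ x + 32 x^(1-α) ε
    have hxp := hx i
    have e2 : (x i)^(α-1) * (x i)^(-α) = (x i)⁻¹ := by
      rw [← Real.rpow_add hxp, show α-1 + -α = -1 by ring, Real.rpow_neg_one]
    have exb : x i * (x i)^(-α) = (x i)^(1-α) := by
      rw [show (1:ℝ)-α = 1 + -α by ring, Real.rpow_add hxp, Real.rpow_one]
    obtain ⟨w, hw⟩ : ∃ w : ℝ, w = 2*ε*(x i)^(-α) := ⟨_, rfl⟩
    have hw0 : 0 ≤ w := by
      rw [hw]; exact mul_nonneg (by linarith) (Real.rpow_nonneg hxp.le _)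
    have hw1 : w ≤ 1/4 := by rw [hw]; have := hsmall i; linarith
    have hqw : q*w ≤ 1/2 := by nlinarith
    have hεx : ε ≤ ε/(x i) := by
      rw [le_div_iff₀ hxp]; nlinarith [hx1 i]
    have ediv : ε/(x i) = ε*(x i)⁻¹ := div_eq_mul_inv _ _
    have h2 : (x i)^(α-1)*(1-w) ≤ (y i)^(α-1) := by
      have expand : (x i)^(α-1)*(1-w) = (x i)^(α-1) - 2*(ε*(x i)⁻¹) := by
        calc (x i)^(α-1)*(1-w)
            = (x i)^(α-1) - 2*ε*((x i)^(α-1)*(x i)^(-α)) := by rw [hw]; ring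
          _ = (x i)^(α-1) - 2*(ε*(x i)⁻¹) := by rw [e2]; ring
      rw [hupd i, expand]
      have := hG i
      linarith
    have hwpos : (0:ℝ) < 1 - w := by linarith
    have hzpos : 0 < (x i)^(α-1)*(1-w) :=
      mul_pos (Real.rpow_pos_of_pos hxp _) hwpos
    have h4 := rpow_inv_le (hy i) hzpos (by linarith) h2
    have h5 : ((x i)^(α-1)*(1-w))^(1/(α-1)) = x i * (1-w)^(-q) := by
      rw [show (1:ℝ) - w = 1 + -w by ring, hq]
      exact rpow_split hxp (by linarith) (by linarith)
    rw [h5] at h4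
    have ub2 := aux_rpow_neg_ub2 hq1 hw0 hqw
    have t1 : y i ≤ x i * (1+2*q*w) :=
      le_trans h4 (mul_le_mul_of_nonneg_left ub2 hxp.le)
    have hxw : x i * w = 2*(ε*(x i)^(1-α)) := by
      rw [hw, show x i * (2*ε*(x i)^(-α)) = 2*ε*(x i * (x i)^(-α)) by ring, exb]; ring
    have t2 : x i * (1+2*q*w) = x i + 2*q*(x i*w) := by ring
    have t3 : 2*q*(x i * w) = 4*q*(ε*(x i)^(1-α)) := by rw [hxw]; ring
    have hpos : 0 ≤ ε*(x i)^(1-α) := mul_nonneg hε.le (Real.rpow_nonneg hxp.le _)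
    have t4 : 4*q*(ε*(x i)^(1-α)) ≤ 8*(ε*(x i)^(1-α)) := by
      have : (4*q) * (ε*(x i)^(1-α)) ≤ 8 * (ε*(x i)^(1-α)) :=
        mul_le_mul_of_nonneg_right (by linarith) hpos
      linarith
    linarith [t1, t2, t3, t4, hpos]
  · -- upper bound: x - y ≤ 2 x^(2-α) (m+1) ε
    have hxp := hx i
    have e1 : (x i)^(α-1) * (x i)^(1-α) = 1 := by
      rw [← Real.rpow_add hxp, show α-1+(1-α) = 0 by ring, Real.rpow_zero]
    have e4 : x i * (x i)^(1-α) = (x i)^(2-α) := by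
      rw [show (2:ℝ)-α = 1+(1-α) by ring, Real.rpow_add hxp, Real.rpow_one]
    obtain ⟨u, hu⟩ : ∃ u : ℝ, u = (2-2*α)*((m:ℝ)+1)*ε*(x i)^(1-α) := ⟨_, rfl⟩
    have hu0 : 0 ≤ u := by
      rw [hu]
      apply mul_nonneg (mul_nonneg (mul_nonneg (by linarith) (by positivity)) hε.le)
        (Real.rpow_nonneg hxp.le _)
    have hupos : (0:ℝ) < 1 + u := by linarith
    have expand : (x i)^(α-1)*(1+u) = (x i)^(α-1) + (2-2*α)*((m:ℝ)+1)*ε := by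
      calc (x i)^(α-1)*(1+u)
          = (x i)^(α-1) + (2-2*α)*((m:ℝ)+1)*ε*((x i)^(α-1)*(x i)^(1-α)) := by
            rw [hu]; ring
        _ = (x i)^(α-1) + (2-2*α)*((m:ℝ)+1)*ε := by rw [e1, mul_one]
    have h2 : (y i)^(α-1) ≤ (x i)^(α-1)*(1+u) := by
      rw [expand]; exact key1 i
    have h4 := le_rpow_inv (hy i) (by linarith : α < 1) h2
    have h5 : ((x i)^(α-1)*(1+u))^(1/(α-1)) = x i * (1+u)^(-q) := by
      rw [hq]; exact rpow_split hxp hupos (by linarith)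
    rw [h5] at h4
    have lb := aux_rpow_neg_lb hq1 hu0
    have t1 : x i*(1-q*u) ≤ x i*(1+u)^(-q) := mul_le_mul_of_nonneg_left lb hxp.le
    have t2 : q*(x i*u) = 2*(((m:ℝ)+1)*ε*(x i)^(2-α)) := by
      calc q*(x i * u) = (q*(2-2*α))*(((m:ℝ)+1)*ε*(x i * (x i)^(1-α))) := by
            rw [hu]; ring
        _ = 2*(((m:ℝ)+1)*ε*(x i)^(2-α)) := by rw [hq3, e4]
    have t3 : x i*(1-q*u) = x i - q*(x i*u) := by ring
    linarith [t1, t2, t3, h4]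


set_option maxHeartbeats 1000000 in
/-- Corollary (#2): under the small gradient assumption, for `T` sufficiently large,
consecutive OMD iterates with regularizer `R(w) = -(1/α) ∑ i, w i ^ α`,
`γ = 12 n ln T` and `η = 1/(12 m^{(1+α)/2} n √T ln T)` satisfy
`-32 (w^t_i)^{1-α} η γ ≤ w^t_i - w^{t+1}_i ≤ 2 (w^t_i)^{2-α} (m+1) η γ`.
(Time is 0-indexed: `w 0` is the uniform initial weight vector.) -/
theorem stmt5 {m n : ℕ} (hm : 0 < m) (hn : 0 < n) (α : ℝ)
    (hα : α ∈ Set.Ioo (0:ℝ) (1/2)) :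
    ∃ T₀ : ℕ, ∀ T : ℕ, T₀ ≤ T →
      ∀ γ η : ℝ,
        γ = 12 * n * Real.log T →
        η = 1 / (12 * (m : ℝ) ^ ((1 + α) / 2) * n * Real.sqrt T * Real.log T) →
        ∀ w g : ℕ → Fin m → ℝ,
          w 0 = (fun _ => (m : ℝ)⁻¹) →
          (∀ t < T, ∀ i, -γ / w t i ≤ g t i ∧ g t i ≤ γ) →
          (∀ t < T, w (t+1) ∈ stdSimplex ℝ (Fin m) ∧ (∀ i, 0 < w (t+1) i) ∧
            ∃ c : ℝ, ∀ i, (w (t+1) i) ^ (α - 1) = (w t i) ^ (α - 1) + η * g t i - c) →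
          ∀ t < T, ∀ i,
            -32 * (w t i) ^ (1 - α) * η * γ ≤ w t i - w (t+1) i ∧
            w t i - w (t+1) i ≤ 2 * (w t i) ^ (2 - α) * ((m : ℝ) + 1) * η * γ := by
  obtain ⟨hα0, hα2⟩ := hα
  
  have hm1 : (1:ℝ) ≤ (m:ℝ) := by exact_mod_cast hm
  have h1α : (0:ℝ) < 1 - α := by linarith
  obtain ⟨σ, hσ⟩ : ∃ x : ℝ, x = (1-2*α)*((m:ℝ)+1) := ⟨_, rfl⟩
  have hσpos : 0 < σ := by
    rw [hσ]; exact mul_pos (by linarith) (by positivity)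
  obtain ⟨k, hk⟩ : ∃ x : ℝ, x = 16*(m:ℝ)^2*(((m:ℝ)+σ)^2+1) := ⟨_, rfl⟩
  have hkpos : 0 < k := by
    rw [hk]
    exact mul_pos (mul_pos (by norm_num) (pow_pos (by linarith) 2)) (by positivity)
  obtain ⟨ρ, hρ⟩ : ∃ x : ℝ, x = (1-2*α)/(1-α) := ⟨_, rfl⟩
  have hρpos : 0 < ρ := by rw [hρ]; exact div_pos (by linarith) h1α
  obtain ⟨s, hsdef⟩ : ∃ x : ℝ, x = α/(1-α) := ⟨_, rfl⟩
  have hs0 : 0 ≤ s := by rw [hsdef]; exact div_nonneg hα0.le h1α.le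
  have hs1 : s ≤ 1 := by rw [hsdef, div_le_one h1α]; linarith
  have hsρ : s + ρ = 1 := by rw [hsdef, hρ]; field_simp; ring
  obtain ⟨M₁, hM₁⟩ : ∃ x : ℝ, x = (24*((m:ℝ)+1))^(1/ρ) := ⟨_, rfl⟩
  have hM₁0 : 0 ≤ M₁ := by rw [hM₁]; positivity
  obtain ⟨M₂, hM₂⟩ : ∃ x : ℝ, x = k/σ + 1 := ⟨_, rfl⟩
  obtain ⟨M, hM⟩ : ∃ x : ℝ, x = max 3 (max M₁ M₂) := ⟨_, rfl⟩
  have hM3 : (3:ℝ) ≤ M := by rw [hM]; exact le_max_left _ _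
  obtain ⟨T₀, hT₀⟩ := exists_nat_gt (M^2)
  refine ⟨T₀, fun T hTT γ η hγ hη w g hw0 hg hup => ?_⟩
  have hTM : M^2 < (T:ℝ) := lt_of_lt_of_le hT₀ (by exact_mod_cast hTT)
  have hT9 : (9:ℝ) ≤ (T:ℝ) := by
    have h33 : (3:ℝ)*3 ≤ M*M := mul_le_mul hM3 hM3 (by norm_num) (by linarith)
    nlinarith [h33, hTM]
  have hT1 : (1:ℝ) < (T:ℝ) := by linarith
  have hsqT : 0 < Real.sqrt T := Real.sqrt_pos.2 (by linarith)
  have hMsq : M < Real.sqrt T := by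
    have h1 : Real.sqrt (M^2) < Real.sqrt T := Real.sqrt_lt_sqrt (sq_nonneg M) hTM
    rwa [Real.sqrt_sq (by linarith : (0:ℝ) ≤ M)] at h1
  have hsq1 : (1:ℝ) ≤ Real.sqrt T := by linarith
  have hlog : 0 < Real.log T := Real.log_pos hT1
  have hn1 : (1:ℝ) ≤ (n:ℝ) := by exact_mod_cast hn
  have hmp : (0:ℝ) < (m:ℝ)^((1+α)/2) := Real.rpow_pos_of_pos (by linarith) _
  have hmp1 : (1:ℝ) ≤ (m:ℝ)^((1+α)/2) := by
    calc (1:ℝ) = (m:ℝ)^(0:ℝ) := (Real.rpow_zero _).symm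
    _ ≤ (m:ℝ)^((1+α)/2) := Real.rpow_le_rpow_of_exponent_le hm1 (by linarith)
  have hγpos : 0 < γ := by
    rw [hγ]
    exact mul_pos (mul_pos (by norm_num) (by exact_mod_cast hn)) hlog
  have hdenpos : 0 < 12 * (m:ℝ)^((1+α)/2) * n * Real.sqrt T * Real.log T :=
    mul_pos (mul_pos (mul_pos (mul_pos (by norm_num) hmp) (by exact_mod_cast hn)) hsqT) hlog
  have hηpos : 0 < η := by rw [hη]; exact div_pos one_pos hdenpos
  obtain ⟨ε, hεdef⟩ : ∃ e : ℝ, e = η*γ := ⟨_, rfl⟩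
  have hεval : ε = 1/((m:ℝ)^((1+α)/2) * Real.sqrt T) := by
    rw [hεdef, hγ, hη]
    have h1 : Real.log T ≠ 0 := ne_of_gt hlog
    have h2 : Real.sqrt T ≠ 0 := ne_of_gt hsqT
    have h3 : (m:ℝ)^((1+α)/2) ≠ 0 := ne_of_gt hmp
    have h4 : (n:ℝ) ≠ 0 := by positivity
    field_simp
  have hεpos : 0 < ε := by
    rw [hεval]; exact div_pos one_pos (mul_pos hmp hsqT)
  have hεle : ε ≤ 1/Real.sqrt T := by
    rw [hεval]
    exact one_div_le_one_div_of_le hsqT (le_mul_of_one_le_left hsqT.le hmp1)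
  have hTε : (T:ℝ)*ε ≤ Real.sqrt T := by
    calc (T:ℝ)*ε ≤ (T:ℝ)*(1/Real.sqrt T) :=
          mul_le_mul_of_nonneg_left hεle (by positivity)
    _ = (T:ℝ)/Real.sqrt T := by ring
    _ = Real.sqrt T := Real.div_sqrt
  have hfac0 : 0 ≤ (2-2*α)*((m:ℝ)+1)*ε :=
    mul_nonneg (mul_nonneg (by linarith) (by positivity)) hεpos.le
  obtain ⟨D, hD⟩ : ∃ d : ℝ, d = (m:ℝ)^(1-α) + (T:ℝ)*((2-2*α)*((m:ℝ)+1)*ε) := ⟨_, rfl⟩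
  have hmα : (m:ℝ)^(1-α) ≤ (m:ℝ) := by
    calc (m:ℝ)^(1-α) ≤ (m:ℝ)^(1:ℝ) := Real.rpow_le_rpow_of_exponent_le hm1 (by linarith)
    _ = (m:ℝ) := Real.rpow_one _
  have hmαpos : 0 < (m:ℝ)^(1-α) := Real.rpow_pos_of_pos (by linarith) _
  have hDpos : 0 < D := by
    rw [hD]
    have : 0 ≤ (T:ℝ)*((2-2*α)*((m:ℝ)+1)*ε) := mul_nonneg (by positivity) hfac0
    linarith
  have hDub : D ≤ 3*((m:ℝ)+1)*Real.sqrt T := by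
    have hD' : D = (m:ℝ)^(1-α) + (2-2*α)*((m:ℝ)+1)*((T:ℝ)*ε) := by rw [hD]; ring
    have e3 : (2-2*α)*((m:ℝ)+1)*((T:ℝ)*ε) ≤ 2*((m:ℝ)+1)*Real.sqrt T := by
      apply mul_le_mul (mul_le_mul_of_nonneg_right (by linarith : (2-2*α) ≤ 2)
        (by positivity : (0:ℝ) ≤ (m:ℝ)+1)) hTε (mul_nonneg (by positivity) hεpos.le)
        (by positivity)
    have e4 : (m:ℝ) ≤ ((m:ℝ)+1)*Real.sqrt T := by
      have h := mul_le_mul_of_nonneg_left hsq1 (by positivity : (0:ℝ) ≤ (m:ℝ)+1)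
      rw [mul_one] at h
      linarith
    linarith [hmα, hD', e3, e4]
  -- main smallness
  have hrs0 : 0 ≤ (Real.sqrt T)^s := Real.rpow_nonneg hsqT.le _
  have hC : ε * D^s ≤ 1/8 := by
    have k1 : D^s ≤ (3*((m:ℝ)+1))^s * (Real.sqrt T)^s := by
      rw [← Real.mul_rpow (by positivity) hsqT.le]
      exact Real.rpow_le_rpow hDpos.le hDub hs0
    have k1b : (3*((m:ℝ)+1))^s ≤ 3*((m:ℝ)+1) := by
      calc (3*((m:ℝ)+1))^s ≤ (3*((m:ℝ)+1))^(1:ℝ) :=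
            Real.rpow_le_rpow_of_exponent_le (by linarith) hs1
      _ = 3*((m:ℝ)+1) := Real.rpow_one _
    have k2 : 24*((m:ℝ)+1) ≤ (Real.sqrt T)^ρ := by
      have hM₁M : M₁ ≤ M := by rw [hM]; exact le_trans (le_max_left _ _) (le_max_right _ _)
      calc 24*((m:ℝ)+1) = ((24*((m:ℝ)+1))^(1/ρ))^ρ := by
            rw [← Real.rpow_mul (by positivity), one_div_mul_cancel (ne_of_gt hρpos),
              Real.rpow_one]
      _ = M₁^ρ := by rw [hM₁]
      _ ≤ (Real.sqrt T)^ρ := Real.rpow_le_rpow hM₁0 (by linarith) hρpos.le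
    have k3 : (Real.sqrt T)^s * (Real.sqrt T)^ρ = Real.sqrt T := by
      rw [← Real.rpow_add hsqT, hsρ, Real.rpow_one]
    have k4 : 8*(3*((m:ℝ)+1)*(Real.sqrt T)^s) ≤ Real.sqrt T := by
      calc 8*(3*((m:ℝ)+1)*(Real.sqrt T)^s) = (24*((m:ℝ)+1))*(Real.sqrt T)^s := by ring
      _ ≤ (Real.sqrt T)^ρ * (Real.sqrt T)^s := mul_le_mul_of_nonneg_right k2 hrs0
      _ = Real.sqrt T := by rw [mul_comm]; exact k3
    have k5 : D^s ≤ 3*((m:ℝ)+1)*(Real.sqrt T)^s :=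
      le_trans k1 (mul_le_mul_of_nonneg_right k1b hrs0)
    calc ε*D^s ≤ (1/Real.sqrt T)*(3*((m:ℝ)+1)*(Real.sqrt T)^s) := by
          apply mul_le_mul hεle k5 (Real.rpow_nonneg hDpos.le _) (by positivity)
    _ = (3*((m:ℝ)+1)*(Real.sqrt T)^s)/Real.sqrt T := by ring
    _ ≤ 1/8 := by
        rw [div_le_div_iff₀ hsqT (by norm_num : (0:ℝ) < 8)]
        linarith [k4]
  have hC2 : k*ε < σ := by
    have hM₂M : M₂ ≤ M := by rw [hM]; exact le_trans (le_max_right _ _) (le_max_right _ _)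
    have h1 : k/σ < Real.sqrt T := by
      have : M₂ < Real.sqrt T := lt_of_le_of_lt hM₂M hMsq
      rw [hM₂] at this; linarith
    have hkσ : k < σ*Real.sqrt T := by
      rw [div_lt_iff₀ hσpos] at h1; linarith [h1]
    calc k*ε ≤ k*(1/Real.sqrt T) := mul_le_mul_of_nonneg_left hεle hkpos.le
    _ = k/Real.sqrt T := by ring
    _ < σ := by rw [div_lt_iff₀ hsqT]; linarith
  -- one step of the analysis
  have stepAll : ∀ t, t < T → (∀ i, 0 < w t i) → (∑ i, w t i = 1) →
      (∀ i, (w t i)^(α-1) ≤ (m:ℝ)^(1-α) + (t:ℝ)*((2-2*α)*((m:ℝ)+1)*ε)) →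
      ((∀ i, (w (t+1) i)^(α-1) ≤ (w t i)^(α-1) + (2-2*α)*((m:ℝ)+1)*ε) ∧
       (∀ i, -(32*(w t i)^(1-α)*ε) ≤ w t i - w (t+1) i ∧
         w t i - w (t+1) i ≤ 2*(w t i)^(2-α)*((m:ℝ)+1)*ε)) := by
    intro t htT hpos hsum hbnd
    obtain ⟨hsimp, hpos', c, hc⟩ := hup t htT
    have hsum' : ∑ i, w (t+1) i = 1 := hsimp.2
    have hsmall_t : ∀ i, ε*(w t i)^(-α) ≤ 1/8 := by
      intro i
      have hb : (w t i)^(α-1) ≤ D := by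
        have h1 : (t:ℝ)*((2-2*α)*((m:ℝ)+1)*ε) ≤ (T:ℝ)*((2-2*α)*((m:ℝ)+1)*ε) :=
          mul_le_mul_of_nonneg_right (by exact_mod_cast htT.le) hfac0
        rw [hD]; linarith [hbnd i]
      have hxnegα : (w t i)^(-α) = ((w t i)^(α-1))^s := by
        rw [← Real.rpow_mul (hpos i).le,
          show (α-1)*s = -α by rw [hsdef]; field_simp; ring]
      calc ε*(w t i)^(-α) = ε*((w t i)^(α-1))^s := by rw [hxnegα]
      _ ≤ ε*D^s := mul_le_mul_of_nonneg_left
            (Real.rpow_le_rpow (Real.rpow_nonneg (hpos i).le _) hb hs0) hεpos.le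
      _ ≤ 1/8 := hC
    have hGlb : ∀ i, -(ε/(w t i)) ≤ η * g t i := by
      intro i
      have h1 := (hg t htT i).1
      have h2 : η*(-γ/(w t i)) ≤ η*(g t i) := mul_le_mul_of_nonneg_left h1 hηpos.le
      have h3 : η*(-γ/(w t i)) = -(ε/(w t i)) := by rw [hεdef]; ring
      linarith
    have hGub : ∀ i, η * g t i ≤ ε := by
      intro i
      have h1 := (hg t htT i).2
      have h2 : η*(g t i) ≤ η*γ := mul_le_mul_of_nonneg_left h1 hηpos.le
      rw [hεdef]; linarith
    have hsm2 : 16*(m:ℝ)^2*(((m:ℝ)+(1-2*α)*((m:ℝ)+1))^2+1)*ε < (1-2*α)*((m:ℝ)+1) := by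
      rw [← hσ, ← hk]; exact hC2
    exact step_main hm hα0 hα2 hεpos (w t) (w (t+1)) (fun i => η * g t i) c
      hpos hsum hpos' hsum' hc hGlb hGub hsmall_t hsm2
  -- invariant by induction
  have inv : ∀ t, t ≤ T → (∀ i, 0 < w t i) ∧ (∑ i, w t i = 1) ∧
      (∀ i, (w t i)^(α-1) ≤ (m:ℝ)^(1-α) + (t:ℝ)*((2-2*α)*((m:ℝ)+1)*ε)) := by
    intro t
    induction t with
    | zero =>
      intro _
      have hm0 : ((m:ℕ):ℝ) ≠ 0 := by positivity
      refine ⟨?_, ?_, ?_⟩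
      · intro i; simp only [hw0]; positivity
      · simp only [hw0]
        rw [Finset.sum_const, Finset.card_univ, Fintype.card_fin, nsmul_eq_mul]
        exact mul_inv_cancel₀ hm0
      · intro i
        simp only [hw0]
        rw [Real.inv_rpow (by positivity : (0:ℝ) ≤ (m:ℝ)), ← Real.rpow_neg (by positivity),
          show -(α-1) = 1-α by ring]
        push_cast
        linarith [hfac0]
    | succ t ih =>
      intro ht
      have htT : t < T := by omega
      obtain ⟨p1, p2, p3⟩ := ih (by omega)
      obtain ⟨q1, _⟩ := stepAll t htT p1 p2 p3
      obtain ⟨hsimp, hpos', c, hc⟩ := hup t htT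
      refine ⟨hpos', hsimp.2, ?_⟩
      intro i
      have h1 := q1 i
      have h2 := p3 i
      push_cast
      linarith [h1, h2]
  -- conclude
  intro t htT i
  obtain ⟨p1, p2, p3⟩ := inv t htT.le
  obtain ⟨_, q2⟩ := stepAll t htT p1 p2 p3
  obtain ⟨l1, l2⟩ := q2 i
  constructor
  · calc -32 * (w t i)^(1-α) * η * γ = -(32*(w t i)^(1-α)*ε) := by rw [hεdef]; ring
    _ ≤ w t i - w (t+1) i := l1
  · calc w t i - w (t+1) i ≤ 2*(w t i)^(2-α)*((m:ℝ)+1)*ε := l2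
    _ = 2 * (w t i)^(2-α) * ((m:ℝ)+1) * η * γ := by rw [hεdef]; ring
end

section
/- Fix α ∈ (0, 1/2) and positive integers m, n. There exists T₀ (depending on m, n, α) such that for all integers T ≥ T₀ the following holds. Set γ = 12 n ln T and η = 1/(12 m^{(1+α)/2} n √T ln T). Let w^1 = (1/m, …, 1/m), and suppose for each t ∈ [T]: g^t ∈ ℝ^m satisfies −γ/w^t_i ≤ g^t_i ≤ γ for all i (the small gradient assumption), and w^{t+1} ∈ Δ^m has strictly positive coordinates and satisfies, for some constant c_t ∈ ℝ, (w^{t+1}_i)^{α−1} = (w^t_i)^{α−1} + η g^t_i − c_t for all i. Define, for t ∈ {0, 1, …, T}, φ(t) = ∑_{s=1}^t g^s · (w^s − w^{s+1}) + 19 m² γ² η (T − t) − 4 γ ∑_{i=1}^m ln w^{t+1}_i. Then φ(t) ≤ φ(t−1) for every t ∈ [T]. -/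
open Finset


/-- Bernoulli for exponents `-β ≤ -1`: tangent line at 1 lies below `t^(-β)`. -/
lemma bern_neg_exp {β t : ℝ} (hβ : 1 ≤ β) (ht : 0 < t) : 1 - β * (t - 1) ≤ t ^ (-β) := by
  have h1 : (0:ℝ) < 1/t := by positivity
  have h := one_add_mul_self_le_rpow_one_add (s := 1/t - 1) (by linarith) hβ
  have h2 : (1 + (1/t - 1)) ^ β = t ^ (-β) := by
    rw [show 1 + (1/t - 1) = t⁻¹ by ring, Real.inv_rpow ht.le, ← Real.rpow_neg ht.le]
  have hkey : 1/t - 1 + (t - 1) = (t-1)^2/t := by field_simp; ring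
  have h3 : 1 - β * (t - 1) ≤ 1 + β * (1/t - 1) := by
    nlinarith [div_nonneg (sq_nonneg (t-1)) ht.le, sq_nonneg (t-1)]
  calc 1 - β * (t-1) ≤ 1 + β * (1/t - 1) := h3
    _ ≤ (1 + (1/t - 1)) ^ β := h
    _ = t ^ (-β) := h2

/-- Tangent-line inequality for the convex function `z ↦ z^s`, `s ≤ -1`. -/
lemma tangent_neg {s a b : ℝ} (hs2 : s ≤ -1) (ha : 0 < a) (hb : 0 < b) :
    a ^ s + s * (a ^ s / a) * (b - a) ≤ b ^ s := by
  have hβ : 1 ≤ -s := by linarith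
  have h := bern_neg_exp hβ (div_pos hb ha)
  rw [neg_neg] at h
  have hd : (b / a) ^ s = b ^ s / a ^ s := Real.div_rpow hb.le ha.le s
  have has : 0 < a ^ s := Real.rpow_pos_of_pos ha s
  rw [hd] at h
  have h2 := (mul_le_mul_of_nonneg_left h has.le)
  calc a ^ s + s * (a ^ s / a) * (b - a) = a ^ s * (1 - (-s) * (b / a - 1)) := by
        field_simp; ring
    _ ≤ a ^ s * (b ^ s / a ^ s) := h2
    _ = b ^ s := by field_simp

/-- Tangent-line inequality for convex `z ↦ z^q`, `q ≥ 1`, at `θ > 0`, for `z ≥ 0`. -/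
lemma tangent_pos {q z θ : ℝ} (hq : 1 ≤ q) (hz : 0 ≤ z) (hθ : 0 < θ) :
    θ ^ q + q * θ ^ (q - 1) * (z - θ) ≤ z ^ q := by
  have h := one_add_mul_self_le_rpow_one_add (s := z/θ - 1) (by
    have : 0 ≤ z/θ := div_nonneg hz hθ.le
    linarith) hq
  have hd : (1 + (z/θ - 1)) ^ q = z ^ q / θ ^ q := by
    rw [show 1 + (z/θ - 1) = z/θ by ring, Real.div_rpow hz hθ.le]
  rw [hd] at h
  have hθq : 0 < θ ^ q := Real.rpow_pos_of_pos hθ q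
  have h2 := mul_le_mul_of_nonneg_left h hθq.le
  have hθ1 : θ ^ (q - 1) = θ ^ q / θ := by
    rw [Real.rpow_sub hθ, Real.rpow_one]
  calc θ ^ q + q * θ ^ (q-1) * (z - θ) = θ ^ q * (1 + q * (z/θ - 1)) := by
        rw [hθ1]; field_simp
    _ ≤ θ ^ q * (z ^ q / θ ^ q) := h2
    _ = z ^ q := by field_simp

/-- Tangent-line inequality for concave `z ↦ z^p`, `0 ≤ p ≤ 1`. -/
lemma tangent_concave {p z θ : ℝ} (hp0 : 0 ≤ p) (hp1 : p ≤ 1) (hz : 0 ≤ z) (hθ : 0 < θ) :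
    z ^ p ≤ θ ^ p + p * θ ^ (p - 1) * (z - θ) := by
  have h := rpow_one_add_le_one_add_mul_self (s := z/θ - 1) (by
    have : 0 ≤ z/θ := div_nonneg hz hθ.le
    linarith) hp0 hp1
  have hd : (1 + (z/θ - 1)) ^ p = z ^ p / θ ^ p := by
    rw [show 1 + (z/θ - 1) = z/θ by ring, Real.div_rpow hz hθ.le]
  rw [hd] at h
  have hθp : 0 < θ ^ p := Real.rpow_pos_of_pos hθ p
  have h2 := mul_le_mul_of_nonneg_left h hθp.le
  have hθ1 : θ ^ (p - 1) = θ ^ p / θ := by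
    rw [Real.rpow_sub hθ, Real.rpow_one]
  calc z ^ p = θ ^ p * (z ^ p / θ ^ p) := by field_simp
    _ ≤ θ ^ p * (1 + p * (z/θ - 1)) := h2
    _ = θ ^ p + p * θ ^ (p-1) * (z - θ) := by rw [hθ1]; field_simp

/-- `∑ yᵢ^q ≥ m^(1-q)` for `q ≥ 1` on the simplex. -/
lemma sum_rpow_ge {m : ℕ} (hm : 0 < m) {q : ℝ} (hq : 1 ≤ q) (y : Fin m → ℝ)
    (hy : ∀ i, 0 ≤ y i) (hys : ∑ i, y i = 1) : (m:ℝ) ^ (1 - q) ≤ ∑ i, y i ^ q := by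
  have hmR : (0:ℝ) < m := by exact_mod_cast hm
  have hθ : (0:ℝ) < (m:ℝ)⁻¹ := by positivity
  have hsum : ∑ i, (((m:ℝ)⁻¹) ^ q + q * ((m:ℝ)⁻¹) ^ (q-1) * (y i - (m:ℝ)⁻¹))
      ≤ ∑ i, y i ^ q :=
    Finset.sum_le_sum (fun i _ => tangent_pos hq (hy i) hθ)
  have hcard : ∑ _i : Fin m, ((m:ℝ)⁻¹) ^ q = m * ((m:ℝ)⁻¹) ^ q := by
    rw [Finset.sum_const, card_univ, Fintype.card_fin, nsmul_eq_mul]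
  have hlin : ∑ i, (((m:ℝ)⁻¹) ^ q + q * ((m:ℝ)⁻¹) ^ (q-1) * (y i - (m:ℝ)⁻¹))
      = m * ((m:ℝ)⁻¹) ^ q + q * ((m:ℝ)⁻¹) ^ (q-1) * (1 - m * (m:ℝ)⁻¹) := by
    rw [Finset.sum_add_distrib, hcard, ← Finset.mul_sum, Finset.sum_sub_distrib, hys,
      Finset.sum_const, card_univ, Fintype.card_fin, nsmul_eq_mul]
  rw [hlin] at hsum
  have hmm : (m:ℝ) * (m:ℝ)⁻¹ = 1 := by field_simp
  rw [hmm] at hsum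
  have heq : (m:ℝ) * ((m:ℝ)⁻¹) ^ q = (m:ℝ) ^ (1 - q) := by
    rw [Real.inv_rpow hmR.le, Real.rpow_sub hmR, Real.rpow_one, div_eq_mul_inv]
  rw [heq] at hsum
  simpa using hsum

/-- `∑ xᵢ^p ≤ m^(1-p)` for `0 ≤ p ≤ 1` on the simplex. -/
lemma sum_rpow_le {m : ℕ} (hm : 0 < m) {p : ℝ} (hp0 : 0 ≤ p) (hp1 : p ≤ 1) (x : Fin m → ℝ)
    (hx : ∀ i, 0 ≤ x i) (hxs : ∑ i, x i = 1) : ∑ i, x i ^ p ≤ (m:ℝ) ^ (1 - p) := by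
  have hmR : (0:ℝ) < m := by exact_mod_cast hm
  have hθ : (0:ℝ) < (m:ℝ)⁻¹ := by positivity
  have hsum : ∑ i, x i ^ p
      ≤ ∑ i, (((m:ℝ)⁻¹) ^ p + p * ((m:ℝ)⁻¹) ^ (p-1) * (x i - (m:ℝ)⁻¹)) :=
    Finset.sum_le_sum (fun i _ => tangent_concave hp0 hp1 (hx i) hθ)
  have hcard : ∑ _i : Fin m, ((m:ℝ)⁻¹) ^ p = m * ((m:ℝ)⁻¹) ^ p := by
    rw [Finset.sum_const, card_univ, Fintype.card_fin, nsmul_eq_mul]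
  have hlin : ∑ i, (((m:ℝ)⁻¹) ^ p + p * ((m:ℝ)⁻¹) ^ (p-1) * (x i - (m:ℝ)⁻¹))
      = m * ((m:ℝ)⁻¹) ^ p + p * ((m:ℝ)⁻¹) ^ (p-1) * (1 - m * (m:ℝ)⁻¹) := by
    rw [Finset.sum_add_distrib, hcard, ← Finset.mul_sum, Finset.sum_sub_distrib, hxs,
      Finset.sum_const, card_univ, Fintype.card_fin, nsmul_eq_mul]
  rw [hlin] at hsum
  have hmm : (m:ℝ) * (m:ℝ)⁻¹ = 1 := by field_simp
  rw [hmm] at hsum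
  have heq : (m:ℝ) * ((m:ℝ)⁻¹) ^ p = (m:ℝ) ^ (1 - p) := by
    rw [Real.inv_rpow hmR.le, Real.rpow_sub hmR, Real.rpow_one, div_eq_mul_inv]
  rw [heq] at hsum
  simpa using hsum

set_option maxHeartbeats 2000000 in
lemma step_main_s6 {m : ℕ} (hm : 0 < m) {α γ η c : ℝ} (hα1 : 0 < α) (hα2 : α < 1/2)
    (hγ : 0 < γ) (hη : 0 < η) (x y g : Fin m → ℝ)
    (hx : ∀ i, 0 < x i) (hxs : ∑ i, x i = 1)
    (hy : ∀ i, 0 < y i) (hys : ∑ i, y i = 1)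
    (hg : ∀ i, -γ / x i ≤ g i ∧ g i ≤ γ)
    (hup : ∀ i, y i ^ (α-1) = x i ^ (α-1) + η * g i - c)
    (hinv : ∀ i, 30 * (η*γ) ≤ x i ^ α) :
    (∀ i, y i ^ (α-1) ≤ x i ^ (α-1) + 3*m*(η*γ)) ∧
    (2 ≤ m → ∑ i, g i * (x i - y i)
        + 4*γ*(∑ i, Real.log (x i) - ∑ i, Real.log (y i)) ≤ 19*m^2*γ^2*η) := by
  have hmR : (1:ℝ) ≤ m := by exact_mod_cast hm
  have hα1' : α - 1 < 0 := by linarith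
  have hαne : α - 1 ≠ 0 := ne_of_lt hα1'
  have h1α : (0:ℝ) < 1 - α := by linarith
  set s : ℝ := 1/(α-1) with hs_def
  have hs_mul : s * (α - 1) = 1 := one_div_mul_cancel hαne
  have hs_neg : s < 0 := by
    rcases lt_trichotomy s 0 with h|h|h
    · exact h
    · exfalso; rw [h] at hs_mul; simp at hs_mul
    · exfalso; nlinarith
  have hs2 : s ≤ -1 := by nlinarith
  have hs1 : -2 ≤ s := by nlinarith
  have ha : ∀ i, (0:ℝ) < x i ^ (α-1) := fun i => Real.rpow_pos_of_pos (hx i) _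
  have hb : ∀ i, (0:ℝ) < y i ^ (α-1) := fun i => Real.rpow_pos_of_pos (hy i) _
  have hxa_raw : ∀ i, (x i ^ (α-1)) ^ s = x i := by
    intro i
    rw [hs_def, ← Real.rpow_mul (hx i).le, mul_one_div_cancel hαne, Real.rpow_one]
  have hyb_raw : ∀ i, (y i ^ (α-1)) ^ s = y i := by
    intro i
    rw [hs_def, ← Real.rpow_mul (hy i).le, mul_one_div_cancel hαne, Real.rpow_one]
  have hxα_raw : ∀ i, x i ^ α = x i * x i ^ (α-1) := by
    intro i
    have h : x i ^ ((1:ℝ) + (α-1)) = x i ^ (1:ℝ) * x i ^ (α-1) := Real.rpow_add (hx i) 1 (α-1)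
    rw [Real.rpow_one] at h
    rw [show α = (1:ℝ) + (α-1) by ring, h]
    norm_num
  have hyβ_raw : ∀ i, y i / y i ^ (α-1) = y i ^ ((2:ℝ)-α) := by
    intro i
    have h : y i ^ ((1:ℝ) + (1-α)) = y i ^ (1:ℝ) * y i ^ (1-α) := Real.rpow_add (hy i) 1 (1-α)
    rw [Real.rpow_one] at h
    have h2 : y i ^ ((1:ℝ)-α) = (y i ^ (α-1))⁻¹ := by
      rw [show (1:ℝ)-α = -(α-1) by ring, Real.rpow_neg (hy i).le]
    rw [show (2:ℝ)-α = (1:ℝ) + (1-α) by ring, h, h2, div_eq_mul_inv]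
  have hx1 : ∀ i, x i ≤ 1 := by
    intro i
    calc x i ≤ ∑ j, x j := Finset.single_le_sum (fun j _ => (hx j).le) (mem_univ i)
      _ = 1 := hxs
  have hy1 : ∀ i, y i ≤ 1 := by
    intro i
    calc y i ≤ ∑ j, y j := Finset.single_le_sum (fun j _ => (hy j).le) (mem_univ i)
      _ = 1 := hys
  have ha1 : ∀ i, (1:ℝ) ≤ x i ^ (α-1) := fun i =>
    Real.one_le_rpow_of_pos_of_le_one_of_nonpos (hx i) (hx1 i) hα1'.le
  -- tangent inequalities
  have T1 : ∀ i, x i + s * (x i / x i ^ (α-1)) * (η * g i - c) ≤ y i := by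
    intro i
    have h := tangent_neg hs2 (ha i) (hb i)
    rw [hxa_raw i, hyb_raw i] at h
    have h2 : y i ^ (α-1) - x i ^ (α-1) = η * g i - c := by rw [hup i]; ring
    rwa [h2] at h
  have T2 : ∀ i, y i - s * (y i / y i ^ (α-1)) * (η * g i - c) ≤ x i := by
    intro i
    have h := tangent_neg hs2 (hb i) (ha i)
    rw [hxa_raw i, hyb_raw i] at h
    have h2 : x i ^ (α-1) - y i ^ (α-1) = -(η * g i - c) := by rw [hup i]; ring
    rw [h2] at h
    linarith [h]
  -- c ≤ ηγ
  have c_le : c ≤ η * γ := by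
    have hsum1 : ∑ i, (x i + s * (x i / x i ^ (α-1)) * (η * g i - c)) ≤ ∑ i, y i :=
      Finset.sum_le_sum (fun i _ => T1 i)
    rw [Finset.sum_add_distrib, hxs, hys] at hsum1
    have hS : 0 ≤ ∑ i, (x i / x i ^ (α-1)) * (η * g i - c) := by
      have h1 : s * ∑ i, (x i / x i ^ (α-1)) * (η * g i - c) ≤ 0 := by
        rw [Finset.mul_sum]
        have h2 : ∑ i, s * ((x i / x i ^ (α-1)) * (η * g i - c))
            = ∑ i, s * (x i / x i ^ (α-1)) * (η * g i - c) := by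
          apply Finset.sum_congr rfl; intro i _; ring
        rw [h2]; linarith
      rcases le_or_gt 0 (∑ i, (x i / x i ^ (α-1)) * (η * g i - c)) with h|h
      · exact h
      · exfalso
        have h2 := mul_pos (neg_pos.mpr hs_neg) (neg_pos.mpr h)
        rw [neg_mul_neg] at h2
        linarith
    have hS2 : ∑ i, (x i / x i ^ (α-1)) * (η * g i - c)
        ≤ ∑ i, (x i / x i ^ (α-1)) * (η * γ - c) := by
      apply Finset.sum_le_sum
      intro i _
      apply mul_le_mul_of_nonneg_left _ (div_pos (hx i) (ha i)).le
      have := (hg i).2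
      nlinarith
    have hP : 0 < ∑ i, x i / x i ^ (α-1) :=
      Finset.sum_pos (fun i _ => div_pos (hx i) (ha i))
        (univ_nonempty_iff.mpr (Fin.pos_iff_nonempty.mp hm))
    rw [← Finset.sum_mul] at hS2
    nlinarith
  -- lower bound on the update increment via the invariant
  have hδ_lb : ∀ i, -(x i ^ (α-1) / 15) ≤ η * g i - c := by
    intro i
    have hga := (hg i).1
    have hηg : -(η * γ / x i) ≤ η * g i := by
      have h := mul_le_mul_of_nonneg_left hga hη.le
      calc -(η * γ / x i) = η * (-γ / x i) := by ring
        _ ≤ η * g i := h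
    have hiv : 30 * (η * γ) ≤ x i * x i ^ (α-1) := by
      have := hinv i
      rwa [hxα_raw i] at this
    have hxpos := hx i
    have hx1i := hx1 i
    have hd : η * γ / x i * x i = η * γ := div_mul_cancel₀ _ (ne_of_gt hxpos)
    have hDpos : 0 < η * γ / x i := div_pos (mul_pos hη hγ) hxpos
    have h30 : 30 * (η * γ / x i) ≤ x i ^ (α-1) := by nlinarith
    have hηγD : η * γ ≤ η * γ / x i := by nlinarith
    nlinarith
  have hba : ∀ i, 14/15 * x i ^ (α-1) ≤ y i ^ (α-1) := by
    intro i
    have h := hδ_lb i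
    rw [hup i]
    linarith
  -- ratio bound y ≤ (225/196) x
  have hyx : ∀ i, y i ≤ 225/196 * x i := by
    intro i
    have h1 : (y i ^ (α-1)) ^ s ≤ ((14:ℝ)/15 * x i ^ (α-1)) ^ s :=
      Real.rpow_le_rpow_of_nonpos (mul_pos (by norm_num) (ha i)) (hba i) hs_neg.le
    have h2 : ((14:ℝ)/15 * x i ^ (α-1)) ^ s = ((14:ℝ)/15) ^ s * (x i ^ (α-1)) ^ s :=
      Real.mul_rpow (by norm_num) (ha i).le
    have h3 : ((14:ℝ)/15) ^ s ≤ ((14:ℝ)/15) ^ (-2:ℝ) :=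
      Real.rpow_le_rpow_of_exponent_ge (by norm_num) (by norm_num) hs1
    have h4 : ((14:ℝ)/15) ^ (-2:ℝ) = 225/196 := by
      rw [show (-2:ℝ) = ((-2:ℤ):ℝ) by norm_num, Real.rpow_intCast]
      norm_num
    have h6 : ((14:ℝ)/15) ^ s ≤ 225/196 := by rw [← h4]; exact h3
    calc y i = (y i ^ (α-1)) ^ s := (hyb_raw i).symm
      _ ≤ ((14:ℝ)/15 * x i ^ (α-1)) ^ s := h1
      _ = ((14:ℝ)/15) ^ s * (x i ^ (α-1)) ^ s := h2
      _ = ((14:ℝ)/15) ^ s * x i := by rw [hxa_raw i]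
      _ ≤ 225/196 * x i := mul_le_mul_of_nonneg_right h6 (hx i).le
  -- lower bound on c
  have c_ge : -(27/20 * m * (η * γ)) ≤ c := by
    rcases le_or_gt 0 c with h|hcneg
    · have : (0:ℝ) ≤ 27/20 * m * (η * γ) := by positivity
      linarith
    -- sum of T2
    have hsum2 : ∑ i, (y i - s * (y i / y i ^ (α-1)) * (η * g i - c)) ≤ ∑ i, x i :=
      Finset.sum_le_sum (fun i _ => T2 i)
    rw [Finset.sum_sub_distrib, hxs, hys] at hsum2
    have hS : ∑ i, (y i / y i ^ (α-1)) * (η * g i - c) ≤ 0 := by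
      have h1 : 0 ≤ s * ∑ i, (y i / y i ^ (α-1)) * (η * g i - c) := by
        rw [Finset.mul_sum]
        have h2 : ∑ i, s * ((y i / y i ^ (α-1)) * (η * g i - c))
            = ∑ i, s * (y i / y i ^ (α-1)) * (η * g i - c) := by
          apply Finset.sum_congr rfl; intro i _; ring
        rw [h2]; linarith
      rcases le_or_gt (∑ i, (y i / y i ^ (α-1)) * (η * g i - c)) 0 with h|h
      · exact h
      · exfalso
        have h2 := mul_pos (neg_pos.mpr hs_neg) h
        rw [neg_mul] at h2
        linarith
    -- rewrite y/b as rpow and bound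
    have hS' : ∑ i, (y i ^ ((2:ℝ)-α)) * (η * g i) - c * ∑ i, y i ^ ((2:ℝ)-α) ≤ 0 := by
      have h2 : ∑ i, (y i / y i ^ (α-1)) * (η * g i - c)
          = ∑ i, ((y i ^ ((2:ℝ)-α)) * (η * g i) - c * (y i ^ ((2:ℝ)-α))) := by
        apply Finset.sum_congr rfl
        intro i _
        rw [← hyβ_raw i]
        ring
      rw [h2, Finset.sum_sub_distrib, ← Finset.mul_sum] at hS
      exact hS
    have hglb : ∀ i, -(γ * (27/20 * x i ^ ((1:ℝ)-α))) ≤ (y i ^ ((2:ℝ)-α)) * g i := by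
      intro i
      have hyp : (0:ℝ) < y i ^ ((2:ℝ)-α) := Real.rpow_pos_of_pos (hy i) _
      have hgi := (hg i).1
      have h1 : (y i ^ ((2:ℝ)-α)) * (-γ / x i) ≤ (y i ^ ((2:ℝ)-α)) * g i :=
        mul_le_mul_of_nonneg_left hgi hyp.le
      have h2 : y i ^ ((2:ℝ)-α) ≤ (225/196 * x i) ^ ((2:ℝ)-α) :=
        Real.rpow_le_rpow (hy i).le (hyx i) (by linarith)
      have h3 : ((225:ℝ)/196 * x i) ^ ((2:ℝ)-α)
          = ((225:ℝ)/196) ^ ((2:ℝ)-α) * x i ^ ((2:ℝ)-α) :=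
        Real.mul_rpow (by norm_num) (hx i).le
      have h4 : ((225:ℝ)/196) ^ ((2:ℝ)-α) ≤ ((225:ℝ)/196) ^ (2:ℝ) :=
        Real.rpow_le_rpow_of_exponent_le (by norm_num) (by linarith)
      have h5 : ((225:ℝ)/196) ^ (2:ℝ) ≤ 27/20 := by
        rw [show (2:ℝ) = ((2:ℕ):ℝ) by norm_num, Real.rpow_natCast]
        norm_num
      have h6 : x i ^ ((2:ℝ)-α) = x i * x i ^ ((1:ℝ)-α) := by
        have h : x i ^ ((1:ℝ) + (1-α)) = x i ^ (1:ℝ) * x i ^ (1-α) :=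
          Real.rpow_add (hx i) 1 (1-α)
        rw [Real.rpow_one] at h
        rw [show (2:ℝ)-α = (1:ℝ) + (1-α) by ring, h]
      have hxp1 : (0:ℝ) < x i ^ ((1:ℝ)-α) := Real.rpow_pos_of_pos (hx i) _
      have hyd : y i ^ ((2:ℝ)-α) / x i ≤ 27/20 * x i ^ ((1:ℝ)-α) := by
        rw [div_le_iff₀ (hx i)]
        calc y i ^ ((2:ℝ)-α) ≤ ((225:ℝ)/196) ^ ((2:ℝ)-α) * x i ^ ((2:ℝ)-α) := by
              rw [← h3]; exact h2
          _ ≤ 27/20 * x i ^ ((2:ℝ)-α) := by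
              apply mul_le_mul_of_nonneg_right (h4.trans h5)
              exact (Real.rpow_pos_of_pos (hx i) _).le
          _ = 27/20 * x i ^ ((1:ℝ)-α) * x i := by rw [h6]; ring
      calc -(γ * (27/20 * x i ^ ((1:ℝ)-α))) ≤ -(γ * (y i ^ ((2:ℝ)-α) / x i)) := by
            have := mul_le_mul_of_nonneg_left hyd hγ.le
            linarith
        _ = (y i ^ ((2:ℝ)-α)) * (-γ / x i) := by field_simp
        _ ≤ (y i ^ ((2:ℝ)-α)) * g i := h1
    -- sum the lower bounds
    have h7 : ∀ i, -(27/20 * (η*γ) * x i ^ ((1:ℝ)-α)) ≤ (y i ^ ((2:ℝ)-α)) * (η * g i) := by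
      intro i
      calc -(27/20 * (η*γ) * x i ^ ((1:ℝ)-α))
          = η * (-(γ * (27/20 * x i ^ ((1:ℝ)-α)))) := by ring
        _ ≤ η * ((y i ^ ((2:ℝ)-α)) * g i) := mul_le_mul_of_nonneg_left (hglb i) hη.le
        _ = (y i ^ ((2:ℝ)-α)) * (η * g i) := by ring
    have h8 : -(27/20 * (η*γ) * ∑ i, x i ^ ((1:ℝ)-α)) ≤ ∑ i, (y i ^ ((2:ℝ)-α)) * (η * g i) := by
      have hh := Finset.sum_le_sum (fun i (_ : i ∈ univ) => h7 i)
      have e : ∑ i, -(27/20 * (η*γ) * x i ^ ((1:ℝ)-α))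
          = -(27/20 * (η*γ) * ∑ i, x i ^ ((1:ℝ)-α)) := by
        rw [Finset.sum_neg_distrib, Finset.mul_sum]
      rw [e] at hh
      exact hh
    have hm0 : (0:ℝ) < m := by linarith
    have hJa : ∑ i, x i ^ ((1:ℝ)-α) ≤ (m:ℝ) ^ α := by
      have h := sum_rpow_le hm (p := 1-α) (by linarith) (by linarith) x
        (fun i => (hx i).le) hxs
      rwa [show (1:ℝ) - (1-α) = α by ring] at h
    have hJb : (m:ℝ) ^ (α-1) ≤ ∑ i, y i ^ ((2:ℝ)-α) := by
      have h := sum_rpow_ge hm (q := 2-α) (by linarith) y (fun i => (hy i).le) hys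
      rwa [show (1:ℝ) - (2-α) = α-1 by ring] at h
    have hmα : (m:ℝ) ^ α = m * (m:ℝ) ^ (α-1) := by
      have h : (m:ℝ) ^ ((1:ℝ) + (α-1)) = (m:ℝ) ^ (1:ℝ) * (m:ℝ) ^ (α-1) :=
        Real.rpow_add hm0 1 (α-1)
      rw [Real.rpow_one] at h
      calc (m:ℝ) ^ α = (m:ℝ) ^ ((1:ℝ) + (α-1)) := by congr 1; ring
        _ = m * (m:ℝ) ^ (α-1) := h
    have hP : (0:ℝ) < (m:ℝ) ^ (α-1) := Real.rpow_pos_of_pos hm0 _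
    have h9 : -(27/20 * (η*γ) * (m:ℝ) ^ α) ≤ c * ∑ i, y i ^ ((2:ℝ)-α) := by
      have h10 : -(27/20 * (η*γ) * (m:ℝ) ^ α) ≤ -(27/20 * (η*γ) * ∑ i, x i ^ ((1:ℝ)-α)) := by
        have : (0:ℝ) ≤ 27/20 * (η*γ) := by positivity
        nlinarith [hJa]
      linarith [h8, hS']
    have h11 : c * ∑ i, y i ^ ((2:ℝ)-α) ≤ c * (m:ℝ) ^ (α-1) :=
      mul_le_mul_of_nonpos_left hJb hcneg.le
    have h12 : (-(27/20 * m * (η*γ))) * (m:ℝ) ^ (α-1) ≤ c * (m:ℝ) ^ (α-1) := by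
      calc (-(27/20 * m * (η*γ))) * (m:ℝ) ^ (α-1)
          = -(27/20 * (η*γ) * (m * (m:ℝ) ^ (α-1))) := by ring
        _ = -(27/20 * (η*γ) * (m:ℝ) ^ α) := by rw [← hmα]
        _ ≤ c * ∑ i, y i ^ ((2:ℝ)-α) := h9
        _ ≤ c * (m:ℝ) ^ (α-1) := h11
    exact le_of_mul_le_mul_right h12 hP
  -- Conclusion A and B
  constructor
  · intro i
    rw [hup i]
    have h1 : η * g i ≤ η * γ := mul_le_mul_of_nonneg_left (hg i).2 hη.le
    have h2 : (0:ℝ) < η * γ := mul_pos hη hγ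
    have h3 : η * γ * 1 ≤ η * γ * m := by nlinarith
    nlinarith [c_ge]
  · intro hm2
    have hm2R : (2:ℝ) ≤ m := by exact_mod_cast hm2
    have hηγ : (0:ℝ) < η * γ := mul_pos hη hγ
    have hKi : ∀ i, g i * (x i - y i) + 4*γ*(Real.log (x i) - Real.log (y i))
        ≤ 10*γ*((1 + 27/20*m)*(η*γ)) := by
      intro i
      have hR0 : (0:ℝ) ≤ 10*γ*((1 + 27/20*m)*(η*γ)) := by positivity
      have hloga : Real.log (x i ^ (α-1)) = (α-1) * Real.log (x i) := Real.log_rpow (hx i) _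
      have hlogb : Real.log (y i ^ (α-1)) = (α-1) * Real.log (y i) := Real.log_rpow (hy i) _
      have hlx : Real.log (x i) - Real.log (y i)
          = (Real.log (y i ^ (α-1)) - Real.log (x i ^ (α-1)))/(1-α) := by
        rw [hloga, hlogb]
        field_simp
        ring
      have hδub : η * g i - c ≤ (1 + 27/20*m)*(η*γ) := by
        have h1 : η * g i ≤ η * γ := mul_le_mul_of_nonneg_left (hg i).2 hη.le
        nlinarith [c_ge]
      have hlogd : Real.log (y i ^ (α-1)) - Real.log (x i ^ (α-1))
          = Real.log (y i ^ (α-1) / x i ^ (α-1)) :=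
        (Real.log_div (ne_of_gt (hb i)) (ne_of_gt (ha i))).symm
      have hld : Real.log (y i ^ (α-1) / x i ^ (α-1)) ≤ y i ^ (α-1) / x i ^ (α-1) - 1 :=
        Real.log_le_sub_one_of_pos (div_pos (hb i) (ha i))
      have hba2 : y i ^ (α-1) / x i ^ (α-1) - 1 = (η * g i - c) / x i ^ (α-1) := by
        rw [hup i, div_sub_one (ne_of_gt (ha i))]
        congr 1
        ring
      have hld2 : Real.log (y i ^ (α-1)) - Real.log (x i ^ (α-1))
          ≤ (η * g i - c) / x i ^ (α-1) := by
        rw [hlogd]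
        linarith [hld, hba2.ge, hba2.le]
      by_cases hδi : 0 ≤ η * g i - c
      · -- decreasing coordinate
        have hby : x i ^ (α-1) ≤ y i ^ (α-1) := by rw [hup i]; linarith
        have hxy : y i ≤ x i := by
          have h := Real.rpow_le_rpow_of_nonpos (ha i) hby hs_neg.le
          rwa [hxa_raw i, hyb_raw i] at h
        have hfrac : x i / x i ^ (α-1) ≤ 1 := by
          rw [div_le_one (ha i)]
          exact le_trans (hx1 i) (ha1 i)
        have hfracpos : 0 < x i / x i ^ (α-1) := div_pos (hx i) (ha i)
        have hxy2 : x i - y i ≤ 2 * (η * g i - c) := by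
          have h := T1 i
          nlinarith [mul_le_mul_of_nonneg_right hfrac hδi,
            mul_nonneg hfracpos.le hδi, hs1]
        have hgrad : g i * (x i - y i) ≤ 2*γ*(η * g i - c) := by
          have h1 : g i * (x i - y i) ≤ γ * (x i - y i) :=
            mul_le_mul_of_nonneg_right (hg i).2 (by linarith)
          nlinarith
        have hfd : (η * g i - c) / x i ^ (α-1) ≤ η * g i - c :=
          div_le_self hδi (ha1 i)
        have h12 : 0 ≤ Real.log (y i ^ (α-1)) - Real.log (x i ^ (α-1)) := by
          have := Real.log_le_log (ha i) hby
          linarith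
        have hden : (Real.log (y i ^ (α-1)) - Real.log (x i ^ (α-1)))/(1-α)
            ≤ 2*(Real.log (y i ^ (α-1)) - Real.log (x i ^ (α-1))) := by
          rw [div_le_iff₀ h1α]
          nlinarith
        have hlog3 : Real.log (x i) - Real.log (y i) ≤ 2*(η * g i - c) := by
          rw [hlx]
          linarith
        calc g i * (x i - y i) + 4*γ*(Real.log (x i) - Real.log (y i))
            ≤ 2*γ*(η * g i - c) + 4*γ*(2*(η * g i - c)) := by nlinarith [hlog3, hγ]
          _ = 10*γ*(η * g i - c) := by ring
          _ ≤ 10*γ*((1 + 27/20*m)*(η*γ)) := by nlinarith [hδub, hγ]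
      · -- increasing coordinate
        push_neg at hδi
        have hab : y i ^ (α-1) ≤ x i ^ (α-1) := by rw [hup i]; linarith
        have hxy : x i ≤ y i := by
          have h := Real.rpow_le_rpow_of_nonpos (hb i) hab hs_neg.le
          rwa [hxa_raw i, hyb_raw i] at h
        have hgneg : -g i ≤ γ / x i := by
          have h := (hg i).1
          rw [neg_div] at h
          linarith
        set v : ℝ := y i / y i ^ (α-1) with hv_def
        have hvpos : 0 < v := div_pos (hy i) (hb i)
        have hvB : v * y i ^ (α-1) = y i := div_mul_cancel₀ _ (ne_of_gt (hb i))
        have hyx2 : y i - x i ≤ 2 * v * (c - η * g i) := by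
          have h := T2 i
          nlinarith [hs1, mul_nonneg hvpos.le (by linarith : (0:ℝ) ≤ c - η * g i)]
        -- key algebraic bound : v * (x i)^(α-1) ≤ 2 * x i
        have k1 : v * x i ^ (α-1) ≤ 2 * x i := by
          have h1 : y i * x i ^ (α-1) ≤ 2 * (x i * y i ^ (α-1)) := by
            nlinarith [hyx i, hba i, (hx i), (ha i), (hb i)]
          have h2 : (v * x i ^ (α-1)) * y i ^ (α-1) ≤ (2 * x i) * y i ^ (α-1) := by
            calc (v * x i ^ (α-1)) * y i ^ (α-1) = y i * x i ^ (α-1) := by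
                  rw [mul_comm (v * x i ^ (α-1)) (y i ^ (α-1)), ← mul_assoc,
                    mul_comm (y i ^ (α-1)) v, hvB]
              _ ≤ 2 * (x i * y i ^ (α-1)) := h1
              _ = (2 * x i) * y i ^ (α-1) := by ring
          exact le_of_mul_le_mul_right h2 (hb i)
        have hgterm : g i * (x i - y i) ≤ 4*γ*(c - η * g i) / x i ^ (α-1) := by
          have t1 : g i * (x i - y i) ≤ γ / x i * (y i - x i) := by
            have h := mul_le_mul_of_nonneg_right hgneg (by linarith : (0:ℝ) ≤ y i - x i)
            calc g i * (x i - y i) = (-g i) * (y i - x i) := by ring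
              _ ≤ γ / x i * (y i - x i) := h
          have t2 : γ / x i * (y i - x i) ≤ γ / x i * (2 * v * (c - η * g i)) :=
            mul_le_mul_of_nonneg_left hyx2 (div_pos hγ (hx i)).le
          have t3 : γ / x i * (2 * v * (c - η * g i)) ≤ 4*γ*(c - η * g i) / x i ^ (α-1) := by
            rw [div_mul_eq_mul_div, div_le_div_iff₀ (hx i) (ha i)]
            have hD : (0:ℝ) ≤ c - η * g i := by linarith
            calc γ * (2 * v * (c - η * g i)) * x i ^ (α-1)
                = 2 * γ * (c - η * g i) * (v * x i ^ (α-1)) := by ring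
              _ ≤ 2 * γ * (c - η * g i) * (2 * x i) := by
                  apply mul_le_mul_of_nonneg_left k1
                  positivity
              _ = 4*γ*(c - η * g i) * x i := by ring
          linarith
        have hlog3 : Real.log (x i) - Real.log (y i) ≤ (η * g i - c) / x i ^ (α-1) := by
          rw [hlx]
          have hdneg : Real.log (y i ^ (α-1)) - Real.log (x i ^ (α-1)) ≤ 0 := by
            have := Real.log_le_log (hb i) hab
            linarith
          have h1 : (Real.log (y i ^ (α-1)) - Real.log (x i ^ (α-1)))/(1-α)
              ≤ Real.log (y i ^ (α-1)) - Real.log (x i ^ (α-1)) := by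
            rw [div_le_iff₀ h1α]
            nlinarith
          linarith [hld2]
        calc g i * (x i - y i) + 4*γ*(Real.log (x i) - Real.log (y i))
            ≤ 4*γ*(c - η * g i) / x i ^ (α-1) + 4*γ*((η * g i - c) / x i ^ (α-1)) := by
              have h4 := mul_le_mul_of_nonneg_left hlog3 (by positivity : (0:ℝ) ≤ 4*γ)
              linarith
          _ = 0 := by ring
          _ ≤ 10*γ*((1 + 27/20*m)*(η*γ)) := hR0
    -- sum up
    have hsum : ∑ i, (g i * (x i - y i) + 4*γ*(Real.log (x i) - Real.log (y i)))
        ≤ ∑ _i : Fin m, 10*γ*((1 + 27/20*m)*(η*γ)) :=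
      Finset.sum_le_sum (fun i _ => hKi i)
    have hlhs : ∑ i, (g i * (x i - y i) + 4*γ*(Real.log (x i) - Real.log (y i)))
        = ∑ i, g i * (x i - y i) + 4*γ*(∑ i, Real.log (x i) - ∑ i, Real.log (y i)) := by
      rw [Finset.sum_add_distrib, ← Finset.mul_sum, Finset.sum_sub_distrib]
    have hrhs : ∑ _i : Fin m, 10*γ*((1 + 27/20*m)*(η*γ)) = m * (10*γ*((1 + 27/20*m)*(η*γ))) := by
      rw [Finset.sum_const, card_univ, Fintype.card_fin, nsmul_eq_mul]
    rw [hlhs, hrhs] at hsum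
    have hfinal : (m:ℝ) * (10*γ*((1 + 27/20*m)*(η*γ))) ≤ 19*m^2*γ^2*η := by
      have h1 : (0:ℝ) < γ^2*η := by positivity
      nlinarith [hm2R, h1, sq_nonneg ((m:ℝ) - 2)]
    linarith

set_option maxHeartbeats 1000000 in
lemma exists_T0 {m : ℕ} (hm : 0 < m) {α : ℝ} (hα1 : 0 < α) (hα2 : α < 1/2) :
    ∃ T₀ : ℕ, 3 ≤ T₀ ∧ ∀ T : ℕ, T₀ ≤ T →
      30 * ((1:ℝ)/((m:ℝ)^(((1:ℝ)+α)/2) * Real.sqrt T))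
        ≤ ((m:ℝ)^((1:ℝ)-α)
            + 3*m*((1:ℝ)/((m:ℝ)^(((1:ℝ)+α)/2) * Real.sqrt T))*T) ^ (α/(α-1)) := by
  have hmR : (1:ℝ) ≤ m := by exact_mod_cast hm
  have hmR0 : (0:ℝ) < m := by linarith
  set r : ℝ := α/(1-α) with hr_def
  have h1α : (0:ℝ) < 1 - α := by linarith
  have hr0 : 0 < r := div_pos hα1 h1α
  have hr1 : r < 1 := by
    rw [hr_def, div_lt_one h1α]; linarith
  have h1r : (0:ℝ) < 1 - r := by linarith
  refine ⟨m^2 + ⌈((120*(m:ℝ))^((2:ℝ)/(1-r)))⌉₊ + 3, by omega, ?_⟩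
  intro T hT
  have hT3 : (3:ℝ) ≤ (T:ℝ) := by
    have : (3:ℕ) ≤ T := by omega
    exact_mod_cast this
  have hTm : ((m:ℝ))^2 ≤ (T:ℝ) := by
    have h1 : m^2 ≤ T := by omega
    exact_mod_cast h1
  have hTr : ((120*(m:ℝ))^((2:ℝ)/(1-r))) ≤ (T:ℝ) := by
    have h1 : (⌈((120*(m:ℝ))^((2:ℝ)/(1-r)))⌉₊ : ℝ) ≤ T := by
      have : ⌈((120*(m:ℝ))^((2:ℝ)/(1-r)))⌉₊ ≤ T := by omega
      exact_mod_cast this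
    exact le_trans (Nat.le_ceil _) h1
  set S : ℝ := Real.sqrt T with hS_def
  have hT0 : (0:ℝ) ≤ T := by linarith
  have hS0 : 0 < S := Real.sqrt_pos.mpr (by linarith)
  have hSS : S * S = T := Real.mul_self_sqrt hT0
  have hS1 : 1 ≤ S := by nlinarith
  have hSm : (m:ℝ) ≤ S := by nlinarith
  have hSr : (120*(m:ℝ))^((1:ℝ)/(1-r)) ≤ S := by
    have h120 : (0:ℝ) ≤ 120*(m:ℝ) := by linarith
    have h1 : (120*(m:ℝ))^((2:ℝ)/(1-r)) = ((120*(m:ℝ))^((1:ℝ)/(1-r)))^2 := by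
      rw [← Real.rpow_natCast ((120*(m:ℝ))^((1:ℝ)/(1-r))) 2, ← Real.rpow_mul h120]
      congr 1
      push_cast
      field_simp
    have h2 : (0:ℝ) ≤ (120*(m:ℝ))^((1:ℝ)/(1-r)) := Real.rpow_nonneg h120 _
    nlinarith [hTr, hSS]
  have hmp1 : (1:ℝ) ≤ (m:ℝ)^(((1:ℝ)+α)/2) := by
    have h := Real.rpow_le_rpow_of_exponent_le hmR (by linarith : (0:ℝ) ≤ ((1:ℝ)+α)/2)
    rwa [Real.rpow_zero] at h
  set E : ℝ := (1:ℝ)/((m:ℝ)^(((1:ℝ)+α)/2) * S) with hE_def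
  have hmpS : 0 < (m:ℝ)^(((1:ℝ)+α)/2) * S := by
    apply mul_pos _ hS0
    exact Real.rpow_pos_of_pos hmR0 _
  have hE0 : 0 < E := by rw [hE_def]; positivity
  have hET : E * T = S / ((m:ℝ)^(((1:ℝ)+α)/2)) := by
    rw [hE_def, ← hSS]
    field_simp
  have hETS : E * T ≤ S := by
    rw [hET]
    exact div_le_self hS0.le hmp1
  have hm1α : (m:ℝ)^((1:ℝ)-α) ≤ (m:ℝ) := by
    have h := Real.rpow_le_rpow_of_exponent_le hmR (by linarith : (1:ℝ)-α ≤ 1)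
    rwa [Real.rpow_one] at h
  set B : ℝ := (m:ℝ)^((1:ℝ)-α) + 3*m*E*T with hB_def
  have hB0 : 0 < B := by
    rw [hB_def]
    have : (0:ℝ) < (m:ℝ)^((1:ℝ)-α) := Real.rpow_pos_of_pos hmR0 _
    nlinarith [mul_pos hE0 (lt_of_lt_of_le (by norm_num : (0:ℝ) < 3) hT3)]
  have hB4 : B ≤ 4*m*S := by
    rw [hB_def]
    have h1 : 3*(m:ℝ)*E*T = 3*m*(E*T) := by ring
    nlinarith [hETS, hSm]
  -- key: (4mS)^r ≤ m^p * S / 30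
  have hSrr : S ^ r * S ^ ((1:ℝ)-r) = S := by
    rw [← Real.rpow_add hS0, show r + ((1:ℝ)-r) = 1 by ring, Real.rpow_one]
  have hS1r : 120*(m:ℝ) ≤ S ^ ((1:ℝ)-r) := by
    have h120 : (0:ℝ) ≤ 120*(m:ℝ) := by linarith
    have h1 : ((120*(m:ℝ))^((1:ℝ)/(1-r)))^((1:ℝ)-r) ≤ S ^ ((1:ℝ)-r) :=
      Real.rpow_le_rpow (Real.rpow_nonneg h120 _) hSr (by linarith)
    rwa [← Real.rpow_mul h120, one_div_mul_cancel (ne_of_gt h1r), Real.rpow_one] at h1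
  have hSrpos : 0 < S ^ r := Real.rpow_pos_of_pos hS0 _
  have h4m1 : (1:ℝ) ≤ 4*m := by linarith
  have hmul : (4*(m:ℝ)*S) ^ r = (4*m)^r * S^r := by
    rw [Real.mul_rpow (by linarith) hS0.le]
  have h4mr : (4*(m:ℝ))^r ≤ 4*m := by
    have h := Real.rpow_le_rpow_of_exponent_le h4m1 hr1.le
    rwa [Real.rpow_one] at h
  have hP : (4*(m:ℝ)*S) ^ r ≤ (m:ℝ)^(((1:ℝ)+α)/2) * S / 30 := by
    have c1 : (4*(m:ℝ)*S)^r ≤ 4*m*S^r := by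
      rw [hmul]
      exact mul_le_mul_of_nonneg_right h4mr hSrpos.le
    have c2 : 120*(m:ℝ)*S^r ≤ S := by
      calc 120*(m:ℝ)*S^r ≤ S^((1:ℝ)-r) * S^r := by nlinarith
        _ = S^r * S^((1:ℝ)-r) := by ring
        _ = S := hSrr
    have c3 : S ≤ (m:ℝ)^(((1:ℝ)+α)/2) * S := by nlinarith
    linarith
  -- conclude
  have hexp : α/(α-1) = -r := by
    rw [hr_def, show α - 1 = -(1-α) by ring, div_neg]
  rw [hexp]
  have h1 : (4*(m:ℝ)*S) ^ (-r) ≤ B ^ (-r) :=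
    Real.rpow_le_rpow_of_nonpos hB0 hB4 (by linarith)
  have h2 : 30 * E ≤ (4*(m:ℝ)*S) ^ (-r) := by
    rw [Real.rpow_neg (by nlinarith : (0:ℝ) ≤ 4*m*S), ← one_div]
    rw [le_div_iff₀ (Real.rpow_pos_of_pos (by nlinarith : (0:ℝ) < 4*m*S) r)]
    have hne : ((m:ℝ)^(((1:ℝ)+α)/2) * S) ≠ 0 := ne_of_gt hmpS
    have h3 : 30 * E * ((m:ℝ)^(((1:ℝ)+α)/2) * S / 30) = 1 := by
      calc 30 * E * ((m:ℝ)^(((1:ℝ)+α)/2) * S / 30)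
          = E * ((m:ℝ)^(((1:ℝ)+α)/2) * S) := by ring
        _ = 1 := by rw [hE_def]; exact one_div_mul_cancel hne
    calc 30 * E * (4*(m:ℝ)*S) ^ r ≤ 30 * E * ((m:ℝ)^(((1:ℝ)+α)/2) * S / 30) := by
          exact mul_le_mul_of_nonneg_left hP (by linarith [hE0])
      _ = 1 := h3
  calc 30 * E ≤ (4*(m:ℝ)*S) ^ (-r) := h2
    _ ≤ B ^ (-r) := h1

set_option maxHeartbeats 1000000 in
/-- Lemma (the potential function decreases): under the small gradient assumption,
for `T` sufficiently large, the potential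
`φ(t) = ∑_{s=1}^t g^s · (w^s - w^{s+1}) + 19 m² γ² η (T - t) - 4γ ∑_i ln w^{t+1}_i`
is decreasing in `t`, i.e. `φ(t) ≤ φ(t-1)` for every `t ∈ [T]`.
(Time is 0-indexed: `w 0` is the uniform initial weight vector, the update at step
`t` produces `w (t+1)`, and `φ` below is expressed with 0-indexed sums, so the
claim `φ(t) ≤ φ(t-1)` for `t ∈ [T]` reads `φ(t+1) ≤ φ(t)` for `t < T`.) -/
theorem stmt6 {m n : ℕ} (hm : 0 < m) (hn : 0 < n) (α : ℝ)
    (hα : α ∈ Set.Ioo (0:ℝ) (1/2)) :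
    ∃ T₀ : ℕ, ∀ T : ℕ, T₀ ≤ T →
      ∀ γ η : ℝ,
        γ = 12 * n * Real.log T →
        η = 1 / (12 * (m : ℝ) ^ ((1 + α) / 2) * n * Real.sqrt T * Real.log T) →
        ∀ w g : ℕ → Fin m → ℝ,
          w 0 = (fun _ => (m : ℝ)⁻¹) →
          (∀ t < T, ∀ i, -γ / w t i ≤ g t i ∧ g t i ≤ γ) →
          (∀ t < T, w (t+1) ∈ stdSimplex ℝ (Fin m) ∧ (∀ i, 0 < w (t+1) i) ∧
            ∃ c : ℝ, ∀ i, (w (t+1) i) ^ (α - 1) = (w t i) ^ (α - 1) + η * g t i - c) →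
          ∀ t < T,
            (∑ s ∈ Finset.range (t+1), ∑ i, g s i * (w s i - w (s+1) i))
                + 19 * (m : ℝ)^2 * γ^2 * η * ((T : ℝ) - (t+1))
                - 4 * γ * ∑ i, Real.log (w (t+1) i)
              ≤ (∑ s ∈ Finset.range t, ∑ i, g s i * (w s i - w (s+1) i))
                + 19 * (m : ℝ)^2 * γ^2 * η * ((T : ℝ) - t)
                - 4 * γ * ∑ i, Real.log (w t i) := by
  obtain ⟨hα1, hα2⟩ := hα
  obtain ⟨T₀, hT₀3, hT₀⟩ := exists_T0 hm hα1 hα2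
  refine ⟨T₀, ?_⟩
  intro T hTT₀ γ η hγeq hηeq w g hw0 hg hupd t htT
  have hmR0 : (0:ℝ) < m := by exact_mod_cast hm
  have hnR0 : (0:ℝ) < n := by exact_mod_cast hn
  have hT3 : 3 ≤ T := le_trans hT₀3 hTT₀
  have hT3R : (3:ℝ) ≤ (T:ℝ) := by exact_mod_cast hT3
  have hlogT : 0 < Real.log T := Real.log_pos (by linarith)
  have hsqT : 0 < Real.sqrt T := Real.sqrt_pos.mpr (by linarith)
  have hmp : (0:ℝ) < (m:ℝ) ^ ((1 + α) / 2) := Real.rpow_pos_of_pos hmR0 _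
  have hαne : α - 1 ≠ 0 := ne_of_lt (by linarith)
  have hγ0 : 0 < γ := by rw [hγeq]; positivity
  have hη0 : 0 < η := by
    rw [hηeq]
    apply div_pos one_pos
    positivity
  have hEeq : η * γ = (1:ℝ)/((m:ℝ)^(((1:ℝ)+α)/2) * Real.sqrt T) := by
    rw [hηeq, hγeq, div_mul_eq_mul_div, one_mul]
    rw [div_eq_div_iff (by positivity) (by positivity)]
    ring
  have hkey := hT₀ T hTT₀
  rw [← hEeq] at hkey
  -- basic facts about the iterates
  have hwpos : ∀ t', t' ≤ T → ∀ i, 0 < w t' i := by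
    intro t' ht' i
    cases t' with
    | zero =>
        rw [hw0]
        simp only
        positivity
    | succ t'' => exact (hupd t'' (by omega)).2.1 i
  have hwsum : ∀ t', t' ≤ T → ∑ i, w t' i = 1 := by
    intro t' ht'
    cases t' with
    | zero =>
        rw [hw0]
        rw [Finset.sum_const, card_univ, Fintype.card_fin, nsmul_eq_mul]
        field_simp
    | succ t'' => exact (hupd t'' (by omega)).1.2
  -- the inductive bound on the mirror iterates
  have hH : ∀ t', t' ≤ T → ∀ i, w t' i ^ (α-1) ≤ (m:ℝ)^((1:ℝ)-α) + 3*m*(η*γ)*t' := by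
    intro t'
    induction t' with
    | zero =>
        intro _ i
        rw [hw0]
        simp only [Nat.cast_zero, mul_zero]
        have h1 : ((m:ℝ)⁻¹) ^ (α-1) = (m:ℝ)^((1:ℝ)-α) := by
          rw [Real.inv_rpow hmR0.le, ← Real.rpow_neg hmR0.le]
          congr 1
          ring
        rw [h1]
        simp
    | succ t'' ih =>
        intro hle i
        have ht''T : t'' < T := by omega
        have ih' := ih (by omega)
        have hinv : ∀ j, 30*(η*γ) ≤ w t'' j ^ α := by
          intro j
          have hxj := hwpos t'' (by omega) j
          have hcast : (t'':ℝ) ≤ (T:ℝ) := by exact_mod_cast (by omega : t'' ≤ T)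
          have hxB : w t'' j ^ (α-1)
              ≤ (m:ℝ)^((1:ℝ)-α) + 3*m*(η*γ)*T := by
            have h2 := ih' j
            nlinarith [mul_le_mul_of_nonneg_left
              (mul_le_mul_of_nonneg_left hcast (mul_pos hη0 hγ0).le) hmR0.le]
          have hBpos : (0:ℝ) < (m:ℝ)^((1:ℝ)-α) + 3*m*(η*γ)*T :=
            lt_of_lt_of_le (Real.rpow_pos_of_pos hxj _) hxB
          have hexp_neg : α/(α-1) ≤ 0 := by
            apply le_of_lt
            apply div_neg_of_pos_of_neg hα1
            linarith
          have h3 : ((m:ℝ)^((1:ℝ)-α) + 3*m*(η*γ)*T) ^ (α/(α-1))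
              ≤ (w t'' j ^ (α-1)) ^ (α/(α-1)) :=
            Real.rpow_le_rpow_of_nonpos (Real.rpow_pos_of_pos hxj _) hxB hexp_neg
          have h4 : (w t'' j ^ (α-1)) ^ (α/(α-1)) = w t'' j ^ α := by
            rw [← Real.rpow_mul hxj.le]
            congr 1
            rw [mul_comm, div_mul_cancel₀ _ hαne]
          rw [h4] at h3
          exact le_trans hkey h3
        obtain ⟨c, hc⟩ := (hupd t'' ht''T).2.2
        have hstep := (step_main_s6 hm hα1 hα2 hγ0 hη0 (w t'') (w (t''+1)) (g t'')
          (hwpos t'' (by omega)) (hwsum t'' (by omega))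
          (hwpos (t''+1) (by omega)) (hwsum (t''+1) (by omega))
          (hg t'' ht''T) hc hinv).1 i
        have hcast : ((t''+1 : ℕ):ℝ) = (t'':ℝ) + 1 := by push_cast; ring
        rw [hcast]
        have h5 := ih' i
        nlinarith [mul_pos hη0 hγ0]
  -- now the main inequality at time t
  rw [Finset.sum_range_succ]
  have hinvt : ∀ j, 30*(η*γ) ≤ w t j ^ α := by
    intro j
    have hxj := hwpos t (by omega) j
    have hcast : (t:ℝ) ≤ (T:ℝ) := by exact_mod_cast (by omega : t ≤ T)
    have hxB : w t j ^ (α-1) ≤ (m:ℝ)^((1:ℝ)-α) + 3*m*(η*γ)*T := by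
      have h2 := hH t (by omega) j
      nlinarith [mul_le_mul_of_nonneg_left
        (mul_le_mul_of_nonneg_left hcast (mul_pos hη0 hγ0).le) hmR0.le]
    have hexp_neg : α/(α-1) ≤ 0 := by
      apply le_of_lt
      apply div_neg_of_pos_of_neg hα1
      linarith
    have h3 : ((m:ℝ)^((1:ℝ)-α) + 3*m*(η*γ)*T) ^ (α/(α-1))
        ≤ (w t j ^ (α-1)) ^ (α/(α-1)) :=
      Real.rpow_le_rpow_of_nonpos (Real.rpow_pos_of_pos hxj _) hxB hexp_neg
    have h4 : (w t j ^ (α-1)) ^ (α/(α-1)) = w t j ^ α := by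
      rw [← Real.rpow_mul hxj.le]
      congr 1
      rw [mul_comm, div_mul_cancel₀ _ hαne]
    rw [h4] at h3
    exact le_trans hkey h3
  obtain ⟨c, hc⟩ := (hupd t htT).2.2
  have hstep := step_main_s6 hm hα1 hα2 hγ0 hη0 (w t) (w (t+1)) (g t)
    (hwpos t (by omega)) (hwsum t (by omega))
    (hwpos (t+1) (by omega)) (hwsum (t+1) (by omega))
    (hg t htT) hc hinvt
  rcases eq_or_lt_of_le (show 1 ≤ m from hm) with hm1 | hm2
  · -- m = 1 : everything is trivial
    have hm1' : m = 1 := hm1.symm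
    subst hm1'
    have hone : ∀ t', t' ≤ T → ∀ i : Fin 1, w t' i = 1 := by
      intro t' ht' i
      have h := hwsum t' ht'
      rw [Fin.sum_univ_one] at h
      have : i = 0 := Subsingleton.elim i 0
      rw [this]
      exact h
    have hz1 : ∑ i, g t i * (w t i - w (t+1) i) = 0 := by
      apply Finset.sum_eq_zero
      intro i _
      rw [hone t (by omega) i, hone (t+1) (by omega) i]
      ring
    have hz2 : ∑ i, Real.log (w (t+1) i) = 0 := by
      apply Finset.sum_eq_zero
      intro i _
      rw [hone (t+1) (by omega) i, Real.log_one]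
    have hz3 : ∑ i, Real.log (w t i) = 0 := by
      apply Finset.sum_eq_zero
      intro i _
      rw [hone t (by omega) i, Real.log_one]
    rw [hz1, hz2, hz3]
    have hcast : ((t+1:ℕ):ℝ) = (t:ℝ) + 1 := by push_cast; ring
    have h19 : (0:ℝ) ≤ 19 * (1:ℕ)^2 * γ^2 * η := by positivity
    push_cast
    nlinarith [mul_pos (mul_pos hγ0 hγ0) hη0]
  · -- m ≥ 2
    have hB := hstep.2 hm2
    push_cast
    nlinarith [hB]
end

section
/- Let p^1, …, p^m be measurable random variables taking values in Δ^n whose coordinates are almost surely strictly positive, and let J be a measurable random variable taking values in [n], on a common probability space; assume every expert is calibrated. Fix a weight vector w ∈ Δ^m, an index i ∈ [m], and ζ ≥ 0, and let G_i denote the random variable ∑_{ℓ=1}^n p*_ℓ(w) ln p^i_ℓ − ln p^i_J, where p*(w) is the logarithmic pool of the random forecasts p^1, …, p^m with weights w. Then P(G_i ≥ ζ) ≤ n e^{−ζ}. -/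
open Finset MeasureTheory

/-- The logarithmic pool of forecasts `p 1, …, p m` over `n` outcomes,
with weight vector `w`, evaluated at outcome `l`. -/
noncomputable def logPool {m n : ℕ} (p : Fin m → Fin n → ℝ) (w : Fin m → ℝ) (l : Fin n) : ℝ :=
  (∏ k, (p k l) ^ (w k)) / (∑ l', ∏ k, (p k l') ^ (w k))

/-- Lemma (upper tail of the gradient): if every expert is calibrated, then for any
weight vector `w`, expert `i` and `ζ ≥ 0`, the probability that
`G_i = ∑ ℓ, p*_ℓ(w) ln p^i_ℓ - ln p^i_J` is at least `ζ` is at most `n e^{-ζ}`. -/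
theorem stmt8 {m n : ℕ} (hm : 0 < m) (hn : 0 < n)
    {Ω : Type*} [MeasurableSpace Ω] (μ : Measure Ω) [IsProbabilityMeasure μ]
    (p : Fin m → Ω → Fin n → ℝ) (hpm : ∀ i, Measurable (p i))
    (J : Ω → Fin n) (hJ : Measurable J)
    (hsimplex : ∀ i ω, p i ω ∈ stdSimplex ℝ (Fin n))
    (hppos : ∀ i, ∀ᵐ ω ∂μ, ∀ l, 0 < p i ω l)
    (hcal : ∀ (i : Fin m) (j : Fin n),
      (μ[(fun ω => if J ω = j then (1:ℝ) else 0) |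
          MeasurableSpace.comap (p i) inferInstance]) =ᵐ[μ] fun ω => p i ω j)
    (w : Fin m → ℝ) (hw : w ∈ stdSimplex ℝ (Fin m))
    (i : Fin m) (ζ : ℝ) (hζ : 0 ≤ ζ) :
    (μ {ω | ζ ≤ (∑ l, logPool (fun k => p k ω) w l * Real.log (p i ω l))
        - Real.log (p i ω (J ω))}).toReal ≤ n * Real.exp (-ζ) := by
  set t : ℝ := Real.exp (-ζ) with ht
  have ht0 : 0 < t := Real.exp_pos _
  set A : Fin n → Set Ω := fun j => {ω | p i ω j ≤ t} with hA
  set B : Fin n → Set Ω := fun j => {ω | J ω = j} ∩ A j with hB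
  -- the bad event is contained in ⋃ j, B j
  have hsub : {ω | ζ ≤ (∑ l, logPool (fun k => p k ω) w l * Real.log (p i ω l))
        - Real.log (p i ω (J ω))} ⊆ ⋃ j, B j := by
    intro ω hω
    simp only [Set.mem_setOf_eq] at hω
    refine Set.mem_iUnion.mpr ⟨J ω, ⟨rfl, ?_⟩⟩
    have hsum_nonpos : (∑ l, logPool (fun k => p k ω) w l * Real.log (p i ω l)) ≤ 0 := by
      refine Finset.sum_nonpos fun l _ => mul_nonpos_of_nonneg_of_nonpos ?_ ?_
      · refine div_nonneg (Finset.prod_nonneg fun k _ => ?_)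
          (Finset.sum_nonneg fun l' _ => Finset.prod_nonneg fun k _ => ?_) <;>
          exact Real.rpow_nonneg ((hsimplex k ω).1 _) _
      · refine Real.log_nonpos ((hsimplex i ω).1 l) ?_
        calc p i ω l ≤ ∑ l', p i ω l' :=
              Finset.single_le_sum (fun l' _ => (hsimplex i ω).1 l') (Finset.mem_univ l)
          _ = 1 := (hsimplex i ω).2
    have hlog : Real.log (p i ω (J ω)) ≤ -ζ := by linarith
    rcases eq_or_lt_of_le ((hsimplex i ω).1 (J ω)) with h0 | h0
    · simp only [Set.mem_setOf_eq, A]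
      rw [← h0]; exact le_of_lt ht0
    · simp only [Set.mem_setOf_eq, A]
      calc p i ω (J ω) = Real.exp (Real.log (p i ω (J ω))) := (Real.exp_log h0).symm
        _ ≤ t := Real.exp_le_exp.mpr hlog
  -- each B j has measure at most t
  have hkey : ∀ j, (μ (B j)).toReal ≤ t := by
    intro j
    have hmle : MeasurableSpace.comap (p i) inferInstance ≤ ‹MeasurableSpace Ω› :=
      (hpm i).comap_le
    have hAj : MeasurableSet[MeasurableSpace.comap (p i) inferInstance] (A j) := by
      refine ⟨{v : Fin n → ℝ | v j ≤ t}, ?_, rfl⟩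
      exact measurableSet_le (measurable_pi_apply j) measurable_const
    have hAj' : MeasurableSet (A j) := hmle _ hAj
    have hJj : MeasurableSet {ω | J ω = j} := hJ (measurableSet_singleton j)
    have hint : Integrable (fun ω => if J ω = j then (1:ℝ) else 0) μ := by
      have : (fun ω => if J ω = j then (1:ℝ) else 0)
          = Set.indicator {ω | J ω = j} (fun _ => 1) := by
        ext ω; simp [Set.indicator_apply]
      rw [this]
      exact (integrable_const 1).indicator hJj
    have h1 : (μ (B j)).toReal
        = ∫ ω in A j, (if J ω = j then (1:ℝ) else 0) ∂μ := by
      have : (fun ω => if J ω = j then (1:ℝ) else 0)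
          = Set.indicator {ω | J ω = j} (fun _ => 1) := by
        ext ω; simp [Set.indicator_apply]
      rw [this, setIntegral_indicator hJj, setIntegral_const, smul_eq_mul, mul_one,
        Set.inter_comm]
      rfl
    have h2 : ∫ ω in A j, (if J ω = j then (1:ℝ) else 0) ∂μ
        = ∫ ω in A j, p i ω j ∂μ := by
      rw [← setIntegral_condExp hmle hint hAj]
      exact setIntegral_congr_ae hAj' ((hcal i j).mono fun ω h _ => h)
    have hintp : Integrable (fun ω => p i ω j) μ := by
      have hmeas : Measurable fun ω => p i ω j := (measurable_pi_apply j).comp (hpm i)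
      refine Integrable.mono' (integrable_const 1) hmeas.aestronglyMeasurable ?_
      filter_upwards with ω
      rw [Real.norm_eq_abs, abs_of_nonneg ((hsimplex i ω).1 j)]
      calc p i ω j ≤ ∑ l', p i ω l' :=
            Finset.single_le_sum (fun l' _ => (hsimplex i ω).1 l') (Finset.mem_univ j)
        _ = 1 := (hsimplex i ω).2
    have h3 : ∫ ω in A j, p i ω j ∂μ ≤ ∫ ω in A j, t ∂μ := by
      refine setIntegral_mono_on hintp.integrableOn ((integrableOn_const_iff enorm_ne_top).mpr ?_) hAj' ?_
      · right; exact measure_lt_top μ _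
      · intro ω hω; exact hω
    have h4 : ∫ ω in A j, t ∂μ ≤ t := by
      rw [setIntegral_const, smul_eq_mul, measureReal_def]
      have h5 : (μ (A j)).toReal ≤ 1 := by
        have := ENNReal.toReal_mono ENNReal.one_ne_top (prob_le_one (μ := μ) (s := A j))
        simpa using this
      nlinarith [ENNReal.toReal_nonneg (a := μ (A j))]
    linarith
  -- combine
  calc (μ {ω | ζ ≤ (∑ l, logPool (fun k => p k ω) w l * Real.log (p i ω l))
        - Real.log (p i ω (J ω))}).toReal
      ≤ (μ (⋃ j, B j)).toReal := by
        apply ENNReal.toReal_mono (measure_ne_top μ _) (measure_mono hsub)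
    _ ≤ (∑ j, μ (B j)).toReal := by
        apply ENNReal.toReal_mono
        · exact (ENNReal.sum_lt_top.mpr fun j _ => measure_lt_top μ _).ne
        · exact (measure_iUnion_le _).trans (by rw [tsum_fintype])
    _ = ∑ j, (μ (B j)).toReal := ENNReal.toReal_sum fun j _ => measure_ne_top μ _
    _ ≤ ∑ _j : Fin n, t := Finset.sum_le_sum fun j _ => hkey j
    _ = n * t := by simp [mul_comm]
end

section
/- Let p^1, …, p^m be measurable random variables taking values in Δ^n whose coordinates are almost surely strictly positive, and let J be a measurable random variable taking values in [n], on a common probability space; assume every expert is calibrated. Fix a weight vector w ∈ Δ^m with w_i > 0, an index i ∈ [m], and ζ ≥ 0, and let G_i denote the random variable ∑_{ℓ=1}^n p*_ℓ(w) ln p^i_ℓ − ln p^i_J, where p*(w) is the logarithmic pool of the random forecasts p^1, …, p^m with weights w. Then P(G_i ≤ −ζ/w_i) ≤ m n² e^{−ζ/n}. -/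
open Finset MeasureTheory

/-- Entropy bound: a distribution with positive entries has entropy at most `log n`. -/
lemma entropy_le_log {n : ℕ} (hn : 0 < n) (q : Fin n → ℝ) (hq : ∀ l, 0 < q l)
    (hsum : ∑ l, q l = 1) : ∑ l, q l * (-Real.log (q l)) ≤ Real.log n := by
  have hn' : (0:ℝ) < n := by exact_mod_cast hn
  have step : ∀ l, q l * (-Real.log (q l)) - q l * Real.log n ≤ 1/(n:ℝ) - q l := by
    intro l
    have hposnq : 0 < (n:ℝ) * q l := mul_pos hn' (hq l)
    have hlog : Real.log (1 / ((n:ℝ) * q l)) ≤ 1 / ((n:ℝ) * q l) - 1 :=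
      Real.log_le_sub_one_of_pos (by positivity)
    have hlogeq : Real.log (1 / ((n:ℝ) * q l)) = -Real.log n - Real.log (q l) := by
      rw [Real.log_div one_ne_zero hposnq.ne', Real.log_one,
        Real.log_mul hn'.ne' (hq l).ne']
      ring
    have h2 : q l * (1 / ((n:ℝ) * q l) - 1) = 1/(n:ℝ) - q l := by
      field_simp
      rw [mul_sub, mul_one_div_cancel (hq l).ne']
    calc q l * (-Real.log (q l)) - q l * Real.log n
        = q l * (-Real.log n - Real.log (q l)) := by ring
      _ ≤ q l * (1 / ((n:ℝ) * q l) - 1) := by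
          rw [← hlogeq]; exact mul_le_mul_of_nonneg_left hlog (hq l).le
      _ = 1/(n:ℝ) - q l := h2
  have hsumle := Finset.sum_le_sum (fun l (_ : l ∈ univ) => step l)
  rw [Finset.sum_sub_distrib, Finset.sum_sub_distrib, ← Finset.sum_mul, hsum, one_mul,
    Finset.sum_const, card_univ, Fintype.card_fin, nsmul_eq_mul] at hsumle
  have : (n:ℝ) * (1/(n:ℝ)) = 1 := by field_simp
  linarith

/-- Pointwise step: on the event, some expert put probability at most `n e^{-ζ}` on `J`. -/
lemma pointwise_bound {m n : ℕ} (hn : 0 < n) (p : Fin m → Fin n → ℝ)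
    (hsimp : ∀ k, p k ∈ stdSimplex ℝ (Fin n)) (hpos : ∀ k l, 0 < p k l)
    (w : Fin m → ℝ) (hw : w ∈ stdSimplex ℝ (Fin m)) (i : Fin m) (hwi : 0 < w i)
    (J : Fin n) (ζ : ℝ)
    (hev : (∑ l, logPool p w l * Real.log (p i l)) - Real.log (p i J) ≤ -ζ / w i) :
    ∃ k, p k J ≤ (n : ℝ) * Real.exp (-ζ) := by
  classical
  haveI : Nonempty (Fin n) := Fin.pos_iff_nonempty.mp hn
  have hn' : (0:ℝ) < n := by exact_mod_cast hn
  set F : Fin n → ℝ := fun l => ∏ k, (p k l) ^ (w k) with hF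
  have hple : ∀ k l, p k l ≤ 1 := by
    intro k l
    calc p k l ≤ ∑ l', p k l' := Finset.single_le_sum (fun l' _ => ((hsimp k).1 l')) (mem_univ l)
    _ = 1 := (hsimp k).2
  have hFpos : ∀ l, 0 < F l := fun l =>
    Finset.prod_pos fun k _ => Real.rpow_pos_of_pos (hpos k l) _
  set Z : ℝ := ∑ l', F l' with hZ
  have hZpos : 0 < Z := Finset.sum_pos (fun l _ => hFpos l) univ_nonempty
  have hpool : ∀ l, logPool p w l = F l / Z := fun l => rfl
  have hpoolpos : ∀ l, 0 < logPool p w l := fun l => by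
    rw [hpool]; exact div_pos (hFpos l) hZpos
  have hpoolsum : ∑ l, logPool p w l = 1 := by
    simp only [hpool, ← Finset.sum_div]
    exact div_self hZpos.ne'
  have hlogF : ∀ l, Real.log (F l) = ∑ k, w k * Real.log (p k l) := by
    intro l
    rw [Real.log_prod (fun k _ => (Real.rpow_pos_of_pos (hpos k l) _).ne')]
    exact Finset.sum_congr rfl fun k _ => by
      rw [Real.log_rpow (hpos k l)]
  -- Step A : ζ ≤ ∑ l, pool l * (w i * (-log (p i l)))
  have hA : ζ ≤ ∑ l, logPool p w l * (w i * (-Real.log (p i l))) := by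
    have hXw := (le_div_iff₀ hwi).mp hev
    have hlogJ : Real.log (p i J) ≤ 0 := Real.log_nonpos (hpos i J).le (hple i J)
    have hkey : ∑ l, logPool p w l * (w i * (-Real.log (p i l)))
        = -((∑ l, logPool p w l * Real.log (p i l)) * w i) := by
      rw [Finset.sum_mul, ← Finset.sum_neg_distrib]
      exact Finset.sum_congr rfl fun l _ => by ring
    nlinarith [mul_nonpos_of_nonneg_of_nonpos hwi.le hlogJ]
  -- Step B+C+D : pool l * (w i * (-log p i l)) ≤ pool l * (-log Z - log (pool l))
  have hBCD : ∀ l, logPool p w l * (w i * (-Real.log (p i l)))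
      ≤ logPool p w l * (-Real.log Z + (- Real.log (logPool p w l))) := by
    intro l
    apply mul_le_mul_of_nonneg_left _ (hpoolpos l).le
    have h1 : w i * (-Real.log (p i l)) ≤ ∑ k, w k * (-Real.log (p k l)) := by
      apply Finset.single_le_sum (f := fun k => w k * (-Real.log (p k l))) _ (mem_univ i)
      intro k _
      exact mul_nonneg (hw.1 k) (neg_nonneg.2 (Real.log_nonpos (hpos k l).le (hple k l)))
    have h2 : ∑ k, w k * (-Real.log (p k l)) = -Real.log (F l) := by
      rw [hlogF l, ← Finset.sum_neg_distrib]
      exact Finset.sum_congr rfl fun k _ => by ring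
    have h3 : Real.log (logPool p w l) = Real.log (F l) - Real.log Z := by
      rw [hpool, Real.log_div (hFpos l).ne' hZpos.ne']
    rw [h2] at h1
    rw [h3]; linarith
  -- Step E : ζ ≤ log n + ∑ k, w k * (-log (p k J))
  have hE : ζ ≤ Real.log n + ∑ k, w k * (-Real.log (p k J)) := by
    have hsum1 : ∑ l, logPool p w l * (-Real.log Z + (- Real.log (logPool p w l)))
        = -Real.log Z + ∑ l, logPool p w l * (-Real.log (logPool p w l)) := by
      rw [Finset.sum_congr rfl fun l _ => mul_add (logPool p w l) _ _,
        Finset.sum_add_distrib, ← Finset.sum_mul, hpoolsum, one_mul]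
    have hent := entropy_le_log hn (logPool p w) hpoolpos hpoolsum
    have hZleF : -Real.log Z ≤ -Real.log (F J) := by
      have hle : F J ≤ Z := Finset.single_le_sum (fun l _ => (hFpos l).le) (mem_univ J)
      have := Real.log_le_log (hFpos J) hle
      linarith
    have hFJ : -Real.log (F J) = ∑ k, w k * (-Real.log (p k J)) := by
      rw [hlogF J, ← Finset.sum_neg_distrib]
      exact Finset.sum_congr rfl fun k _ => by ring
    have hsble := Finset.sum_le_sum (fun l (_ : l ∈ univ) => hBCD l)
    calc ζ ≤ ∑ l, logPool p w l * (w i * (-Real.log (p i l))) := hA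
      _ ≤ ∑ l, logPool p w l * (-Real.log Z + (- Real.log (logPool p w l))) := hsble
      _ = -Real.log Z + ∑ l, logPool p w l * (-Real.log (logPool p w l)) := hsum1
      _ ≤ -Real.log (F J) + Real.log n := by linarith
      _ = Real.log n + ∑ k, w k * (-Real.log (p k J)) := by rw [hFJ]; ring
  -- Step F : extract an expert
  by_contra hcon
  push_neg at hcon
  have hlt : ∀ k, -Real.log (p k J) < ζ - Real.log n := by
    intro k
    have h := hcon k
    have hlog := Real.log_lt_log (mul_pos hn' (Real.exp_pos _)) h
    rw [Real.log_mul hn'.ne' (Real.exp_pos _).ne', Real.log_exp] at hlog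
    linarith
  have hslt : ∑ k, w k * (-Real.log (p k J)) < ∑ k, w k * (ζ - Real.log n) := by
    apply Finset.sum_lt_sum
    · intro k _
      exact mul_le_mul_of_nonneg_left (hlt k).le (hw.1 k)
    · exact ⟨i, mem_univ i, mul_lt_mul_of_pos_left (hlt i) hwi⟩
  rw [← Finset.sum_mul, hw.2, one_mul] at hslt
  linarith

/-- Calibration tail bound: `μ {J = j and p^k_j ≤ c} ≤ c`. -/
lemma cal_bound {n : ℕ} {Ω : Type*} [MeasurableSpace Ω] (μ : Measure Ω) [IsProbabilityMeasure μ]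
    (pk : Ω → Fin n → ℝ) (hpm : Measurable pk)
    (J : Ω → Fin n) (hJ : Measurable J) (j : Fin n)
    (hble : ∀ ω, 0 ≤ pk ω j ∧ pk ω j ≤ 1)
    (hcal : (μ[(fun ω => if J ω = j then (1:ℝ) else 0) |
          MeasurableSpace.comap pk inferInstance]) =ᵐ[μ] fun ω => pk ω j)
    (c : ℝ) (hc : 0 ≤ c) :
    (μ {ω | J ω = j ∧ pk ω j ≤ c}).toReal ≤ c := by
  classical
  have hle := hpm.comap_le
  set s : Set Ω := {ω | pk ω j ≤ c} with hs
  have hs𝔪 : MeasurableSet[MeasurableSpace.comap pk inferInstance] s :=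
    ⟨{f : Fin n → ℝ | f j ≤ c}, measurableSet_le (measurable_pi_apply j) measurable_const, rfl⟩
  have hsmeas : MeasurableSet s := hle _ hs𝔪
  set T : Set Ω := {ω | J ω = j} with hT
  have hTmeas : MeasurableSet T := hJ (measurableSet_singleton j)
  set f : Ω → ℝ := fun ω => if J ω = j then (1:ℝ) else 0 with hf
  have hfind : f = T.indicator (fun _ => (1:ℝ)) := by
    funext ω; by_cases h : J ω = j <;> simp [hf, hT, h, Set.indicator]
  have hfint : Integrable f μ := by
    rw [hfind]; exact (integrable_const (1:ℝ)).indicator hTmeas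
  have hset : {ω | J ω = j ∧ pk ω j ≤ c} = T ∩ s := by
    ext ω; simp [hT, hs, Set.mem_inter_iff]
  have h1 : ∫ ω in s, f ω ∂μ = (μ (T ∩ s)).toReal := by
    rw [hfind, setIntegral_indicator hTmeas, setIntegral_const, smul_eq_mul, mul_one,
      Set.inter_comm]
    rfl
  have h2 : ∫ ω in s, f ω ∂μ = ∫ ω in s, pk ω j ∂μ := by
    rw [← setIntegral_condExp hle hfint hs𝔪]
    exact setIntegral_congr_ae hsmeas (hcal.mono fun ω h _ => h)
  have hpkint : Integrable (fun ω => pk ω j) μ := by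
    apply (integrable_const (1:ℝ)).mono'
      ((measurable_pi_apply j).comp hpm).aestronglyMeasurable
    exact Filter.Eventually.of_forall fun ω => by
      simp only [Function.comp_apply, Real.norm_eq_abs, abs_of_nonneg (hble ω).1]
      exact (hble ω).2
  have h3 : ∫ ω in s, pk ω j ∂μ ≤ ∫ ω in s, (fun _ => c) ω ∂μ := by
    apply setIntegral_mono_on hpkint.integrableOn (integrable_const c).integrableOn hsmeas
    exact fun ω hω => hω
  have h4 : ∫ ω in s, (fun _ => c) ω ∂μ ≤ c := by
    rw [setIntegral_const, smul_eq_mul]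
    have hμs : (μ s).toReal ≤ 1 := by
      have := prob_le_one (μ := μ) (s := s)
      simpa using ENNReal.toReal_mono (by simp) this
    nlinarith [mul_le_mul_of_nonneg_right hμs hc, show μ.real s = (μ s).toReal from rfl]
  rw [hset]
  rw [← h1, h2]
  linarith

/-- Lemma (lower tail of the gradient): if every expert is calibrated, then for any
weight vector `w` with `w_i > 0`, expert `i` and `ζ ≥ 0`, the probability that
`G_i = ∑ ℓ, p*_ℓ(w) ln p^i_ℓ - ln p^i_J` is at most `-ζ/w_i` is at most
`m n² e^{-ζ/n}`. -/

theorem stmt9 {m n : ℕ} (hm : 0 < m) (hn : 0 < n)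
    {Ω : Type*} [MeasurableSpace Ω] (μ : Measure Ω) [IsProbabilityMeasure μ]
    (p : Fin m → Ω → Fin n → ℝ) (hpm : ∀ i, Measurable (p i))
    (J : Ω → Fin n) (hJ : Measurable J)
    (hsimplex : ∀ i ω, p i ω ∈ stdSimplex ℝ (Fin n))
    (hppos : ∀ i, ∀ᵐ ω ∂μ, ∀ l, 0 < p i ω l)
    (hcal : ∀ (i : Fin m) (j : Fin n),
      (μ[(fun ω => if J ω = j then (1:ℝ) else 0) |
          MeasurableSpace.comap (p i) inferInstance]) =ᵐ[μ] fun ω => p i ω j)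
    (w : Fin m → ℝ) (hw : w ∈ stdSimplex ℝ (Fin m))
    (i : Fin m) (hwi : 0 < w i) (ζ : ℝ) (hζ : 0 ≤ ζ) :
    (μ {ω | (∑ l, logPool (fun k => p k ω) w l * Real.log (p i ω l))
        - Real.log (p i ω (J ω)) ≤ -ζ / w i}).toReal ≤
      m * n^2 * Real.exp (-ζ / n) := by
  classical
  have hn' : (0:ℝ) < n := by exact_mod_cast hn
  set c : ℝ := (n : ℝ) * Real.exp (-ζ) with hc
  have hcpos : 0 ≤ c := by positivity
  set E : Set Ω := {ω | (∑ l, logPool (fun k => p k ω) w l * Real.log (p i ω l))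
        - Real.log (p i ω (J ω)) ≤ -ζ / w i} with hE
  set A : Fin m → Fin n → Set Ω := fun k j => {ω | J ω = j ∧ p k ω j ≤ c} with hA
  have hgood : ∀ᵐ ω ∂μ, ∀ k, ∀ l, 0 < p k ω l := (ae_all_iff).2 hppos
  have hsub : E ≤ᵐ[μ] ⋃ k, ⋃ j, A k j := by
    have hae : ∀ᵐ ω ∂μ, ω ∈ E → ω ∈ ⋃ k, ⋃ j, A k j := by
      filter_upwards [hgood] with ω hω hωE
      obtain ⟨k, hk⟩ := pointwise_bound hn (fun k => p k ω) (fun k => hsimplex k ω)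
        (fun k l => hω k l) w hw i hwi (J ω) ζ hωE
      exact Set.mem_iUnion.2 ⟨k, Set.mem_iUnion.2 ⟨J ω, ⟨rfl, hk⟩⟩⟩
    exact hae
  have hmeasb : μ E ≤ ∑ k : Fin m, ∑ j : Fin n, μ (A k j) := by
    calc μ E ≤ μ (⋃ k, ⋃ j, A k j) := measure_mono_ae hsub
    _ ≤ ∑ k : Fin m, μ (⋃ j, A k j) := measure_iUnion_fintype_le _ _
    _ ≤ ∑ k : Fin m, ∑ j : Fin n, μ (A k j) :=
        Finset.sum_le_sum fun k _ => measure_iUnion_fintype_le _ _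
  have hple : ∀ k (ω : Ω) j, p k ω j ≤ 1 := by
    intro k ω j
    calc p k ω j ≤ ∑ j', p k ω j' :=
          Finset.single_le_sum (fun j' _ => ((hsimplex k ω).1 j')) (mem_univ j)
    _ = 1 := (hsimplex k ω).2
  have hAc : ∀ k j, (μ (A k j)).toReal ≤ c := fun k j =>
    cal_bound μ (p k) (hpm k) J hJ j (fun ω => ⟨(hsimplex k ω).1 j, hple k ω j⟩)
      (hcal k j) c hcpos
  have h5 : (μ E).toReal ≤ ∑ k : Fin m, ∑ j : Fin n, (μ (A k j)).toReal := by
    have hne : (∑ k : Fin m, ∑ j : Fin n, μ (A k j)) ≠ ⊤ := by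
      refine (ENNReal.sum_lt_top.mpr fun k _ => (ENNReal.sum_lt_top.mpr fun j _ => ?_)).ne
      exact measure_lt_top μ _
    calc (μ E).toReal ≤ (∑ k : Fin m, ∑ j : Fin n, μ (A k j)).toReal :=
          ENNReal.toReal_mono hne hmeasb
    _ = ∑ k : Fin m, ∑ j : Fin n, (μ (A k j)).toReal := by
        rw [ENNReal.toReal_sum (fun k _ =>
          (ENNReal.sum_lt_top.mpr fun j _ => measure_lt_top μ _).ne)]
        exact Finset.sum_congr rfl fun k _ =>
          ENNReal.toReal_sum (fun j _ => (measure_lt_top μ _).ne)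
  have h6 : ∑ k : Fin m, ∑ j : Fin n, (μ (A k j)).toReal ≤ (m : ℝ) * n^2 * Real.exp (-ζ) := by
    calc ∑ k : Fin m, ∑ j : Fin n, (μ (A k j)).toReal
        ≤ ∑ _k : Fin m, ∑ _j : Fin n, c :=
          Finset.sum_le_sum fun k _ => Finset.sum_le_sum fun j _ => hAc k j
    _ = (m : ℝ) * ((n : ℝ) * c) := by
        simp [Finset.sum_const, card_univ, mul_assoc]
    _ = (m : ℝ) * n^2 * Real.exp (-ζ) := by rw [hc]; ring
  have h7 : (m : ℝ) * n^2 * Real.exp (-ζ) ≤ (m : ℝ) * n^2 * Real.exp (-ζ / n) := by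
    apply mul_le_mul_of_nonneg_left _ (by positivity)
    apply Real.exp_le_exp.2
    have : ζ / n ≤ ζ := div_le_self hζ (by exact_mod_cast hn)
    rw [neg_div]
    linarith
  calc (μ E).toReal ≤ ∑ k : Fin m, ∑ j : Fin n, (μ (A k j)).toReal := h5
  _ ≤ (m : ℝ) * n^2 * Real.exp (-ζ) := h6
  _ ≤ (m : ℝ) * n^2 * Real.exp (-ζ / n) := h7
end

section
/- Let p^1, …, p^m be measurable random variables taking values in Δ^n and let J be a measurable random variable taking values in [n], on a common probability space; assume every expert is calibrated. Then for every q ≥ 0, P(for every j ∈ [n] there exists i ∈ [m] with p^i_j ≤ q) ≤ m n q. -/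
open Finset MeasureTheory

/-- Lemma: if every expert is calibrated, then for every `q ≥ 0`, the probability
that for every outcome `j` some expert assigns probability at most `q` to `j` is
at most `m n q`. -/
theorem stmt10 {m n : ℕ} (hm : 0 < m) (hn : 0 < n)
    {Ω : Type*} [MeasurableSpace Ω] (μ : Measure Ω) [IsProbabilityMeasure μ]
    (p : Fin m → Ω → Fin n → ℝ) (hpm : ∀ i, Measurable (p i))
    (J : Ω → Fin n) (hJ : Measurable J)
    (hsimplex : ∀ i ω, p i ω ∈ stdSimplex ℝ (Fin n))
    (hcal : ∀ (i : Fin m) (j : Fin n),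
      (μ[(fun ω => if J ω = j then (1:ℝ) else 0) |
          MeasurableSpace.comap (p i) inferInstance]) =ᵐ[μ] fun ω => p i ω j)
    (q : ℝ) (hq : 0 ≤ q) :
    (μ {ω | ∀ j, ∃ i, p i ω j ≤ q}).toReal ≤ m * n * q := by
  classical
  set S : Fin m → Fin n → Set Ω := fun i j => {ω | p i ω j ≤ q ∧ J ω = j} with hS
  have hkey : ∀ i j, (μ (S i j)).toReal ≤ q := by
    intro i j
    set A : Set Ω := {ω | p i ω j ≤ q} with hA
    have hle : MeasurableSpace.comap (p i) inferInstance ≤ ‹MeasurableSpace Ω› :=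
      (hpm i).comap_le
    have hAm : MeasurableSet[MeasurableSpace.comap (p i) inferInstance] A :=
      ⟨{x | x j ≤ q}, measurableSet_le (measurable_pi_apply j) measurable_const, rfl⟩
    have hAm' : MeasurableSet A := hle _ hAm
    have hJm : MeasurableSet {ω | J ω = j} := hJ (measurableSet_singleton j)
    have hindeq : (fun ω => if J ω = j then (1:ℝ) else 0)
        = Set.indicator {ω | J ω = j} (fun _ => 1) := by
      ext ω; simp [Set.indicator_apply]
    have hind : Integrable (fun ω => if J ω = j then (1:ℝ) else 0) μ := by
      rw [hindeq]; exact (integrable_const 1).indicator hJm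
    have h1 : ∫ ω in A, (if J ω = j then (1:ℝ) else 0) ∂μ = ∫ ω in A, p i ω j ∂μ := by
      rw [← setIntegral_condExp hle hind hAm]
      exact setIntegral_congr_ae hAm' ((hcal i j).mono fun ω h _ => h)
    have h2 : ∫ ω in A, (if J ω = j then (1:ℝ) else 0) ∂μ = (μ (S i j)).toReal := by
      rw [show (fun ω => if J ω = j then (1:ℝ) else 0) = Set.indicator {ω | J ω = j} (fun _ => 1) from hindeq]
      rw [setIntegral_indicator hJm, setIntegral_const]
      have : A ∩ {ω | J ω = j} = S i j := by
        ext ω; simp [hS, hA, and_comm]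
      simp [this]
      rfl
    have hint : Integrable (fun ω => p i ω j) μ :=
      integrable_condExp.congr (hcal i j)
    have h3 : ∫ ω in A, p i ω j ∂μ ≤ ∫ ω in A, q ∂μ := by
      apply setIntegral_mono_on hint.integrableOn (integrableOn_const (measure_lt_top μ A).ne) hAm'
      intro ω hω; exact hω
    have h4 : ∫ ω in A, (q:ℝ) ∂μ ≤ q := by
      rw [setIntegral_const, smul_eq_mul]
      calc (μ A).toReal * q ≤ 1 * q := by
            apply mul_le_mul_of_nonneg_right _ hq
            exact ENNReal.toReal_le_of_le_ofReal one_pos.le (by simp [prob_le_one])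
        _ = q := one_mul q
    linarith [h1, h2, h3, h4]
  have hsub : {ω | ∀ j, ∃ i, p i ω j ≤ q} ⊆ ⋃ j, ⋃ i, S i j := by
    intro ω hω
    obtain ⟨i, hi⟩ := hω (J ω)
    exact Set.mem_iUnion.2 ⟨J ω, Set.mem_iUnion.2 ⟨i, hi, rfl⟩⟩
  have hmono : μ {ω | ∀ j, ∃ i, p i ω j ≤ q} ≤ ∑ j : Fin n, ∑ i : Fin m, μ (S i j) :=
    (measure_mono hsub).trans <| (measure_iUnion_fintype_le _ _).trans <|
      Finset.sum_le_sum fun j _ => measure_iUnion_fintype_le _ _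
  have hfin : (∑ j : Fin n, ∑ i : Fin m, μ (S i j)) ≠ ⊤ :=
    (ENNReal.sum_lt_top.2 fun j _ => ENNReal.sum_lt_top.2 fun i _ => measure_lt_top μ _).ne
  calc (μ {ω | ∀ j, ∃ i, p i ω j ≤ q}).toReal
      ≤ (∑ j : Fin n, ∑ i : Fin m, μ (S i j)).toReal :=
        ENNReal.toReal_mono hfin hmono
    _ = ∑ j : Fin n, ∑ i : Fin m, (μ (S i j)).toReal := by
        rw [ENNReal.toReal_sum (fun j _ => (ENNReal.sum_lt_top.2 fun i _ => measure_lt_top μ _).ne)]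
        exact Finset.sum_congr rfl fun j _ => ENNReal.toReal_sum fun i _ => measure_ne_top μ _
    _ ≤ ∑ j : Fin n, ∑ i : Fin m, q :=
        Finset.sum_le_sum fun j _ => Finset.sum_le_sum fun i _ => hkey i j
    _ = m * n * q := by
        simp [Finset.sum_const, mul_comm, mul_assoc, mul_left_comm]
end

section
/- Let −1 < a < 0 and g ∈ ℝ^m. Then there exists a unique c ∈ ℝ with c > −min_i g_i (so that g_i + c > 0 for all i ∈ [m]) such that ∑_{i=1}^m (g_i + c)^{1/a} = 1. -/
open Finset

/-- Lemma: for `-1 < a < 0` and `g ∈ ℝ^m`, there is a unique `c ∈ ℝ` with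
`g_i + c > 0` for all `i` (i.e. `c > -min_i g_i`) such that `∑_i (g_i + c)^{1/a} = 1`. -/
theorem stmt14 {m : ℕ} (hm : 0 < m) (a : ℝ) (ha : a ∈ Set.Ioo (-1 : ℝ) 0)
    (g : Fin m → ℝ) :
    ∃! c : ℝ, (∀ i, 0 < g i + c) ∧ ∑ i, (g i + c) ^ (1 / a) = 1 := by
  obtain ⟨ha1, ha0⟩ := ha
  have hp : (1 / a) < 0 := by
    exact div_neg_of_pos_of_neg one_pos ha0
  haveI : Nonempty (Fin m) := ⟨⟨0, hm⟩⟩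
  set f : ℝ → ℝ := fun c => ∑ i, (g i + c) ^ (1 / a) with hf
  -- minimum of g
  set M : ℝ := Finset.univ.inf' Finset.univ_nonempty g with hM
  have hMle : ∀ i, M ≤ g i := fun i => Finset.inf'_le _ (Finset.mem_univ i)
  -- c₁ := 1/2 - M gives f c₁ > 1
  set c₁ : ℝ := 1 / 2 - M with hc₁
  have hpos₁ : ∀ i, (1 : ℝ) / 2 ≤ g i + c₁ := by
    intro i
    have := hMle i
    simp only [hc₁]
    linarith
  obtain ⟨i₀, hi₀⟩ := Finset.exists_mem_eq_inf' (Finset.univ_nonempty (α := Fin m)) g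
  have hgi₀ : g i₀ + c₁ = 1 / 2 := by
    have h2 : M = g i₀ := hi₀.2
    simp only [hc₁]; linarith
  have hfc₁ : 1 < f c₁ := by
    have h1 : (1 : ℝ) < (g i₀ + c₁) ^ (1 / a) := by
      rw [hgi₀]
      rw [Real.one_lt_rpow_iff_of_pos (by norm_num)]
      right; exact ⟨by norm_num, hp⟩
    have h2 : (g i₀ + c₁) ^ (1 / a) ≤ f c₁ := by
      apply Finset.single_le_sum (f := fun i => (g i + c₁) ^ (1 / a))
      · intro i _
        exact Real.rpow_nonneg (le_trans (by norm_num) (hpos₁ i)) _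
      · exact Finset.mem_univ i₀
    linarith
  -- f tends to 0 at infinity
  have htend : Filter.Tendsto f Filter.atTop (nhds 0) := by
    have : Filter.Tendsto f Filter.atTop (nhds (∑ _i : Fin m, (0 : ℝ))) := by
      apply tendsto_finset_sum
      intro i _
      have h1 : Filter.Tendsto (fun c : ℝ => g i + c) Filter.atTop Filter.atTop :=
        Filter.tendsto_atTop_add_const_left _ _ Filter.tendsto_id
      have h2 : Filter.Tendsto (fun x : ℝ => x ^ (1 / a)) Filter.atTop (nhds 0) := by
        have := tendsto_rpow_neg_atTop (y := -(1 / a)) (by linarith)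
        simpa using this
      exact h2.comp h1
    simpa using this
  -- choose c₂ ≥ c₁ with f c₂ < 1
  have hev : ∀ᶠ c in Filter.atTop, f c < 1 := by
    have := htend.eventually_lt_const (by norm_num : (0 : ℝ) < 1)
    exact this
  obtain ⟨c₂, hc₂⟩ := (hev.and (Filter.eventually_ge_atTop c₁)).exists
  obtain ⟨hfc₂, hc₁c₂⟩ := hc₂
  -- continuity on [c₁, c₂]
  have hcont : ContinuousOn f (Set.Icc c₁ c₂) := by
    apply continuousOn_finset_sum
    intro i _
    apply ContinuousOn.rpow_const
    · exact (continuous_const.add continuous_id).continuousOn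
    · intro c hc
      left
      have : (1 : ℝ) / 2 ≤ g i + c := le_trans (hpos₁ i) (by linarith [hc.1])
      linarith
  -- IVT (decreasing orientation)
  have : (1 : ℝ) ∈ Set.Icc (f c₂) (f c₁) := ⟨le_of_lt hfc₂, le_of_lt hfc₁⟩
  obtain ⟨c, hcmem, hfc⟩ := intermediate_value_Icc' hc₁c₂ hcont this
  have hposc : ∀ i, 0 < g i + c := by
    intro i
    have : (1 : ℝ) / 2 ≤ g i + c := le_trans (hpos₁ i) (by linarith [hcmem.1])
    linarith
  refine ⟨c, ⟨hposc, hfc⟩, ?_⟩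
  -- uniqueness via strict antitonicity
  rintro c' ⟨hpos', hsum'⟩
  by_contra hne
  have key : ∀ x y : ℝ, (∀ i, 0 < g i + x) → x < y → f y < f x := by
    intro x y hpx hxy
    apply Finset.sum_lt_sum_of_nonempty Finset.univ_nonempty
    intro i _
    exact Real.rpow_lt_rpow_of_neg (hpx i) (by linarith) hp
  have hfc' : f c' = 1 := hsum'
  rcases lt_or_gt_of_ne hne with h | h
  · have := key c' c hpos' h
    rw [hfc, hfc'] at this
    exact lt_irrefl _ this
  · have := key c c' hposc h
    rw [hfc, hfc'] at this
    exact lt_irrefl _ this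
end

section
/- Let −1 < a < 0, g ∈ ℝ^m, v ∈ Δ^m with all coordinates strictly positive, and κ ≥ 0. Let c be the unique real number with g_i + c > 0 for all i and ∑_{i=1}^m (g_i + c)^{1/a} = 1. Then: (i) if g_i ≤ v_i^a + κ for all i ∈ [m], then c ≥ −κ; and (ii) if g_i ≥ v_i^a − κ/v_i for all i ∈ [m], then c ≤ κ / (min_i v_i). -/
open Finset

/-- Lemma (bounds on the normalizing constant): let `-1 < a < 0`, `v ∈ Δ^m` with
strictly positive coordinates, `κ ≥ 0`, and let `c` be the unique real with
`g_i + c > 0` for all `i` and `∑_i (g_i + c)^{1/a} = 1`.  Then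
(i) if `g_i ≤ v_i^a + κ` for all `i`, then `c ≥ -κ`; and
(ii) if `g_i ≥ v_i^a - κ/v_i` for all `i`, then `c ≤ κ / min_i v_i`. -/
theorem stmt15 {m : ℕ} (hm : 0 < m) (a : ℝ) (ha : a ∈ Set.Ioo (-1 : ℝ) 0)
    (g v : Fin m → ℝ) (hv : v ∈ stdSimplex ℝ (Fin m)) (hvpos : ∀ i, 0 < v i)
    (κ : ℝ) (hκ : 0 ≤ κ)
    (c : ℝ) (hcpos : ∀ i, 0 < g i + c) (hsum : ∑ i, (g i + c) ^ (1 / a) = 1) :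
    ((∀ i, g i ≤ (v i) ^ a + κ) → -κ ≤ c) ∧
    ((∀ i, (v i) ^ a - κ / v i ≤ g i) →
      c ≤ κ / (Finset.univ.inf'
        (Finset.univ_nonempty_iff.mpr (Fin.pos_iff_nonempty.mp hm)) v)) := by
  obtain ⟨ha1, ha0⟩ := ha
  have hane : a ≠ 0 := ne_of_lt ha0
  have hia : 1 / a < 0 := by
    exact div_neg_of_pos_of_neg one_pos ha0
  have hne : (Finset.univ : Finset (Fin m)).Nonempty :=
    Finset.univ_nonempty_iff.mpr (Fin.pos_iff_nonempty.mp hm)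
  have hvpow : ∀ i, ((v i) ^ a) ^ (1 / a) = v i := fun i => by
    rw [← Real.rpow_mul (hvpos i).le, mul_one_div_cancel hane, Real.rpow_one]
  have hvsum : ∑ i, v i = 1 := hv.2
  constructor
  · intro hg
    by_contra h
    push_neg at h
    have key : ∀ i ∈ Finset.univ, v i < (g i + c) ^ (1 / a) := by
      intro i _
      have h1 : g i + c < (v i) ^ a := by
        have := hg i
        nlinarith
      calc v i = ((v i) ^ a) ^ (1 / a) := (hvpow i).symm
        _ < (g i + c) ^ (1 / a) :=
          Real.rpow_lt_rpow_of_neg (hcpos i) h1 hia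
    have := Finset.sum_lt_sum_of_nonempty hne key
    rw [hvsum, hsum] at this
    exact lt_irrefl 1 this
  · intro hg
    set w := Finset.univ.inf' hne v with hw
    have hwpos : 0 < w := by
      obtain ⟨j, _, hj⟩ := Finset.exists_mem_eq_inf' hne v
      rw [hw, hj]; exact hvpos j
    by_contra h
    push_neg at h
    have key : ∀ i ∈ Finset.univ, (g i + c) ^ (1 / a) < v i := by
      intro i _
      have hwle : w ≤ v i := Finset.inf'_le v (Finset.mem_univ i)
      have hdiv : κ / v i ≤ κ / w := div_le_div_of_nonneg_left hκ hwpos hwle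
      have h1 : (v i) ^ a < g i + c := by
        have := hg i
        have : κ / w < c := (div_lt_iff₀ hwpos).mpr ((div_lt_iff₀ hwpos).mp h)
        linarith [hg i, hdiv]
      have hvp : 0 < (v i) ^ a := Real.rpow_pos_of_pos (hvpos i) a
      calc (g i + c) ^ (1 / a) < ((v i) ^ a) ^ (1 / a) :=
            Real.rpow_lt_rpow_of_neg hvp h1 hia
        _ = v i := hvpow i
    have := Finset.sum_lt_sum_of_nonempty hne key
    rw [hvsum, hsum] at this
    exact lt_irrefl 1 this
end
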